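/- arXiv:1201.1614 — 5 statements merged into one kernel-verified Lean document; each statement's English description precedes it below -/
import Mathlib

section
/- Let R be a commutative ring, 𝒥 an index set, Q : 𝒥 × ℤ → R an arbitrary function, and x : 𝒥 → Rˣ an assignment of units. For a ≥ 1, a tuple J = (j_1,…,j_a) ∈ 𝒥^a and c ∈ ℤ define Q^{(a)}_{J,c} = det( Q(j_ν, c−a−1+2μ) · x_{j_ν}^{μ−1} )_{1≤μ,ν≤a}, and set Q^{(0)}_{∅,c} = 1; write x_J = ∏_{l=1}^a x_{j_l}, J−j_k for the (a−1)-tuple obtained by deleting the k-th entry, and (j,J) for the (a+1)-tuple with j prepended. Then for every a ≥ 1, every c ∈ ℤ and all tuples J_1 = (i_1,…,i_a), J_2 = (j_1,…,j_a) ∈ 𝒥^a: Q^{(a)}_{J_1,c−1} · Q^{(a)}_{J_2,c+1} − Q^{(a)}_{J_1,c+1} · Q^{(a)}_{J_2,c−1} · x_{J_1} · x_{J_2}^{−1} = Σ_{k=1}^{a} (−1)^k · Q^{(a−1)}_{J_2−j_k, c} · Q^{(a+1)}_{(j_k,J_1), c} · x_{j_k}^{−1}. -/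
noncomputable section

/-- The Casorati-type determinant `Q^{(m)}_{T,c} = det( Q(t_ν, c−m−1+2μ) · x_{t_ν}^{μ−1} )`
(with `μ` running 1-based over `1,…,m`; for `m = 0` it is the empty determinant `1`). -/
def Qdet {R : Type*} [CommRing R] {J : Type*} (Q : J × ℤ → R) (x : J → Rˣ)
    (m : ℕ) (T : Fin m → J) (c : ℤ) : R :=
  Matrix.det (Matrix.of fun μ ν : Fin m =>
    Q (T ν, c - (m : ℤ) - 1 + 2 * (((μ : ℕ) + 1 : ℕ) : ℤ)) * ((x (T ν) : R)) ^ (μ : ℕ))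

open Matrix Finset in
lemma pluecker_aux {R : Type*} [CommRing R] {a : ℕ}
    (A B : Matrix (Fin (a+2)) (Fin (a+1)) R) :
    (A.submatrix Fin.castSucc id).det * (B.submatrix Fin.succ id).det -
      (A.submatrix Fin.succ id).det * (B.submatrix Fin.castSucc id).det
    = ∑ k : Fin (a+1), (-1 : R) ^ ((k : ℕ) + 1) *
        (B.submatrix (Fin.succ ∘ Fin.castSucc) k.succAbove).det *
        (Matrix.of fun r s => Fin.cases (B r k) (fun ν => A r ν) s).det := by
  set C : Fin (a+2) → Matrix (Fin (a+1)) (Fin (a+1)) R :=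
    fun r => Matrix.of fun i j =>
      Fin.cases (B r j) (fun μ => B (Fin.succ (Fin.castSucc μ)) j) i with hC
  have hM : ∀ k : Fin (a+1),
      (Matrix.of fun r s => Fin.cases (B r k) (fun ν => A r ν) s).det
      = ∑ r : Fin (a+2), (-1:R) ^ (r:ℕ) * B r k * (A.submatrix r.succAbove id).det := by
    intro k
    rw [Matrix.det_succ_column_zero]
    refine Finset.sum_congr rfl fun r _ => ?_
    have h2 : (Matrix.of fun r s => Fin.cases (B r k) (fun ν => A r ν) s).submatrix
        r.succAbove Fin.succ = A.submatrix r.succAbove id := by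
      ext i j; simp
    rw [h2]
    simp
  have hCdet : ∀ r, (C r).det = ∑ k : Fin (a+1), (-1:R)^(k:ℕ) * B r k *
      (B.submatrix (Fin.succ ∘ Fin.castSucc) k.succAbove).det := by
    intro r
    rw [Matrix.det_succ_row_zero]
    refine Finset.sum_congr rfl fun k _ => ?_
    have h2 : (C r).submatrix Fin.succ k.succAbove
        = B.submatrix (Fin.succ ∘ Fin.castSucc) k.succAbove := by
      ext i j; simp [hC]
    rw [h2]
    simp [hC]
  have hswap : ∑ k : Fin (a+1), (-1 : R) ^ ((k : ℕ) + 1) *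
        (B.submatrix (Fin.succ ∘ Fin.castSucc) k.succAbove).det *
        (Matrix.of fun r s => Fin.cases (B r k) (fun ν => A r ν) s).det
      = ∑ r : Fin (a+2), (-1:R)^((r:ℕ)+1) * (A.submatrix r.succAbove id).det * (C r).det := by
    calc ∑ k : Fin (a+1), (-1 : R) ^ ((k : ℕ) + 1) *
        (B.submatrix (Fin.succ ∘ Fin.castSucc) k.succAbove).det *
        (Matrix.of fun r s => Fin.cases (B r k) (fun ν => A r ν) s).det
        = ∑ k : Fin (a+1), ∑ r : Fin (a+2), (-1 : R) ^ ((k : ℕ) + 1) *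
            (B.submatrix (Fin.succ ∘ Fin.castSucc) k.succAbove).det *
            ((-1:R) ^ (r:ℕ) * B r k * (A.submatrix r.succAbove id).det) := by
          refine Finset.sum_congr rfl fun k _ => ?_
          rw [hM k, Finset.mul_sum]
      _ = ∑ r : Fin (a+2), ∑ k : Fin (a+1), (-1 : R) ^ ((k : ℕ) + 1) *
            (B.submatrix (Fin.succ ∘ Fin.castSucc) k.succAbove).det *
            ((-1:R) ^ (r:ℕ) * B r k * (A.submatrix r.succAbove id).det) := Finset.sum_comm
      _ = ∑ r : Fin (a+2), (-1:R)^((r:ℕ)+1) * (A.submatrix r.succAbove id).det * (C r).det := by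
          refine Finset.sum_congr rfl fun r _ => ?_
          rw [hCdet r, Finset.mul_sum]
          refine Finset.sum_congr rfl fun k _ => ?_
          ring
  rw [hswap]
  have hC0 : C 0 = B.submatrix Fin.castSucc id := by
    ext i j
    refine Fin.cases ?_ (fun μ => ?_) i <;> simp [hC]
  have hCmid : ∀ μ : Fin a, (C (Fin.succ (Fin.castSucc μ))).det = 0 := by
    intro μ
    refine Matrix.det_zero_of_row_eq (i := 0) (j := Fin.succ μ) (Fin.succ_ne_zero μ).symm ?_
    ext j
    simp [hC]
  have hClast : (C (Fin.last (a+1))).det = (-1:R)^a * (B.submatrix Fin.succ id).det := by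
    have heq : C (Fin.last (a+1)) =
        (B.submatrix Fin.succ id).submatrix ((finRotate (a+1))⁻¹ : Equiv.Perm (Fin (a+1))) id := by
      ext i j
      refine Fin.cases ?_ (fun μ => ?_) i
      · have h0 : ((finRotate (a+1))⁻¹ : Equiv.Perm (Fin (a+1))) 0 = Fin.last a := by
          rw [Equiv.Perm.inv_eq_iff_eq]
          exact finRotate_last.symm
        rw [Matrix.submatrix_apply, h0]
        simp [hC, Fin.succ_last]
      · have hs : ((finRotate (a+1))⁻¹ : Equiv.Perm (Fin (a+1))) (Fin.succ μ) = Fin.castSucc μ := by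
          rw [Equiv.Perm.inv_eq_iff_eq, finRotate_succ_apply]
          ext
          rw [Fin.val_add_one_of_lt (Fin.castSucc_lt_last μ)]
          simp
        rw [Matrix.submatrix_apply, hs]
        simp [hC]
    rw [heq, Matrix.det_permute, map_inv, sign_finRotate]
    simp
  rw [Fin.sum_univ_succ, Fin.sum_univ_castSucc]
  have hmid : ∀ μ : Fin a,
      (-1:R)^((((Fin.castSucc μ).succ : Fin (a+2)):ℕ)+1) *
        (A.submatrix ((Fin.castSucc μ).succ).succAbove id).det * (C ((Fin.castSucc μ).succ)).det = 0 := by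
    intro μ
    rw [hCmid]
    ring
  rw [Finset.sum_congr rfl (fun μ _ => hmid μ), Finset.sum_const, smul_zero]
  rw [Fin.succ_last, hClast, hC0]
  simp only [Fin.val_zero, pow_zero, Fin.succAbove_zero, Fin.val_last, Fin.succAbove_last,
    pow_one, zero_add]
  have h1 : (-1:R)^(a+1+1) = (-1:R)^a := by rw [pow_succ, pow_succ]; ring
  rw [h1]
  have h2 : (-1:R)^a * (-1:R)^a = 1 := by rw [← mul_pow]; norm_num
  linear_combination (-(Matrix.det (A.submatrix Fin.castSucc id) * Matrix.det (B.submatrix Fin.succ id))) * h2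

private lemma entry_congr {R : Type*} [CommRing R] {J : Type*} (Q : J × ℤ → R) (j : J) (y : R)
    {e1 e2 : ℤ} {n1 n2 : ℕ} (he : e1 = e2) (hn : n1 = n2) :
    Q (j, e1) * y ^ n1 = Q (j, e2) * y ^ n2 := by subst he; subst hn; rfl

private lemma entry_congr' {R : Type*} [CommRing R] {J : Type*} (Q : J × ℤ → R) (j : J) (y : R)
    {e1 e2 : ℤ} {n : ℕ} (he : e1 = e2) :
    Q (j, e1) * y ^ (n + 1) = y * (Q (j, e2) * y ^ n) := by subst he; rw [pow_succ]; ring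

/-- The Plücker-type relation (Proposition 5.1 of the paper): for tuples
`J_1, J_2` of length `a+1 ≥ 1`,
`Q^{(a)}_{J_1,c−1} Q^{(a)}_{J_2,c+1} − Q^{(a)}_{J_1,c+1} Q^{(a)}_{J_2,c−1} x_{J_1} x_{J_2}⁻¹
 = Σ_k (−1)^k Q^{(a−1)}_{J_2−j_k,c} Q^{(a+1)}_{(j_k,J_1),c} x_{j_k}⁻¹`
(here the tuple length is `a+1`, `k` runs 1-based over the entries of `J_2`). -/
theorem statement1 {R : Type*} [CommRing R] {J : Type*} (Q : J × ℤ → R) (x : J → Rˣ)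
    (a : ℕ) (c : ℤ) (J1 J2 : Fin (a + 1) → J) :
    Qdet Q x (a + 1) J1 (c - 1) * Qdet Q x (a + 1) J2 (c + 1) -
        Qdet Q x (a + 1) J1 (c + 1) * Qdet Q x (a + 1) J2 (c - 1) *
          (∏ l, (x (J1 l) : R)) * (((∏ l, x (J2 l))⁻¹ : Rˣ) : R)
      = ∑ k : Fin (a + 1),
          (-1 : R) ^ ((k : ℕ) + 1) * Qdet Q x a (J2 ∘ k.succAbove) c *
            Qdet Q x (a + 2) (Fin.cons (J2 k) J1) c * (((x (J2 k))⁻¹ : Rˣ) : R) := by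
  set A : Matrix (Fin (a+2)) (Fin (a+1)) R :=
    Matrix.of fun r ν => Q (J1 ν, c - (a:ℤ) - 1 + 2 * ((r:ℕ):ℤ)) * ((x (J1 ν) : R)) ^ (r:ℕ) with hA
  set B : Matrix (Fin (a+2)) (Fin (a+1)) R :=
    Matrix.of fun r ν => Q (J2 ν, c - (a:ℤ) - 1 + 2 * ((r:ℕ):ℤ)) * ((x (J2 ν) : R)) ^ (r:ℕ) with hB
  set u : Rˣ := ∏ l, x (J2 l) with hu
  have E1 : Qdet Q x (a + 1) J1 (c - 1) = (A.submatrix Fin.castSucc id).det := by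
    unfold Qdet
    congr 1
    ext μ ν
    simp only [Matrix.of_apply, Matrix.submatrix_apply, id, hA, Fin.coe_castSucc]
    exact entry_congr Q _ _ (by push_cast; ring) rfl
  have E4 : Qdet Q x (a + 1) J2 (c - 1) = (B.submatrix Fin.castSucc id).det := by
    unfold Qdet
    congr 1
    ext μ ν
    simp only [Matrix.of_apply, Matrix.submatrix_apply, id, hB, Fin.coe_castSucc]
    exact entry_congr Q _ _ (by push_cast; ring) rfl
  have E3 : (A.submatrix Fin.succ id).det
      = (∏ l, (x (J1 l) : R)) * Qdet Q x (a + 1) J1 (c + 1) := by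
    have h : A.submatrix Fin.succ id = Matrix.of fun μ ν : Fin (a+1) =>
        (x (J1 ν) : R) * (Q (J1 ν, (c+1) - ((a+1:ℕ) : ℤ) - 1 + 2 * (((μ : ℕ) + 1 : ℕ) : ℤ))
          * ((x (J1 ν) : R)) ^ (μ : ℕ)) := by
      ext μ ν
      simp only [Matrix.of_apply, Matrix.submatrix_apply, id, hA, Fin.val_succ]
      exact entry_congr' Q _ _ (by push_cast; ring)
    rw [h]
    exact (Matrix.det_mul_row _ _).trans rfl
  have E2 : (B.submatrix Fin.succ id).det
      = (∏ l, (x (J2 l) : R)) * Qdet Q x (a + 1) J2 (c + 1) := by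
    have h : B.submatrix Fin.succ id = Matrix.of fun μ ν : Fin (a+1) =>
        (x (J2 ν) : R) * (Q (J2 ν, (c+1) - ((a+1:ℕ) : ℤ) - 1 + 2 * (((μ : ℕ) + 1 : ℕ) : ℤ))
          * ((x (J2 ν) : R)) ^ (μ : ℕ)) := by
      ext μ ν
      simp only [Matrix.of_apply, Matrix.submatrix_apply, id, hB, Fin.val_succ]
      exact entry_congr' Q _ _ (by push_cast; ring)
    rw [h]
    exact (Matrix.det_mul_row _ _).trans rfl
  have E5 : ∀ k : Fin (a+1), (B.submatrix (Fin.succ ∘ Fin.castSucc) k.succAbove).det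
      = (∏ l : Fin a, (x (J2 (k.succAbove l)) : R)) * Qdet Q x a (J2 ∘ k.succAbove) c := by
    intro k
    have h : B.submatrix (Fin.succ ∘ Fin.castSucc) k.succAbove = Matrix.of fun μ ν : Fin a =>
        (x (J2 (k.succAbove ν)) : R) *
          (Q (J2 (k.succAbove ν), c - ((a:ℕ) : ℤ) - 1 + 2 * (((μ : ℕ) + 1 : ℕ) : ℤ))
          * ((x (J2 (k.succAbove ν)) : R)) ^ (μ : ℕ)) := by
      ext μ ν
      simp only [Matrix.of_apply, Matrix.submatrix_apply, Function.comp, hB, Fin.val_succ,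
        Fin.coe_castSucc]
      exact entry_congr' Q _ _ (by push_cast; ring)
    rw [h]
    exact (Matrix.det_mul_row _ _).trans rfl
  have E6 : ∀ k : Fin (a+1), Qdet Q x (a + 2) (Fin.cons (J2 k) J1) c
      = (Matrix.of fun r s => Fin.cases (B r k) (fun ν => A r ν) s).det := by
    intro k
    unfold Qdet
    congr 1
    ext r s
    refine Fin.cases ?_ (fun ν => ?_) s
    · simp only [Matrix.of_apply, Fin.cases_zero, Fin.cons_zero, hB]
      exact entry_congr Q _ _ (by push_cast; ring) rfl
    · simp only [Matrix.of_apply, Fin.cases_succ, Fin.cons_succ, hA]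
      exact entry_congr Q _ _ (by push_cast; ring) rfl
  have key := pluecker_aux A B
  have hXu : (∏ l, (x (J2 l) : R)) = (u : R) := (Units.coe_prod _ _).symm
  have h1 : ((u⁻¹ : Rˣ) : R) * (u : R) = 1 := Units.inv_mul u
  refine Eq.trans (b := ∑ k : Fin (a+1), ((-1 : R) ^ ((k : ℕ) + 1) *
      (B.submatrix (Fin.succ ∘ Fin.castSucc) k.succAbove).det *
      (Matrix.of fun r s => Fin.cases (B r k) (fun ν => A r ν) s).det) * ((u⁻¹ : Rˣ) : R))
    ?_ (Finset.sum_congr rfl fun k _ => ?_)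
  rotate_left
  · symm
    show (-1 : R) ^ ((k : ℕ) + 1) * Qdet Q x a (J2 ∘ k.succAbove) c *
            Qdet Q x (a + 2) (Fin.cons (J2 k) J1) c * (((x (J2 k))⁻¹ : Rˣ) : R)
        = ((-1 : R) ^ ((k : ℕ) + 1) *
            (B.submatrix (Fin.succ ∘ Fin.castSucc) k.succAbove).det *
            (Matrix.of fun r s => Fin.cases (B r k) (fun ν => A r ν) s).det) * ((u⁻¹ : Rˣ) : R)
    set P : Rˣ := ∏ l : Fin a, x (J2 (k.succAbove l)) with hP
    have hPc : (∏ l : Fin a, (x (J2 (k.succAbove l)) : R)) = (P : R) := (Units.coe_prod _ _).symm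
    have huP : (u : R) = (x (J2 k) : R) * (P : R) := by
      rw [hu, hP]
      rw [Fin.prod_univ_succAbove (fun l => x (J2 l)) k]
      push_cast
      rfl
    have h2' : (((x (J2 k))⁻¹ : Rˣ) : R) * ((x (J2 k) : Rˣ) : R) = 1 := Units.inv_mul _
    calc (-1 : R) ^ ((k : ℕ) + 1) * Qdet Q x a (J2 ∘ k.succAbove) c *
            Qdet Q x (a + 2) (Fin.cons (J2 k) J1) c * (((x (J2 k))⁻¹ : Rˣ) : R)
        = (-1 : R) ^ ((k : ℕ) + 1) * Qdet Q x a (J2 ∘ k.succAbove) c *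
            (Matrix.of fun r s => Fin.cases (B r k) (fun ν => A r ν) s).det *
            (((x (J2 k))⁻¹ : Rˣ) : R) * (((u⁻¹ : Rˣ) : R) * (u : R)) := by
          rw [E6 k, h1, mul_one]
      _ = (-1 : R) ^ ((k : ℕ) + 1) * ((P : R) * Qdet Q x a (J2 ∘ k.succAbove) c) *
            (Matrix.of fun r s => Fin.cases (B r k) (fun ν => A r ν) s).det *
            ((u⁻¹ : Rˣ) : R) * ((((x (J2 k))⁻¹ : Rˣ) : R) * ((x (J2 k) : Rˣ) : R)) := by
          rw [huP]
          ring
      _ = ((-1 : R) ^ ((k : ℕ) + 1) *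
            (B.submatrix (Fin.succ ∘ Fin.castSucc) k.succAbove).det *
            (Matrix.of fun r s => Fin.cases (B r k) (fun ν => A r ν) s).det) * ((u⁻¹ : Rˣ) : R) := by
          rw [h2', mul_one, ← hPc, ← E5 k]
  · calc Qdet Q x (a + 1) J1 (c - 1) * Qdet Q x (a + 1) J2 (c + 1) -
        Qdet Q x (a + 1) J1 (c + 1) * Qdet Q x (a + 1) J2 (c - 1) *
          (∏ l, (x (J1 l) : R)) * ((u⁻¹ : Rˣ) : R)
        = ((A.submatrix Fin.castSucc id).det *
            ((∏ l, (x (J2 l) : R)) * Qdet Q x (a + 1) J2 (c + 1)) -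
            ((∏ l, (x (J1 l) : R)) * Qdet Q x (a + 1) J1 (c + 1)) *
            (B.submatrix Fin.castSucc id).det) * ((u⁻¹ : Rˣ) : R) := by
          rw [E1, E4, hXu]
          linear_combination (-((A.submatrix Fin.castSucc id).det *
            Qdet Q x (a + 1) J2 (c + 1))) * h1
      _ = ((A.submatrix Fin.castSucc id).det * (B.submatrix Fin.succ id).det -
            (A.submatrix Fin.succ id).det * (B.submatrix Fin.castSucc id).det) *
            ((u⁻¹ : Rˣ) : R) := by
          rw [← E2, ← E3]
      _ = (∑ k : Fin (a+1), (-1 : R) ^ ((k : ℕ) + 1) *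
            (B.submatrix (Fin.succ ∘ Fin.castSucc) k.succAbove).det *
            (Matrix.of fun r s => Fin.cases (B r k) (fun ν => A r ν) s).det) * ((u⁻¹ : Rˣ) : R) := by
          rw [key]
      _ = ∑ k : Fin (a+1), ((-1 : R) ^ ((k : ℕ) + 1) *
            (B.submatrix (Fin.succ ∘ Fin.castSucc) k.succAbove).det *
            (Matrix.of fun r s => Fin.cases (B r k) (fun ν => A r ν) s).det) * ((u⁻¹ : Rˣ) : R) :=
          by rw [Finset.sum_mul]


end
end

section
/- For all increasing tuples J_1, J_2 ∈ 𝒥^n one has, in F: x_{J_1}^{−1/2} · h_{\overline{J_1^*}} · h_{J_2} − x_{J_2}^{−1/2} · h_{\overline{J_2^*}} · h_{J_1} = x_{J_1}^{−1} x_{J_2}^{−1} · Σ_{j ∈ J_2 ∩ J_1^*} x_{J_1}^{3/2} · x_j^{3/2} · (g_{j,J_1^*} / g_{j,J_2^*}) · h_{J_2∖{j}} · h_{\overline{J_1^*}∖{j̄}}, where the sum is over those entries j of J_2 that lie in the complement J_1^* of J_1. -/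
/- Setting: `F = ℚ(t_1,…,t_n)`.  The index set 𝒥 = {1,…,n,n̄,…,1̄} with the order
`1 ≺ ⋯ ≺ n ≺ n̄ ≺ ⋯ ≺ 1̄` is realized as `Fin (2*n)` with its natural order
(`j < n` unbarred, `j ≥ n` barred), and the bar involution `i ↦ ī` is `Fin.rev`.
`sqx j` is the square root `x_j^{1/2}` (so `sqx j = t_{j+1}` for `j < n` and
`sqx j = t_{2n−j}⁻¹` otherwise), and `xx j = x_j = (sqx j)²`. -/

noncomputable section

abbrev F (n : ℕ) : Type := FractionRing (MvPolynomial (Fin n) ℚ)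

def t (n : ℕ) (i : Fin n) : F n :=
  algebraMap (MvPolynomial (Fin n) ℚ) (F n) (MvPolynomial.X i)

/-- `x_j^{1/2}`. -/
def sqx (n : ℕ) (j : Fin (2 * n)) : F n :=
  if h : (j : ℕ) < n then t n ⟨j, h⟩
  else (t n ⟨2 * n - 1 - (j : ℕ), by have := j.isLt; omega⟩)⁻¹

/-- `x_j = (x_j^{1/2})²`. -/
def xx (n : ℕ) (j : Fin (2 * n)) : F n := (sqx n j) ^ 2

/-- `f_{j,k} = (1 + δ_{k,j̄} x_j⁻¹)/(1 − x_k x_j⁻¹)`. -/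
def ff (n : ℕ) (j k : Fin (2 * n)) : F n :=
  (1 + (if k = j.rev then (xx n j)⁻¹ else 0)) / (1 - xx n k * (xx n j)⁻¹)

/-- `g_{j,k} = f_{j,k} · x_k^{1−δ_{k,j̄}/2}` (i.e. the last factor is `x_k^{1/2}` if `k = j̄`
and `x_k` otherwise). -/
def gg (n : ℕ) (j k : Fin (2 * n)) : F n :=
  ff n j k * (if k = j.rev then sqx n k else xx n k)

/-- `h_J = ∏_{1≤i≤n, i∈J, ī∈J} (x_i^{1/2} + x_i^{−1/2})`. -/
def hh (n : ℕ) (J : Finset (Fin (2 * n))) : F n :=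
  ∏ j ∈ J.filter (fun j : Fin (2 * n) => (j : ℕ) < n ∧ j.rev ∈ J), (sqx n j + (sqx n j)⁻¹)


section Core
open Polynomial Finset

/-- Leading coefficient of a Lagrange basis polynomial. -/
lemma lag_basis_coeff {K : Type*} [Field K] [DecidableEq K] (N : Finset K) (x : K) (hx : x ∈ N) :
    (Lagrange.basis N id x).coeff (N.card - 1) = (∏ y ∈ N.erase x, (x - y))⁻¹ := by
  have hinj : Set.InjOn (id : K → K) ↑N := Function.injective_id.injOn
  have hdeg : (Lagrange.basis N id x).natDegree = N.card - 1 :=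
    Lagrange.natDegree_basis hinj hx
  rw [← hdeg, ← leadingCoeff, Lagrange.basis, leadingCoeff_prod]
  rw [← prod_inv_distrib]
  refine prod_congr rfl fun y hy => ?_
  have hxy : (x : K) ≠ y := fun h => (mem_erase.mp hy).1 (h.symm)
  rw [Lagrange.basisDivisor, leadingCoeff_mul, leadingCoeff_C, id, id,
    leadingCoeff_X_sub_C, mul_one]

/-- Sum of residues / leading coefficient of the Lagrange interpolation. -/
lemma lag_coeff_sum {K : Type*} [Field K] [DecidableEq K] (N : Finset K) (f : K[X])
    (hf : f.degree < N.card) :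
    f.coeff (N.card - 1) = ∑ x ∈ N, f.eval x * (∏ y ∈ N.erase x, (x - y))⁻¹ := by
  have hinj : Set.InjOn (id : K → K) ↑N := Function.injective_id.injOn
  have hfi := Lagrange.eq_interpolate (v := id) (s := N) hinj hf
  conv_lhs => rw [hfi]
  rw [Lagrange.interpolate_apply, finset_sum_coeff]
  refine sum_congr rfl fun x hx => ?_
  rw [coeff_C_mul, id, lag_basis_coeff N x hx]

/-- The core partial fraction / residue identity. -/
lemma core_id {K : Type*} [Field K] [DecidableEq K] (S A : Finset K) (hcard : A.card = S.card)
    (h1 : (-1 : K) ∉ S) :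
    ∑ x ∈ S, (∏ y ∈ A, (x - y)) / ((x + 1) * ∏ y ∈ S.erase x, (x - y))
      = 1 - (∏ y ∈ A, (1 + y)) / (∏ y ∈ S, (1 + y)) := by
  classical
  set N : Finset K := insert (-1) S with hN
  have hNcard : N.card = S.card + 1 := card_insert_of_notMem h1
  set f : K[X] := ∏ y ∈ A, (X - C y) with hfdef
  have hmonic : f.Monic := monic_prod_of_monic _ _ fun y _ => monic_X_sub_C y
  have hfdeg : f.natDegree = A.card := by
    rw [hfdef, natDegree_prod_of_monic _ _ fun y _ => monic_X_sub_C y]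
    simp [natDegree_X_sub_C]
  have hdeg : f.degree < N.card := by
    rw [degree_eq_natDegree hmonic.ne_zero, hfdeg, hNcard, hcard]
    exact_mod_cast Nat.lt_succ_self _
  have hkey := lag_coeff_sum N f hdeg
  have hcoeff : f.coeff (N.card - 1) = 1 := by
    rw [hNcard, Nat.add_sub_cancel, ← hcard, ← hfdeg]
    exact hmonic.coeff_natDegree
  have heval : ∀ x : K, f.eval x = ∏ y ∈ A, (x - y) := by
    intro x; rw [hfdef, eval_prod]; simp
  rw [hcoeff, sum_insert h1] at hkey
  -- the term at -1
  have hterm : f.eval (-1) * (∏ y ∈ N.erase (-1), (-1 - y))⁻¹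
      = (∏ y ∈ A, (1 + y)) / (∏ y ∈ S, (1 + y)) := by
    have he : N.erase (-1) = S := by
      rw [hN, erase_insert h1]
    rw [he, heval]
    have hA : ∏ y ∈ A, (-1 - y) = (-1 : K) ^ A.card * ∏ y ∈ A, (1 + y) := by
      rw [← prod_const, ← prod_mul_distrib]
      exact prod_congr rfl fun y _ => by ring
    have hS : ∏ y ∈ S, (-1 - y) = (-1 : K) ^ S.card * ∏ y ∈ S, (1 + y) := by
      rw [← prod_const, ← prod_mul_distrib]
      exact prod_congr rfl fun y _ => by ring
    have hne : ((-1 : K) ^ S.card) ≠ 0 := by simp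
    rw [hA, hS, hcard, ← div_eq_mul_inv, mul_div_mul_left _ _ hne]
  have hterms : ∀ x ∈ S, f.eval x * (∏ y ∈ N.erase x, (x - y))⁻¹
      = (∏ y ∈ A, (x - y)) / ((x + 1) * ∏ y ∈ S.erase x, (x - y)) := by
    intro x hx
    have hxne : x ≠ -1 := fun h => h1 (h ▸ hx)
    have he : N.erase x = insert (-1) (S.erase x) := by
      rw [hN, erase_insert_of_ne hxne.symm]
    rw [he, heval, prod_insert (fun h => h1 (mem_of_mem_erase h))]
    rw [div_eq_mul_inv]
    congr 2
    ring
  rw [sum_congr rfl hterms, hterm] at hkey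
  linear_combination -hkey

end Core

namespace St5
open Finset
variable {n : ℕ}

open MvPolynomial
variable {n : ℕ}

open MvPolynomial

variable {n : ℕ}

lemma amap_inj : Function.Injective (algebraMap (MvPolynomial (Fin n) ℚ) (F n)) :=
  IsFractionRing.injective _ _

lemma t_ne_zero (i : Fin n) : t n i ≠ 0 := by
  have : (X i : MvPolynomial (Fin n) ℚ) ≠ 0 := X_ne_zero i
  simpa [t, map_eq_zero_iff _ amap_inj] using this

lemma t_sq_ne (a b : Fin n) (hab : a ≠ b) : (t n a) ^ 2 ≠ (t n b) ^ 2 := by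
  intro h
  have h' : (X a : MvPolynomial (Fin n) ℚ) ^ 2 = X b ^ 2 := by
    apply amap_inj
    simpa [t, map_pow] using h
  have := congrArg (eval (fun i : Fin n => if i = a then (2 : ℚ) else 1)) h'
  simp [hab, Ne.symm hab] at this
  norm_num at this

lemma t_sq_mul_ne_one (a b : Fin n) : (t n a) ^ 2 * (t n b) ^ 2 ≠ 1 := by
  intro h
  have h' : (X a : MvPolynomial (Fin n) ℚ) ^ 2 * X b ^ 2 = 1 := by
    apply amap_inj
    simpa [t, map_pow, map_mul, map_one] using h
  have := congrArg (eval (fun _ : Fin n => (2 : ℚ))) h'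
  norm_num at this

lemma t_sq_ne_one (a : Fin n) : (t n a) ^ 2 ≠ 1 := by
  intro h
  have h' : (X a : MvPolynomial (Fin n) ℚ) ^ 2 = 1 := by
    apply amap_inj
    simpa [t, map_pow, map_one] using h
  have := congrArg (eval (fun _ : Fin n => (2 : ℚ))) h'
  norm_num at this

lemma t_sq_ne_neg_one (a : Fin n) : (t n a) ^ 2 ≠ -1 := by
  intro h
  have h' : (X a : MvPolynomial (Fin n) ℚ) ^ 2 = -1 := by
    apply amap_inj
    simpa [t, map_pow, map_neg, map_one] using h
  have := congrArg (eval (fun _ : Fin n => (2 : ℚ))) h'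
  norm_num at this



lemma sqx_ne_zero (j : Fin (2 * n)) : sqx n j ≠ 0 := by
  unfold sqx
  split
  · exact t_ne_zero _
  · exact inv_ne_zero (t_ne_zero _)

lemma xx_ne_zero (j : Fin (2 * n)) : xx n j ≠ 0 := pow_ne_zero _ (sqx_ne_zero j)

lemma val_rev (j : Fin (2 * n)) : (j.rev : ℕ) = 2 * n - 1 - (j : ℕ) := by
  rw [Fin.val_rev]; omega

lemma rev_ne (j : Fin (2 * n)) : j.rev ≠ j := by
  intro h
  have := congrArg Fin.val h
  rw [val_rev] at this
  have := j.isLt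
  omega

lemma t_congr {a b : Fin n} (h : (a : ℕ) = (b : ℕ)) : t n a = t n b := by
  rw [Fin.ext h]

lemma sqx_rev (j : Fin (2 * n)) : sqx n j.rev = (sqx n j)⁻¹ := by
  have hv : (j.rev : ℕ) = 2 * n - 1 - (j : ℕ) := val_rev j
  have hlt := j.isLt
  unfold sqx
  by_cases h : (j : ℕ) < n
  · have hrev : ¬ ((j.rev : ℕ) < n) := by omega
    rw [dif_neg hrev, dif_pos h]
    exact congrArg (·⁻¹) (t_congr (by simp; omega))
  · have hrev : (j.rev : ℕ) < n := by omega
    rw [dif_pos hrev, dif_neg h, inv_inv]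
    exact t_congr (by simp; omega)

lemma xx_rev (j : Fin (2 * n)) : xx n j.rev = (xx n j)⁻¹ := by
  rw [xx, xx, sqx_rev, inv_pow]

lemma xx_ne_one (j : Fin (2 * n)) : xx n j ≠ 1 := by
  unfold xx sqx
  split
  · exact t_sq_ne_one _
  · rw [inv_pow]
    simp only [ne_eq, inv_eq_one]
    exact t_sq_ne_one _

lemma xx_ne_neg_one (j : Fin (2 * n)) : xx n j ≠ -1 := by
  unfold xx sqx
  split
  · exact t_sq_ne_neg_one _
  · rw [inv_pow]
    intro h
    rw [inv_eq_iff_eq_inv] at h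
    norm_num at h
    exact t_sq_ne_neg_one _ h

lemma xx_inj : Function.Injective (xx n) := by
  intro j k h
  by_contra hjk
  unfold xx sqx at h
  have hj := j.isLt; have hk := k.isLt
  by_cases h1 : (j : ℕ) < n <;> by_cases h2 : (k : ℕ) < n
  · rw [dif_pos h1, dif_pos h2] at h
    exact t_sq_ne _ _ (fun he => hjk (Fin.ext (by simpa using congrArg Fin.val he))) h
  · rw [dif_pos h1, dif_neg h2, inv_pow] at h
    have : (t n ⟨j, h1⟩) ^ 2 * (t n ⟨2*n-1-(k:ℕ), by omega⟩) ^ 2 = 1 := by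
      rw [h]; exact inv_mul_cancel₀ (pow_ne_zero _ (t_ne_zero _))
    exact t_sq_mul_ne_one _ _ this
  · rw [dif_neg h1, dif_pos h2, inv_pow] at h
    have : (t n ⟨k, h2⟩) ^ 2 * (t n ⟨2*n-1-(j:ℕ), by omega⟩) ^ 2 = 1 := by
      rw [← h]; exact inv_mul_cancel₀ (pow_ne_zero _ (t_ne_zero _))
    exact t_sq_mul_ne_one _ _ this
  · rw [dif_neg h1, dif_neg h2, inv_pow, inv_pow, inv_inj] at h
    refine t_sq_ne (n := n) ⟨2*n-1-(j:ℕ), by omega⟩ ⟨2*n-1-(k:ℕ), by omega⟩ ?_ h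
    intro he
    have := congrArg Fin.val he
    simp at this
    exact hjk (Fin.ext (by omega))

lemma xx_sub_ne_zero {j k : Fin (2 * n)} (hjk : j ≠ k) : xx n j - xx n k ≠ 0 :=
  sub_ne_zero_of_ne (fun h => hjk (xx_inj h))

lemma xx_add_one_ne_zero (j : Fin (2 * n)) : xx n j + 1 ≠ 0 := by
  intro h
  exact xx_ne_neg_one j (by linear_combination h)

lemma xx_sub_one_ne_zero (j : Fin (2 * n)) : xx n j - 1 ≠ 0 :=
  sub_ne_zero_of_ne (xx_ne_one j)

/-- `c_j = s_j + s_j⁻¹`. -/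
def cc (n : ℕ) (j : Fin (2 * n)) : F n := sqx n j + (sqx n j)⁻¹

lemma cc_rev (j : Fin (2 * n)) : cc n j.rev = cc n j := by
  rw [cc, cc, sqx_rev, inv_inv, add_comm]

lemma cc_eq (j : Fin (2 * n)) : cc n j = (xx n j + 1) / sqx n j := by
  rw [cc, xx, eq_div_iff (sqx_ne_zero j), add_mul, inv_mul_cancel₀ (sqx_ne_zero j)]
  ring

lemma cc_ne_zero (j : Fin (2 * n)) : cc n j ≠ 0 := by
  rw [cc_eq]
  exact div_ne_zero (xx_add_one_ne_zero j) (sqx_ne_zero j)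


variable {n : ℕ}


lemma mem_image_rev {K : Finset (Fin (2 * n))} {k : Fin (2 * n)} :
    k ∈ K.image Fin.rev ↔ k.rev ∈ K := by
  simp only [mem_image]
  constructor
  · rintro ⟨a, ha, rfl⟩
    simpa [Fin.rev_rev] using ha
  · intro h
    exact ⟨k.rev, h, Fin.rev_rev k⟩

lemma hh_image_rev (K : Finset (Fin (2 * n))) : hh n (K.image Fin.rev) = hh n K := by
  unfold hh
  have hset : (K.image Fin.rev).filter
      (fun j : Fin (2 * n) => (j : ℕ) < n ∧ j.rev ∈ K.image Fin.rev)
      = K.filter (fun j : Fin (2 * n) => (j : ℕ) < n ∧ j.rev ∈ K) := by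
    ext k
    simp only [mem_filter, mem_image_rev, Fin.rev_rev]
    tauto
  rw [hset]

lemma hh_cond (J : Finset (Fin (2 * n))) : hh n J =
    ∏ k ∈ J.filter (fun k : Fin (2 * n) => (k : ℕ) < n ∧ k.rev ∈ J), cc n k := rfl

lemma hh_erase {J : Finset (Fin (2 * n))} {j : Fin (2 * n)} (hj : j ∈ J) :
    hh n J = hh n (J.erase j) * (if j.rev ∈ J then cc n j else 1) := by
  by_cases hr : j.rev ∈ J
  · rw [if_pos hr]
    set p := if (j : ℕ) < n then j else j.rev with hp
    have hpJ : p ∈ J.filter (fun k : Fin (2 * n) => (k : ℕ) < n ∧ k.rev ∈ J) := by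
      by_cases h : (j : ℕ) < n
      · rw [hp, if_pos h]
        exact mem_filter.mpr ⟨hj, h, hr⟩
      · rw [hp, if_neg h]
        have := val_rev j
        have := j.isLt
        exact mem_filter.mpr ⟨hr, by omega, by rw [Fin.rev_rev]; exact hj⟩
    have hset : (J.erase j).filter
        (fun k : Fin (2 * n) => (k : ℕ) < n ∧ k.rev ∈ J.erase j)
        = (J.filter (fun k : Fin (2 * n) => (k : ℕ) < n ∧ k.rev ∈ J)).erase p := by
      ext k
      simp only [mem_filter, mem_erase]
      constructor
      · rintro ⟨⟨hkj, hkJ⟩, hkn, hkrj, hkrJ⟩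
        refine ⟨?_, hkJ, hkn, hkrJ⟩
        by_cases h : (j : ℕ) < n
        · rw [hp, if_pos h]; exact hkj
        · rw [hp, if_neg h]
          intro he
          exact hkrj (by rw [he, Fin.rev_rev])
      · rintro ⟨hkp, hkJ, hkn, hkrJ⟩
        have hv := val_rev j
        have hvk := val_rev k
        by_cases h : (j : ℕ) < n
        · rw [hp, if_pos h] at hkp
          refine ⟨⟨hkp, hkJ⟩, hkn, ?_, hkrJ⟩
          intro he
          have : (k : ℕ) = (j.rev : ℕ) := by rw [← he, Fin.rev_rev]
          have := j.isLt
          omega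
        · rw [hp, if_neg h] at hkp
          refine ⟨⟨?_, hkJ⟩, hkn, ?_, hkrJ⟩
          · intro he; subst he; omega
          · intro he
            exact hkp (by rw [← he, Fin.rev_rev])
    have hcp : cc n p = cc n j := by
      by_cases h : (j : ℕ) < n
      · rw [hp, if_pos h]
      · rw [hp, if_neg h, cc_rev]
    rw [hh_cond, hh_cond, hset, ← hcp]
    exact ((mul_prod_erase _ _ hpJ).symm.trans (mul_comm _ _))
  · rw [if_neg hr, mul_one]
    have hset : (J.erase j).filter
        (fun k : Fin (2 * n) => (k : ℕ) < n ∧ k.rev ∈ J.erase j)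
        = J.filter (fun k : Fin (2 * n) => (k : ℕ) < n ∧ k.rev ∈ J) := by
      ext k
      simp only [mem_filter, mem_erase]
      constructor
      · rintro ⟨⟨_, hkJ⟩, hkn, _, hkrJ⟩
        exact ⟨hkJ, hkn, hkrJ⟩
      · rintro ⟨hkJ, hkn, hkrJ⟩
        refine ⟨⟨?_, hkJ⟩, hkn, ?_, hkrJ⟩
        · rintro rfl; exact hr hkrJ
        · intro he
          refine hr ?_
          rw [← he, Fin.rev_rev]
          exact hkJ
    rw [hh_cond, hh_cond, hset]

/-- the embedding of `Fin n` as the first half. -/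
def emb (n : ℕ) (i : Fin n) : Fin (2 * n) := ⟨(i : ℕ), by have := i.isLt; omega⟩

lemma emb_inj : Function.Injective (emb n) := by
  intro a b h
  exact Fin.ext (by simpa [emb] using congrArg Fin.val h)

lemma filter_lt_eq_image : (univ : Finset (Fin (2 * n))).filter (fun j : Fin (2 * n) => (j : ℕ) < n)
    = univ.image (emb n) := by
  ext k
  simp only [mem_filter, mem_univ, true_and, mem_image]
  constructor
  · intro h
    exact ⟨⟨k, h⟩, Fin.ext rfl⟩
  · rintro ⟨i, rfl⟩
    exact i.isLt

lemma filter_ge_eq_image : (univ : Finset (Fin (2 * n))).filter (fun j : Fin (2 * n) => ¬ (j : ℕ) < n)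
    = univ.image (fun i => (emb n i).rev) := by
  ext k
  simp only [mem_filter, mem_univ, true_and, mem_image]
  constructor
  · intro h
    have hk := k.isLt
    have hn : 2 * n - 1 - (k : ℕ) < n := by omega
    refine ⟨⟨2 * n - 1 - (k : ℕ), hn⟩, ?_⟩
    have hv := val_rev (emb n ⟨2 * n - 1 - (k : ℕ), hn⟩)
    have h2 : ((emb n ⟨2 * n - 1 - (k : ℕ), hn⟩ : Fin (2 * n)) : ℕ) = 2 * n - 1 - (k : ℕ) := rfl
    exact Fin.ext (by omega)
  · rintro ⟨i, rfl⟩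
    have hv := val_rev (emb n i)
    have : ((emb n i : Fin (2 * n)) : ℕ) = (i : ℕ) := rfl
    have := i.isLt
    omega

lemma prod_univ_split (f : Fin (2 * n) → F n) :
    ∏ j ∈ (univ : Finset (Fin (2 * n))), f j
      = (∏ i ∈ (univ : Finset (Fin n)), f (emb n i))
        * ∏ i ∈ (univ : Finset (Fin n)), f (emb n i).rev := by
  rw [← prod_filter_mul_prod_filter_not univ (fun j : Fin (2 * n) => (j : ℕ) < n) f,
    filter_lt_eq_image, filter_ge_eq_image, prod_image (fun a _ b _ h => emb_inj h),
    prod_image (fun a _ b _ h => emb_inj (Fin.rev_inj.mp h))]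

lemma prod_univ_xx : ∏ j ∈ (univ : Finset (Fin (2 * n))), xx n j = 1 := by
  rw [prod_univ_split]
  have : ∀ i : Fin n, xx n (emb n i).rev = (xx n (emb n i))⁻¹ := fun i => xx_rev _
  rw [prod_congr rfl (fun i _ => this i), prod_inv_distrib]
  exact mul_inv_cancel₀ (prod_ne_zero_iff.mpr fun i _ => xx_ne_zero _)

lemma hh_univ : hh n univ = ∏ i ∈ (univ : Finset (Fin n)), cc n (emb n i) := by
  rw [hh_cond]
  have hset : (univ : Finset (Fin (2 * n))).filter
      (fun j : Fin (2 * n) => (j : ℕ) < n ∧ j.rev ∈ univ)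
      = univ.filter (fun j : Fin (2 * n) => (j : ℕ) < n) := by
    ext k; simp
  rw [hset, filter_lt_eq_image, prod_image (fun a _ b _ h => emb_inj h)]

lemma cc_sq (j : Fin (2 * n)) : cc n j * cc n j = (1 + xx n j) * (1 + (xx n j)⁻¹) := by
  rw [cc, xx]
  have hs := sqx_ne_zero (n := n) j
  field_simp
  ring

/-- The key bookkeeping identity. -/
lemma key_Q (J : Finset (Fin (2 * n))) :
    hh n Jᶜ * ∏ i ∈ (univ : Finset (Fin n)), cc n (emb n i)
      = hh n J * (∏ j ∈ J, sqx n j) * ∏ k ∈ Jᶜ, (1 + xx n k) := by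
  classical
  induction J using Finset.induction_on with
  | empty =>
    rw [compl_empty]
    have h0 : hh n (∅ : Finset (Fin (2 * n))) = 1 := by
      rw [hh_cond, filter_empty, prod_empty]
    simp only [h0, hh_univ, prod_empty, one_mul, mul_one]
    calc (∏ i : Fin n, cc n (emb n i)) * ∏ i : Fin n, cc n (emb n i)
        = ∏ i : Fin n, (1 + xx n (emb n i)) * (1 + xx n (emb n i).rev) := by
          rw [← prod_mul_distrib]
          exact prod_congr rfl fun i _ => (by rw [xx_rev]; exact cc_sq _)
      _ = (∏ i : Fin n, (1 + xx n (emb n i))) * ∏ i : Fin n, (1 + xx n (emb n i).rev) :=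
          prod_mul_distrib
      _ = ∏ k : Fin (2 * n), (1 + xx n k) :=
          (prod_univ_split (fun k : Fin (2 * n) => 1 + xx n k)).symm
  | @insert j J hj ih =>
    have hjc : j ∈ Jᶜ := mem_compl.mpr hj
    have e1 : hh n Jᶜ = hh n (Jᶜ.erase j) * (if j.rev ∈ Jᶜ then cc n j else 1) :=
      hh_erase hjc
    have e2 : ∏ k ∈ Jᶜ, (1 + xx n k) = (1 + xx n j) * ∏ k ∈ Jᶜ.erase j, (1 + xx n k) :=
      (mul_prod_erase _ _ hjc).symm
    have e4 : hh n (insert j J) = hh n J * (if j.rev ∈ J then cc n j else 1) := by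
      have := hh_erase (J := insert j J) (j := j) (mem_insert_self j J)
      rw [erase_insert hj] at this
      rw [this]
      congr 1
      by_cases hr : j.rev ∈ J
      · rw [if_pos hr, if_pos (mem_insert_of_mem hr)]
      · rw [if_neg hr, if_neg ?_]
        intro hmem
        rcases mem_insert.mp hmem with h | h
        · exact rev_ne j h
        · exact hr h
    have e3 : (if j.rev ∈ J then cc n j else 1) * sqx n j
        * (if j.rev ∈ Jᶜ then cc n j else 1) = 1 + xx n j := by
      by_cases hr : j.rev ∈ J
      · rw [if_pos hr, if_neg (fun h => (mem_compl.mp h) hr), mul_one, cc_eq]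
        field_simp [sqx_ne_zero j]
        ring
      · rw [if_neg hr, if_pos (mem_compl.mpr hr), one_mul, cc_eq]
        field_simp [sqx_ne_zero j]
        ring
    have hAne : (if j.rev ∈ Jᶜ then cc n j else 1) ≠ 0 := by
      split
      · exact cc_ne_zero j
      · exact one_ne_zero
    rw [compl_insert, e4, prod_insert hj]
    refine mul_right_cancel₀ hAne ?_
    calc hh n (Jᶜ.erase j) * (∏ i ∈ univ, cc n (emb n i))
          * (if j.rev ∈ Jᶜ then cc n j else 1)
        = hh n Jᶜ * ∏ i ∈ univ, cc n (emb n i) := by rw [e1]; ring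
      _ = hh n J * (∏ k ∈ J, sqx n k) * ∏ k ∈ Jᶜ, (1 + xx n k) := ih
      _ = hh n J * (∏ k ∈ J, sqx n k) * ((1 + xx n j) * ∏ k ∈ Jᶜ.erase j, (1 + xx n k)) := by
          rw [e2]
      _ = hh n J * (if j.rev ∈ J then cc n j else 1) * (sqx n j * ∏ k ∈ J, sqx n k)
            * (∏ k ∈ Jᶜ.erase j, (1 + xx n k)) * (if j.rev ∈ Jᶜ then cc n j else 1) := by
          rw [← e3]; ring

variable {n : ℕ}


lemma xx_mul_self_ne_one (j : Fin (2 * n)) : xx n j * xx n j ≠ 1 := by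
  intro h
  rcases mul_self_eq_one_iff.mp h with h1 | h1
  · exact xx_ne_one j h1
  · exact xx_ne_neg_one j h1

lemma gg_generic {j k : Fin (2 * n)} (hkj : k ≠ j) (hkr : k ≠ j.rev) :
    gg n j k = xx n k * xx n j / (xx n j - xx n k) := by
  rw [gg, ff, if_neg hkr, if_neg hkr, add_zero]
  have hxj := xx_ne_zero (n := n) j
  have hsub : xx n j - xx n k ≠ 0 := xx_sub_ne_zero (Ne.symm hkj)
  have hden : 1 - xx n k * (xx n j)⁻¹ = (xx n j - xx n k) / xx n j := by
    field_simp
  rw [hden, one_div_div]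
  ring

lemma gg_rev (j : Fin (2 * n)) :
    gg n j j.rev = cc n j * (xx n j.rev * xx n j / (xx n j - xx n j.rev)) := by
  rw [gg, ff, if_pos rfl, if_pos rfl, sqx_rev, xx_rev, cc_eq]
  have hxj := xx_ne_zero (n := n) j
  have hsj := sqx_ne_zero (n := n) j
  have hne1 : xx n j * xx n j - 1 ≠ 0 := sub_ne_zero_of_ne (xx_mul_self_ne_one j)
  have hsub : xx n j - (xx n j)⁻¹ ≠ 0 := by
    intro h
    apply hne1
    have h2 := sub_eq_zero.mp h
    rw [sub_eq_zero]
    nth_rewrite 2 [h2]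
    rw [mul_inv_cancel₀ hxj]
  have hden2 : 1 - (xx n j)⁻¹ * (xx n j)⁻¹ ≠ 0 := by
    intro h
    apply hne1
    have hexp : xx n j * xx n j * (1 - (xx n j)⁻¹ * (xx n j)⁻¹) = xx n j * xx n j - 1 := by
      field_simp
    rw [h, mul_zero] at hexp
    rw [← hexp]
  field_simp

lemma gg_prod {E : Finset (Fin (2 * n))} {j : Fin (2 * n)} (hj : j ∉ E) :
    ∏ k ∈ E, gg n j k
      = (if j.rev ∈ E then cc n j else 1) * ∏ k ∈ E, (xx n k * xx n j / (xx n j - xx n k)) := by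
  by_cases hr : j.rev ∈ E
  · rw [if_pos hr, ← mul_prod_erase E _ hr, ← mul_prod_erase E (fun k => xx n k * xx n j / (xx n j - xx n k)) hr,
      gg_rev, mul_assoc]
    congr 1
    congr 1
    refine prod_congr rfl fun k hk => ?_
    have hk1 : k ≠ j.rev := (mem_erase.mp hk).1
    have hk2 : k ≠ j := fun h => hj (h ▸ (mem_erase.mp hk).2)
    exact gg_generic hk2 hk1
  · rw [if_neg hr, one_mul]
    refine prod_congr rfl fun k hk => ?_
    exact gg_generic (fun h => hj (h ▸ hk)) (fun h => hr (h ▸ hk))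

lemma G_prod (E : Finset (Fin (2 * n))) (j : Fin (2 * n)) :
    ∏ k ∈ E, (xx n k * xx n j / (xx n j - xx n k))
      = (∏ k ∈ E, xx n k) * (xx n j) ^ E.card / ∏ k ∈ E, (xx n j - xx n k) := by
  rw [prod_div_distrib, prod_mul_distrib, prod_const]
end St5

lemma summand_aux {K : Type*} [Field K] (s1 sj Q1 Q2 y h2e h1ce x2 C1 B2 C2 : K)
    (hs1 : s1 ≠ 0) (hsj : sj ≠ 0) (hQ1 : Q1 ≠ 0) (hQ2 : Q2 ≠ 0) (hy : y ≠ 0) (hx2 : x2 ≠ 0)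
    (hna : sj ^ 2 + 1 ≠ 0) (hC1 : C1 ≠ 0) (hC2 : C2 ≠ 0)
    (hBC : B2 * C2 = (sj ^ 2 + 1) / sj) :
    s1 ^ 3 * sj ^ 3 * ((C1 * ((s1 ^ 2 * sj ^ 2)⁻¹ * y / Q1)) /
          (C2 * (x2⁻¹ * (y * sj ^ 2) / Q2))) * h2e * h1ce
      = s1 ^ 2 * x2 * (s1⁻¹ * (h2e * B2) * (h1ce * C1) * (Q2 / ((sj ^ 2 + 1) * Q1))) := by
  have hB2 : B2 = (sj ^ 2 + 1) / (sj * C2) := by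
    rw [eq_div_iff (mul_ne_zero hsj hC2), mul_comm sj C2, ← mul_assoc, mul_comm B2 C2,
      mul_comm C2 B2, hBC, div_mul_cancel₀ _ hsj]
  rw [hB2]
  field_simp

open St5 Finset in
set_option maxHeartbeats 1000000 in
/-- Proposition of Appendix C of the paper (the character specialization of the conjectural
quadratic relations for `U_q(B_n^{(1)})`): for `J_1, J_2 ∈ 𝒥^n` increasing (i.e. `n`-element
subsets of 𝒥),
`x_{J_1}^{−1/2} h_{\overline{J_1^*}} h_{J_2} − x_{J_2}^{−1/2} h_{\overline{J_2^*}} h_{J_1}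
 = x_{J_1}^{−1} x_{J_2}^{−1} Σ_{j ∈ J_2 ∩ J_1^*} x_{J_1}^{3/2} x_j^{3/2}
     (g_{j,J_1^*}/g_{j,J_2^*}) h_{J_2∖{j}} h_{\overline{J_1^*}∖{j̄}}`. -/
theorem statement5 (n : ℕ) (hn : 1 ≤ n) (J1 J2 : Finset (Fin (2 * n)))
    (hJ1 : J1.card = n) (hJ2 : J2.card = n) :
    (∏ j ∈ J1, sqx n j)⁻¹ * hh n ((J1ᶜ).image Fin.rev) * hh n J2 -
        (∏ j ∈ J2, sqx n j)⁻¹ * hh n ((J2ᶜ).image Fin.rev) * hh n J1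
      = (∏ j ∈ J1, xx n j)⁻¹ * (∏ j ∈ J2, xx n j)⁻¹ *
          ∑ j ∈ J2 ∩ J1ᶜ,
            (∏ i ∈ J1, sqx n i) ^ 3 * (sqx n j) ^ 3 *
              ((∏ k ∈ (J1ᶜ).erase j, gg n j k) / (∏ k ∈ (J2ᶜ).erase j, gg n j k)) *
              hh n (J2.erase j) * hh n (((J1ᶜ).image Fin.rev).erase j.rev) := by
  classical
  have hcardc : (J2ᶜ).card = (J1ᶜ).card := by
    rw [card_compl, card_compl, hJ1, hJ2]
  have hx1ne : (∏ i ∈ J1, xx n i) ≠ 0 := prod_ne_zero_iff.mpr fun i _ => xx_ne_zero i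
  have hx2ne : (∏ i ∈ J2, xx n i) ≠ 0 := prod_ne_zero_iff.mpr fun i _ => xx_ne_zero i
  have hs1ne : (∏ i ∈ J1, sqx n i) ≠ 0 := prod_ne_zero_iff.mpr fun i _ => sqx_ne_zero i
  have hs2ne : (∏ i ∈ J2, sqx n i) ≠ 0 := prod_ne_zero_iff.mpr fun i _ => sqx_ne_zero i
  -- Step 1: simplify each summand
  have hsummand : ∀ j ∈ J2 ∩ J1ᶜ,
      (∏ i ∈ J1, sqx n i) ^ 3 * (sqx n j) ^ 3 *
        ((∏ k ∈ (J1ᶜ).erase j, gg n j k) / (∏ k ∈ (J2ᶜ).erase j, gg n j k)) *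
        hh n (J2.erase j) * hh n (((J1ᶜ).image Fin.rev).erase j.rev)
      = (∏ i ∈ J1, xx n i) * (∏ i ∈ J2, xx n i) *
          ((∏ i ∈ J1, sqx n i)⁻¹ * hh n J2 * hh n (J1ᶜ) *
            ((∏ k ∈ J2ᶜ, (xx n j - xx n k)) /
              ((xx n j + 1) * ∏ k ∈ (J1ᶜ).erase j, (xx n j - xx n k)))) := by
    intro j hj
    obtain ⟨hj2, hj1c⟩ := mem_inter.mp hj
    have hj1 : j ∉ J1 := mem_compl.mp hj1c
    have hj2c : j ∉ J2ᶜ := by rw [mem_compl, not_not]; exact hj2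
    have hE2 : (J2ᶜ).erase j = J2ᶜ := erase_eq_of_notMem hj2c
    have hjE1 : j ∉ (J1ᶜ).erase j := notMem_erase _ _
    have hrevE1 : j.rev ∈ (J1ᶜ).erase j ↔ j.rev ∈ J1ᶜ := by
      rw [mem_erase]
      simp [rev_ne j]
    have him : ((J1ᶜ).image Fin.rev).erase j.rev = ((J1ᶜ).erase j).image Fin.rev :=
      (Finset.image_erase Fin.rev_injective _ _).symm
    rw [hE2, gg_prod hjE1, gg_prod hj2c, G_prod, G_prod, him, hh_image_rev]
    simp only [hrevE1]
    -- h-factors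
    have hh2 : hh n J2 = hh n (J2.erase j) * (if j.rev ∈ J2 then cc n j else 1) := hh_erase hj2
    have hh1 : hh n (J1ᶜ) = hh n ((J1ᶜ).erase j) * (if j.rev ∈ J1ᶜ then cc n j else 1) :=
      hh_erase hj1c
    rw [hh2, hh1]
    -- cardinalities
    have hc1 : ((J1ᶜ).erase j).card = n - 1 := by
      rw [card_erase_of_mem hj1c, card_compl, Fintype.card_fin, hJ1]
      omega
    have hc2 : (J2ᶜ).card = n := by
      rw [card_compl, Fintype.card_fin, hJ2]
      omega
    rw [hc1, hc2]
    -- complement products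
    have r1 : (∏ i ∈ J1, xx n i) * (xx n j * ∏ k ∈ (J1ᶜ).erase j, xx n k) = 1 := by
      rw [mul_prod_erase _ _ hj1c, prod_mul_prod_compl J1 (xx n), prod_univ_xx]
    have r2 : (∏ i ∈ J2, xx n i) * (∏ k ∈ J2ᶜ, xx n k) = 1 := by
      rw [prod_mul_prod_compl J2 (xx n), prod_univ_xx]
    have hP1 : (∏ k ∈ (J1ᶜ).erase j, xx n k) = ((∏ i ∈ J1, xx n i) * xx n j)⁻¹ := by
      refine eq_inv_of_mul_eq_one_left ?_
      linear_combination r1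
    have hP2 : (∏ k ∈ J2ᶜ, xx n k) = (∏ i ∈ J2, xx n i)⁻¹ := by
      refine eq_inv_of_mul_eq_one_left ?_
      linear_combination r2
    rw [hP1, hP2]
    -- power bookkeeping
    have hpow : xx n j ^ n = xx n j ^ (n - 1) * xx n j := by
      rw [← pow_succ]
      congr 1
      omega
    rw [hpow]
    -- remaining field identity
    have hx1 : (∏ i ∈ J1, xx n i) = (∏ i ∈ J1, sqx n i) ^ 2 := by
      rw [← prod_pow]
      rfl
    have hxj : xx n j = sqx n j ^ 2 := rfl
    rw [hx1, cc_eq, hxj]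
    have hsj : sqx n j ≠ 0 := sqx_ne_zero j
    have hQ1 : (∏ k ∈ (J1ᶜ).erase j, (sqx n j ^ 2 - xx n k)) ≠ 0 :=
      prod_ne_zero_iff.mpr fun k hk => xx_sub_ne_zero (fun h => (mem_erase.mp hk).1 h.symm)
    have hQ2 : (∏ k ∈ J2ᶜ, (sqx n j ^ 2 - xx n k)) ≠ 0 :=
      prod_ne_zero_iff.mpr fun k hk => xx_sub_ne_zero (fun h => hj2c (h ▸ hk))
    have hy : ((sqx n j ^ 2) ^ (n - 1) : F n) ≠ 0 := pow_ne_zero _ (xx_ne_zero j)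
    have hna : sqx n j ^ 2 + 1 ≠ 0 := xx_add_one_ne_zero j
    by_cases hb2 : j.rev ∈ J2 <;> by_cases hb1 : j.rev ∈ J1ᶜ
    · rw [if_pos hb2, if_pos hb1, if_neg (by rw [mem_compl, not_not]; exact hb2)]
      exact summand_aux _ _ _ _ _ _ _ _ _ _ _ hs1ne hsj hQ1 hQ2 hy hx2ne hna
        (div_ne_zero hna hsj) one_ne_zero (mul_one _)
    · rw [if_pos hb2, if_neg hb1, if_neg (by rw [mem_compl, not_not]; exact hb2)]
      exact summand_aux _ _ _ _ _ _ _ _ _ _ _ hs1ne hsj hQ1 hQ2 hy hx2ne hna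
        one_ne_zero one_ne_zero (mul_one _)
    · rw [if_neg hb2, if_pos hb1, if_pos (mem_compl.mpr hb2)]
      exact summand_aux _ _ _ _ _ _ _ _ _ _ _ hs1ne hsj hQ1 hQ2 hy hx2ne hna
        (div_ne_zero hna hsj) (div_ne_zero hna hsj) (one_mul _)
    · rw [if_neg hb2, if_neg hb1, if_pos (mem_compl.mpr hb2)]
      exact summand_aux _ _ _ _ _ _ _ _ _ _ _ hs1ne hsj hQ1 hQ2 hy hx2ne hna
        one_ne_zero (div_ne_zero hna hsj) (one_mul _)
  rw [hh_image_rev, hh_image_rev, Finset.sum_congr rfl hsummand, ← mul_sum]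
  have cancel : ∀ S : F n, (∏ i ∈ J1, xx n i)⁻¹ * (∏ i ∈ J2, xx n i)⁻¹ *
      ((∏ i ∈ J1, xx n i) * (∏ i ∈ J2, xx n i) * S) = S := by
    intro S
    field_simp
  rw [cancel]
  -- extend the sum to J1ᶜ
  have hzero : ∀ k ∈ J1ᶜ, k ∉ J2 ∩ J1ᶜ →
      (∏ i ∈ J1, sqx n i)⁻¹ * hh n J2 * hh n (J1ᶜ) *
        ((∏ kk ∈ J2ᶜ, (xx n k - xx n kk)) /
          ((xx n k + 1) * ∏ kk ∈ (J1ᶜ).erase k, (xx n k - xx n kk))) = 0 := by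
    intro k hk1c hknot
    have hk2 : k ∈ J2ᶜ := mem_compl.mpr (fun h => hknot (mem_inter.mpr ⟨h, hk1c⟩))
    have : (∏ kk ∈ J2ᶜ, (xx n k - xx n kk)) = 0 := prod_eq_zero hk2 (sub_self _)
    rw [this, zero_div, mul_zero]
  rw [sum_subset inter_subset_right hzero, ← mul_sum]
  -- the core identity
  have hxinj : ∀ (a : Fin (2*n)), a ∈ (J1ᶜ) → ∀ (b : Fin (2*n)), b ∈ (J1ᶜ) →
      xx n a = xx n b → a = b := fun a _ b _ h => xx_inj h
  have hcore : ∑ k ∈ J1ᶜ, ((∏ kk ∈ J2ᶜ, (xx n k - xx n kk)) /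
        ((xx n k + 1) * ∏ kk ∈ (J1ᶜ).erase k, (xx n k - xx n kk)))
      = 1 - (∏ k ∈ J2ᶜ, (1 + xx n k)) / (∏ k ∈ J1ᶜ, (1 + xx n k)) := by
    have hcards : ((J2ᶜ).image (xx n)).card = ((J1ᶜ).image (xx n)).card := by
      rw [card_image_of_injective _ xx_inj, card_image_of_injective _ xx_inj, hcardc]
    have hneg1 : (-1 : F n) ∉ (J1ᶜ).image (xx n) := by
      intro hmem
      obtain ⟨k, _, hk⟩ := mem_image.mp hmem
      exact xx_ne_neg_one k hk
    have hc := core_id ((J1ᶜ).image (xx n)) ((J2ᶜ).image (xx n)) hcards hneg1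
    rw [Finset.sum_image hxinj] at hc
    rw [Finset.prod_image hxinj, Finset.prod_image
      (fun a _ b _ h => xx_inj h : ∀ a ∈ J2ᶜ, ∀ b ∈ J2ᶜ, xx n a = xx n b → a = b)] at hc
    have hterms : ∀ k ∈ J1ᶜ,
        (∏ y ∈ (J2ᶜ).image (xx n), (xx n k - y)) /
          ((xx n k + 1) * ∏ y ∈ ((J1ᶜ).image (xx n)).erase (xx n k), (xx n k - y))
        = (∏ kk ∈ J2ᶜ, (xx n k - xx n kk)) /
          ((xx n k + 1) * ∏ kk ∈ (J1ᶜ).erase k, (xx n k - xx n kk)) := by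
      intro k hk
      rw [Finset.prod_image (fun a _ b _ h => xx_inj h :
        ∀ a ∈ J2ᶜ, ∀ b ∈ J2ᶜ, xx n a = xx n b → a = b)]
      rw [← Finset.image_erase xx_inj, Finset.prod_image
        (fun a _ b _ h => xx_inj h :
          ∀ a ∈ (J1ᶜ).erase k, ∀ b ∈ (J1ᶜ).erase k, xx n a = xx n b → a = b)]
    rw [sum_congr rfl hterms] at hc
    exact hc
  rw [hcore]
  -- final combination via the key bookkeeping identity
  have e1 := key_Q J1
  have e2 := key_Q J2
  have hCne : (∏ i ∈ (univ : Finset (Fin n)), cc n (emb n i)) ≠ 0 :=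
    prod_ne_zero_iff.mpr fun i _ => cc_ne_zero _
  have hp1ne : (∏ k ∈ J1ᶜ, (1 + xx n k)) ≠ 0 :=
    prod_ne_zero_iff.mpr fun k _ => by
      intro h
      exact xx_add_one_ne_zero k (by linear_combination h)
  have hp2ne : (∏ k ∈ J2ᶜ, (1 + xx n k)) ≠ 0 :=
    prod_ne_zero_iff.mpr fun k _ => by
      intro h
      exact xx_add_one_ne_zero k (by linear_combination h)
  have f1 : hh n (J1ᶜ) = hh n J1 * (∏ i ∈ J1, sqx n i) * (∏ k ∈ J1ᶜ, (1 + xx n k)) /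
      (∏ i ∈ (univ : Finset (Fin n)), cc n (emb n i)) := by
    rw [eq_div_iff hCne]
    exact e1
  have f2 : hh n (J2ᶜ) = hh n J2 * (∏ i ∈ J2, sqx n i) * (∏ k ∈ J2ᶜ, (1 + xx n k)) /
      (∏ i ∈ (univ : Finset (Fin n)), cc n (emb n i)) := by
    rw [eq_div_iff hCne]
    exact e2
  rw [f1, f2]
  field_simp

end
end

section
/- Suppose n ≥ 2, 0 ≤ m ≤ n and m ≡ n (mod 2). Then in ℤ[x_1,…,x_m,y_1,…,y_n]: δ_{m,n} · ∏_{j=1}^{n}(1−y_j²) · F^{(m,n)} = Σ_{J_1 ⊔ J_2 = {1,…,n}} (−1)^{δ(J_1,J_2)} · (∏_{j∈J_2} y_j) · G^{(m,n)}_{J_1,J_2}, where δ_{m,n} is the Kronecker delta; in particular the right-hand side vanishes identically unless m = n. -/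
/- Setting: the polynomial ring ℤ[x_1,…,x_m,y_1,…,y_n], realized as
`MvPolynomial (Fin m ⊕ Fin n) ℤ` with `Xv i = x_{i+1}` and `Yv j = y_{j+1}`.
For a partition `{1,…,n} = J_1 ⊔ J_2` (encoded by `J = J_1`, `Jᶜ = J_2`):
`Fpoly = ∏_{i<j≤m}(1−x_ix_j) ∏_{i<j≤n}(1−y_iy_j)(y_j−y_i)`,
`Gpoly J = ∏_{i≤m,j∈J_1}(1−x_iy_j) ∏_{i≤m,j∈J_2}(x_i−y_j) ∏_{i<j∈J_1}(y_j−y_i)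
           ∏_{i∈J_1,j∈J_2}(1−y_iy_j) ∏_{i<j∈J_2}(y_i−y_j)`,
`ddelta J = #{(i,j) ∈ J_1×J_2 : i < j}`. -/

noncomputable section

def Xv (m n : ℕ) (i : Fin m) : MvPolynomial (Fin m ⊕ Fin n) ℤ := MvPolynomial.X (Sum.inl i)

def Yv (m n : ℕ) (j : Fin n) : MvPolynomial (Fin m ⊕ Fin n) ℤ := MvPolynomial.X (Sum.inr j)

def Fpoly (m n : ℕ) : MvPolynomial (Fin m ⊕ Fin n) ℤ :=
  (∏ i : Fin m, ∏ j ∈ Finset.univ.filter (fun j => i < j), (1 - Xv m n i * Xv m n j)) *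
    ∏ i : Fin n, ∏ j ∈ Finset.univ.filter (fun j => i < j),
      ((1 - Yv m n i * Yv m n j) * (Yv m n j - Yv m n i))

def Gpoly (m n : ℕ) (J : Finset (Fin n)) : MvPolynomial (Fin m ⊕ Fin n) ℤ :=
  (∏ i : Fin m, ∏ j ∈ J, (1 - Xv m n i * Yv m n j)) *
    (∏ i : Fin m, ∏ j ∈ Jᶜ, (Xv m n i - Yv m n j)) *
    (∏ i ∈ J, ∏ j ∈ J.filter (fun j => i < j), (Yv m n j - Yv m n i)) *
    (∏ i ∈ J, ∏ j ∈ Jᶜ, (1 - Yv m n i * Yv m n j)) *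
    (∏ i ∈ Jᶜ, ∏ j ∈ Jᶜ.filter (fun j => i < j), (Yv m n i - Yv m n j))

def ddelta (n : ℕ) (J : Finset (Fin n)) : ℕ :=
  ((J ×ˢ Jᶜ).filter (fun p => p.1 < p.2)).card



namespace PD
open Finset

variable {R : Type*} [CommRing R]

theorem triangle_comm {n : ℕ} (f : Fin n → Fin n → R) :
    (∏ i : Fin n, ∏ j ∈ Finset.univ.filter (fun j => i < j), f i j)
      = ∏ j : Fin n, ∏ i ∈ Finset.univ.filter (fun i => i < j), f i j := by
  simp only [Finset.prod_filter]
  exact Finset.prod_comm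

theorem prod_extract {α : Type*} [DecidableEq α] (s : Finset α) (f : α → R) (a : α) :
    ∏ x ∈ s, f x = (if a ∈ s then f a else 1) * ∏ x ∈ s.erase a, f x := by
  by_cases h : a ∈ s
  · rw [if_pos h, Finset.mul_prod_erase s f h]
  · rw [if_neg h, Finset.erase_eq_of_notMem h, one_mul]

theorem prod_lt_last {n : ℕ} (g : Fin (n+1) → R) :
    ∏ i ∈ Finset.univ.filter (fun i => i < Fin.last n), g i = ∏ i : Fin n, g i.castSucc := by
  rw [Finset.prod_filter, Fin.prod_univ_castSucc]
  simp [Fin.castSucc_lt_last]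

theorem prod_lt_castSucc {n : ℕ} (j : Fin n) (g : Fin (n+1) → R) :
    ∏ i ∈ Finset.univ.filter (fun i => i < Fin.castSucc j), g i
      = ∏ i ∈ Finset.univ.filter (fun i => i < j), g i.castSucc := by
  rw [Finset.prod_filter, Finset.prod_filter, Fin.prod_univ_castSucc]
  have h1 : ¬ (Fin.last n < Fin.castSucc j) := (Fin.castSucc_lt_last j).asymm
  simp [h1, Fin.castSucc_lt_castSucc_iff]

theorem prod_pairs {n : ℕ} (g : Fin n → Fin n → R) :
    ∏ p ∈ (Finset.univ ×ˢ Finset.univ).filter (fun p : Fin n × Fin n => p.1 < p.2), g p.1 p.2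
      = ∏ j : Fin n, ∏ i ∈ Finset.univ.filter (fun i => i < j), g i j := by
  rw [Finset.prod_filter, Finset.prod_product]
  rw [Finset.prod_comm]
  simp only [← Finset.prod_filter]

theorem prod_offdiag {n : ℕ} (h : Fin n → Fin n → R) (hdiag : ∀ i, h i i = 1) :
    (∏ i : Fin n, ∏ j : Fin n, h i j)
      = ∏ j : Fin n, ∏ i ∈ Finset.univ.filter (fun i => i < j), (h i j * h j i) := by
  have key : ∀ i j : Fin n, h i j =
      (if i < j then h i j else 1) * ((if j < i then h i j else 1) * (if i = j then h i j else 1)) := by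
    intro i j
    rcases lt_trichotomy i j with hij | hij | hij
    · simp [hij, asymm hij, hij.ne]
    · subst hij; simp
    · simp [asymm hij, hij, (ne_of_gt hij)]
  calc (∏ i : Fin n, ∏ j : Fin n, h i j)
      = (∏ i : Fin n, ∏ j : Fin n, (if i < j then h i j else 1))
        * ((∏ i : Fin n, ∏ j : Fin n, (if j < i then h i j else 1))
        * (∏ i : Fin n, ∏ j : Fin n, (if i = j then h i j else 1))) := by
        rw [← Finset.prod_mul_distrib, ← Finset.prod_mul_distrib]
        refine Finset.prod_congr rfl fun i _ => ?_
        rw [← Finset.prod_mul_distrib, ← Finset.prod_mul_distrib]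
        exact Finset.prod_congr rfl fun j _ => key i j
    _ = (∏ j : Fin n, ∏ i ∈ Finset.univ.filter (fun i => i < j), h i j)
        * ((∏ j : Fin n, ∏ i ∈ Finset.univ.filter (fun i => i < j), h j i) * 1) := by
        congr 1
        · rw [Finset.prod_comm]; simp only [← Finset.prod_filter]
        congr 1
        · simp only [← Finset.prod_filter]
        · refine Finset.prod_eq_one fun i _ => ?_
          simp [hdiag]
    _ = ∏ j : Fin n, ∏ i ∈ Finset.univ.filter (fun i => i < j), (h i j * h j i) := by
        rw [mul_one, ← Finset.prod_mul_distrib]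
        exact Finset.prod_congr rfl fun j _ => (Finset.prod_mul_distrib).symm

theorem triangle_perm {n : ℕ} (g : Fin n → Fin n → R) (hsym : ∀ i j, g i j = g j i)
    (σ : Equiv.Perm (Fin n)) :
    (∏ j : Fin n, ∏ i ∈ Finset.univ.filter (fun i => i < j), g (σ i) (σ j))
      = ∏ j : Fin n, ∏ i ∈ Finset.univ.filter (fun i => i < j), g i j := by
  rw [← prod_pairs, ← prod_pairs]
  refine Finset.prod_nbij'
    (fun p => if σ p.1 < σ p.2 then (σ p.1, σ p.2) else (σ p.2, σ p.1))
    (fun p => if σ⁻¹ p.1 < σ⁻¹ p.2 then (σ⁻¹ p.1, σ⁻¹ p.2) else (σ⁻¹ p.2, σ⁻¹ p.1))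
    ?_ ?_ ?_ ?_ ?_
  · rintro ⟨a, b⟩ hab
    simp only [Finset.mem_filter, Finset.mem_product, Finset.mem_univ, true_and] at hab ⊢
    split_ifs with h
    · exact h
    · exact lt_of_le_of_ne (not_lt.mp h) (fun he => hab.ne' (σ.injective he))
  · rintro ⟨a, b⟩ hab
    simp only [Finset.mem_filter, Finset.mem_product, Finset.mem_univ, true_and] at hab ⊢
    split_ifs with h
    · exact h
    · exact lt_of_le_of_ne (not_lt.mp h) (fun he => hab.ne' ((σ⁻¹).injective he))
  · rintro ⟨a, b⟩ hab
    simp only [Finset.mem_filter, Finset.mem_product, Finset.mem_univ, true_and] at hab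
    by_cases h : σ a < σ b
    · simp [h, Equiv.symm_apply_apply, hab, asymm hab]
    · simp [h, Equiv.symm_apply_apply, hab, asymm hab]
  · rintro ⟨a, b⟩ hab
    simp only [Finset.mem_filter, Finset.mem_product, Finset.mem_univ, true_and] at hab
    by_cases h : σ⁻¹ a < σ⁻¹ b
    · rw [Equiv.Perm.inv_def] at h
      simp [h, Equiv.apply_symm_apply, hab, asymm hab]
    · rw [Equiv.Perm.inv_def] at h
      simp [h, Equiv.apply_symm_apply, hab, asymm hab]
  · rintro ⟨a, b⟩ hab
    by_cases h : σ a < σ b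
    · simp [h]
    · simp only [h, if_false]
      exact hsym _ _

end PD


namespace PD2
open Finset PD

variable {R : Type*} [CommRing R] {m n : ℕ}

def wf (y : Fin n → R) (J : Finset (Fin n)) (i j : Fin n) : R :=
  if i ∈ J then (if j ∈ J then y j - y i else -(1 - y i * y j))
  else (if j ∈ J then 1 - y i * y j else y i - y j)

def xf (x : Fin m → R) (y : Fin n → R) (J : Finset (Fin n)) (i : Fin m) (j : Fin n) : R :=
  if j ∈ J then 1 - x i * y j else x i - y j

def col (x : Fin m → R) (y : Fin n → R) (J : Finset (Fin n)) (j : Fin n) : R :=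
  (if j ∈ J then 1 else y j) * (∏ i : Fin m, xf x y J i j) *
    ∏ i ∈ Finset.univ.filter (fun i => i < j), wf y J i j

def term (x : Fin m → R) (y : Fin n → R) (J : Finset (Fin n)) : R := ∏ j : Fin n, col x y J j

def rhs (x : Fin m → R) (y : Fin n → R) : R := ∑ J : Finset (Fin n), term x y J

def lhs (m n : ℕ) (x : Fin m → R) (y : Fin n → R) : R :=
  (if m = n then 1 else 0) * (∏ j : Fin n, (1 - y j ^ 2)) *
    ((∏ j : Fin m, ∏ i ∈ Finset.univ.filter (fun i => i < j), (1 - x i * x j)) *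
      ∏ j : Fin n, ∏ i ∈ Finset.univ.filter (fun i => i < j), ((1 - y i * y j) * (y j - y i)))

theorem filter_mem_univ (J : Finset (Fin n)) : Finset.univ.filter (fun j => j ∈ J) = J := by
  ext j; simp

theorem prod_mem_ite (J : Finset (Fin n)) (f : Fin n → R) :
    ∏ j ∈ J, f j = ∏ j : Fin n, (if j ∈ J then f j else 1) := by
  rw [← Finset.prod_filter, filter_mem_univ]

theorem prod_nmem_ite (J : Finset (Fin n)) (f : Fin n → R) :
    ∏ j ∈ Jᶜ, f j = ∏ j : Fin n, (if j ∈ J then 1 else f j) := by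
  have h : Jᶜ = Finset.univ.filter (fun j => j ∉ J) := by ext j; simp
  rw [h, Finset.prod_filter]
  refine Finset.prod_congr rfl fun j _ => ?_
  by_cases hj : j ∈ J <;> simp [hj]

theorem prod_filter_lt_ite (J : Finset (Fin n)) (i : Fin n) (f : Fin n → R) :
    ∏ j ∈ J.filter (fun j => i < j), f j
      = ∏ j ∈ Finset.univ.filter (fun j => i < j), (if j ∈ J then f j else 1) := by
  have h : J.filter (fun j => i < j)
      = (Finset.univ.filter (fun j => i < j)).filter (fun j => j ∈ J) := by
    ext j; simp [and_comm]
  rw [h, Finset.prod_filter]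

theorem prod_filter_lt_ite' (J : Finset (Fin n)) (i : Fin n) (f : Fin n → R) :
    ∏ j ∈ Jᶜ.filter (fun j => i < j), f j
      = ∏ j ∈ Finset.univ.filter (fun j => i < j), (if j ∈ J then 1 else f j) := by
  have h : Jᶜ.filter (fun j => i < j)
      = (Finset.univ.filter (fun j => i < j)).filter (fun j => j ∉ J) := by
    ext j; simp [and_comm]
  rw [h, Finset.prod_filter]
  refine Finset.prod_congr rfl fun j _ => ?_
  by_cases hj : j ∈ J <;> simp [hj]

theorem prod_compl_eq (y : Fin n → R) (J : Finset (Fin n)) :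
    (∏ j ∈ Jᶜ, y j) = ∏ j : Fin n, (if j ∈ J then 1 else y j) := prod_nmem_ite J y

theorem sign_eq (J : Finset (Fin n)) :
    ((-1 : R) ^ ddelta n J)
      = ∏ j : Fin n, ∏ i ∈ Finset.univ.filter (fun i => i < j),
          (if i ∈ J ∧ j ∉ J then (-1 : R) else 1) := by
  rw [← prod_pairs]
  have hset : ((J ×ˢ Jᶜ).filter (fun p => p.1 < p.2))
      = ((Finset.univ ×ˢ Finset.univ).filter (fun p : Fin n × Fin n => p.1 < p.2)).filter
          (fun p => p.1 ∈ J ∧ p.2 ∉ J) := by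
    ext p
    simp only [Finset.mem_filter, Finset.mem_product, Finset.mem_univ, Finset.mem_compl, true_and]
    tauto
  rw [ddelta, hset, ← Finset.prod_const, Finset.prod_filter]

theorem xpart_eq (x : Fin m → R) (y : Fin n → R) (J : Finset (Fin n)) :
    (∏ i : Fin m, ∏ j ∈ J, (1 - x i * y j)) * (∏ i : Fin m, ∏ j ∈ Jᶜ, (x i - y j))
      = ∏ j : Fin n, ∏ i : Fin m, xf x y J i j := by
  rw [← Finset.prod_mul_distrib, Finset.prod_comm]
  refine Finset.prod_congr rfl fun i _ => ?_
  rw [prod_mem_ite J, prod_nmem_ite J, ← Finset.prod_mul_distrib]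
  refine Finset.prod_congr rfl fun j _ => ?_
  by_cases h : j ∈ J <;> simp [xf, h]

theorem inJ_part_eq (y : Fin n → R) (J : Finset (Fin n)) :
    (∏ i ∈ J, ∏ j ∈ J.filter (fun j => i < j), (y j - y i))
      = ∏ j : Fin n, ∏ i ∈ Finset.univ.filter (fun i => i < j),
          (if i ∈ J ∧ j ∈ J then y j - y i else 1) := by
  rw [← triangle_comm, prod_mem_ite J]
  refine Finset.prod_congr rfl fun i _ => ?_
  by_cases h : i ∈ J
  · rw [if_pos h, prod_filter_lt_ite]
    refine Finset.prod_congr rfl fun j _ => ?_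
    by_cases hj : j ∈ J <;> simp [h, hj]
  · rw [if_neg h]
    refine (Finset.prod_eq_one fun j _ => ?_).symm
    simp [h]

theorem outJ_part_eq (y : Fin n → R) (J : Finset (Fin n)) :
    (∏ i ∈ Jᶜ, ∏ j ∈ Jᶜ.filter (fun j => i < j), (y i - y j))
      = ∏ j : Fin n, ∏ i ∈ Finset.univ.filter (fun i => i < j),
          (if i ∉ J ∧ j ∉ J then y i - y j else 1) := by
  rw [← triangle_comm, prod_nmem_ite J]
  refine Finset.prod_congr rfl fun i _ => ?_
  by_cases h : i ∈ J
  · rw [if_pos h]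
    refine (Finset.prod_eq_one fun j _ => ?_).symm
    simp [h]
  · rw [if_neg h, prod_filter_lt_ite']
    refine Finset.prod_congr rfl fun j _ => ?_
    by_cases hj : j ∈ J <;> simp [h, hj]

theorem cross_part_eq (y : Fin n → R) (J : Finset (Fin n)) :
    (∏ i ∈ J, ∏ j ∈ Jᶜ, (1 - y i * y j))
      = ∏ j : Fin n, ∏ i ∈ Finset.univ.filter (fun i => i < j),
          ((if i ∈ J ∧ j ∉ J then 1 - y i * y j else 1) *
           (if j ∈ J ∧ i ∉ J then 1 - y j * y i else 1)) := by
  have h0 : (∏ i ∈ J, ∏ j ∈ Jᶜ, (1 - y i * y j))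
      = ∏ i : Fin n, ∏ j : Fin n, (if i ∈ J ∧ j ∉ J then 1 - y i * y j else 1) := by
    rw [prod_mem_ite J]
    refine Finset.prod_congr rfl fun i _ => ?_
    by_cases h : i ∈ J
    · rw [if_pos h, prod_nmem_ite J]
      refine Finset.prod_congr rfl fun j _ => ?_
      by_cases hj : j ∈ J <;> simp [h, hj]
    · rw [if_neg h]
      refine (Finset.prod_eq_one fun j _ => ?_).symm
      simp [h]
  rw [h0]
  exact prod_offdiag (fun i j => if i ∈ J ∧ j ∉ J then 1 - y i * y j else 1)
    (fun i => by simp [fun h : i ∈ J => h])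

theorem term_eq (x : Fin m → R) (y : Fin n → R) (J : Finset (Fin n)) :
    (-1 : R) ^ ddelta n J * (∏ j ∈ Jᶜ, y j) *
      ((∏ i : Fin m, ∏ j ∈ J, (1 - x i * y j)) *
        (∏ i : Fin m, ∏ j ∈ Jᶜ, (x i - y j)) *
        (∏ i ∈ J, ∏ j ∈ J.filter (fun j => i < j), (y j - y i)) *
        (∏ i ∈ J, ∏ j ∈ Jᶜ, (1 - y i * y j)) *
        (∏ i ∈ Jᶜ, ∏ j ∈ Jᶜ.filter (fun j => i < j), (y i - y j)))
      = term x y J := by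
  have key : (∏ j : Fin n, ∏ i ∈ Finset.univ.filter (fun i => i < j),
          (if i ∈ J ∧ j ∉ J then (-1 : R) else 1))
      * ((∏ j : Fin n, ∏ i ∈ Finset.univ.filter (fun i => i < j),
          (if i ∈ J ∧ j ∈ J then y j - y i else 1))
      * ((∏ j : Fin n, ∏ i ∈ Finset.univ.filter (fun i => i < j),
          ((if i ∈ J ∧ j ∉ J then 1 - y i * y j else 1) *
           (if j ∈ J ∧ i ∉ J then 1 - y j * y i else 1)))
      * (∏ j : Fin n, ∏ i ∈ Finset.univ.filter (fun i => i < j),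
          (if i ∉ J ∧ j ∉ J then y i - y j else 1))))
      = ∏ j : Fin n, ∏ i ∈ Finset.univ.filter (fun i => i < j), wf y J i j := by
    simp only [← Finset.prod_mul_distrib]
    refine Finset.prod_congr rfl fun j _ => Finset.prod_congr rfl fun i _ => ?_
    by_cases h1 : i ∈ J <;> by_cases h2 : j ∈ J <;> simp [wf, h1, h2] <;> ring
  rw [xpart_eq x y J, sign_eq J, prod_compl_eq y J, inJ_part_eq y J, outJ_part_eq y J,
    cross_part_eq y J, term]
  simp only [col]
  rw [Finset.prod_mul_distrib, Finset.prod_mul_distrib, ← key]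
  ring

theorem map_term {S : Type*} [CommRing S] (f : R →+* S) (x : Fin m → R) (y : Fin n → R)
    (J : Finset (Fin n)) : f (term x y J) = term (f ∘ x) (f ∘ y) J := by
  simp only [term, col, wf, xf, map_prod, map_mul, map_sub, map_one, map_neg, apply_ite f, Function.comp]

theorem map_rhs {S : Type*} [CommRing S] (f : R →+* S) (x : Fin m → R) (y : Fin n → R) :
    f (rhs x y) = rhs (f ∘ x) (f ∘ y) := by
  simp only [rhs, map_sum, map_term]

theorem map_lhs {S : Type*} [CommRing S] (f : R →+* S) (x : Fin m → R) (y : Fin n → R) :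
    f (lhs m n x y) = lhs m n (f ∘ x) (f ∘ y) := by
  simp only [lhs, map_mul, map_prod, map_sub, map_one, map_pow, apply_ite f, map_zero,
    Function.comp]

end PD2

namespace PD3
open Finset PD PD2

variable {R : Type*} [CommRing R] {m n : ℕ}

def flip (a : Fin n) (J : Finset (Fin n)) : Finset (Fin n) :=
  if a ∈ J then J.erase a else insert a J

theorem mem_flip {a b : Fin n} {J : Finset (Fin n)} :
    b ∈ flip a J ↔ (if b = a then a ∉ J else b ∈ J) := by
  by_cases h1 : a ∈ J <;> by_cases h2 : b = a <;>
    simp [flip, h1, h2, Finset.mem_erase, Finset.mem_insert]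

theorem flip_flip (a : Fin n) (J : Finset (Fin n)) : flip a (flip a J) = J := by
  ext b
  by_cases h2 : b = a
  · subst h2; simp [mem_flip]
  · simp [mem_flip, h2]

theorem flip_ne (a : Fin n) (J : Finset (Fin n)) : flip a J ≠ J := by
  intro h
  have h1 : a ∈ flip a J ↔ (a ∉ J) := by simp [mem_flip]
  rw [h] at h1
  tauto

theorem mem_flip_ne {a b : Fin n} {J : Finset (Fin n)} (h : b ≠ a) : (b ∈ flip a J) = (b ∈ J) := by
  simp [mem_flip, h]

theorem col_congr (x : Fin m → R) (y : Fin n → R) {J K : Finset (Fin n)} (j : Fin n)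
    (hj : (j ∈ K) ↔ (j ∈ J)) (hi : ∀ i : Fin n, i < j → ((i ∈ K) ↔ (i ∈ J))) :
    col x y K j = col x y J j := by
  unfold col xf wf
  congr 1
  · congr 1
    · simp only [hj]
    · exact Finset.prod_congr rfl fun i _ => by simp only [hj]
  · refine Finset.prod_congr rfl fun i hmem => ?_
    simp only [hi i (by simpa using hmem), hj]

theorem upow_odd {u : R} (hu : u * u = 1) {k : ℕ} (hk : k % 2 = 1) : u ^ k = u := by
  obtain ⟨c, hc⟩ := Nat.odd_iff.mpr hk
  subst hc
  rw [pow_succ, pow_mul]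
  rw [show u ^ 2 = u * u from sq u, hu, one_pow, one_mul]

theorem L12 (x : Fin m → R) (y : Fin (n+1) → R)
    (hu : y (Fin.last n) * y (Fin.last n) = 1) (hpar : (m + n) % 2 = 1) :
    rhs x y = 0 := by
  set L := Fin.last n with hL
  set u := y L with huu
  have key0 : ∀ J : Finset (Fin (n+1)), L ∉ J →
      term x y J = - term x y (insert L J) := by
    intro J hLJ
    have hcols : ∀ j : Fin n, col x y (insert L J) (Fin.castSucc j) = col x y J (Fin.castSucc j) := by
      intro j
      refine col_congr x y _ ?_ ?_
      · have h5 : Fin.castSucc j ≠ L := (Fin.castSucc_lt_last j).ne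
        simp [Finset.mem_insert, h5]
      · intro i hij
        have h5 : i ≠ L := (hij.trans (Fin.castSucc_lt_last j)).ne
        simp [Finset.mem_insert, h5]
    have hxf : ∀ i : Fin m, xf x y J i L = (-u) * xf x y (insert L J) i L := by
      intro i
      simp only [xf, if_neg hLJ, if_pos (Finset.mem_insert_self L J)]
      linear_combination (-(x i)) * hu
    have hwf : ∀ i : Fin (n+1), i < L → wf y J i L = (-u) * wf y (insert L J) i L := by
      intro i hi
      have hne : i ≠ L := hi.ne
      have hmem : (i ∈ insert L J) ↔ (i ∈ J) := by simp [Finset.mem_insert, hne]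
      by_cases h : i ∈ J
      · simp only [wf, if_neg hLJ, if_pos (Finset.mem_insert_self L J), hmem, if_pos h]
        linear_combination hu
      · simp only [wf, if_neg hLJ, if_pos (Finset.mem_insert_self L J), hmem, if_neg h]
        linear_combination (-(y i)) * hu
    have hterm : term x y J = (∏ j : Fin n, col x y J (Fin.castSucc j)) * col x y J L :=
      Fin.prod_univ_castSucc _
    have hterm' : term x y (insert L J)
        = (∏ j : Fin n, col x y J (Fin.castSucc j)) * col x y (insert L J) L := by
      rw [term, Fin.prod_univ_castSucc]
      congr 1
      exact Finset.prod_congr rfl fun j _ => hcols j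
    have hcolL : col x y J L = - col x y (insert L J) L := by
      unfold col
      rw [if_neg hLJ, if_pos (Finset.mem_insert_self L J)]
      rw [prod_lt_last (fun i => wf y J i L), prod_lt_last (fun i => wf y (insert L J) i L)]
      have e1 : (∏ i : Fin m, xf x y J i L)
          = (-u) ^ m * ∏ i : Fin m, xf x y (insert L J) i L := by
        rw [show ((-u : R)) ^ m = ∏ _i : Fin m, (-u) by simp, ← Finset.prod_mul_distrib]
        exact Finset.prod_congr rfl fun i _ => hxf i
      have e2 : (∏ i : Fin n, wf y J (Fin.castSucc i) L)
          = (-u) ^ n * ∏ i : Fin n, wf y (insert L J) (Fin.castSucc i) L := by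
        rw [show ((-u : R)) ^ n = ∏ _i : Fin n, (-u) by simp, ← Finset.prod_mul_distrib]
        exact Finset.prod_congr rfl fun i _ => hwf _ (Fin.castSucc_lt_last i)
      rw [e1, e2]
      have e3 : u * ((-u) ^ m * (-u) ^ n) = -1 := by
        rw [← pow_add, show ((-u) ^ (m+n)) = -(u ^ (m+n)) from Odd.neg_pow (Nat.odd_iff.mpr hpar) u,
          upow_odd hu hpar]
        rw [mul_neg, hu]
      calc u * ((-u) ^ m * ∏ i : Fin m, xf x y (insert L J) i L) *
            ((-u) ^ n * ∏ i : Fin n, wf y (insert L J) (Fin.castSucc i) L)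
          = (u * ((-u) ^ m * (-u) ^ n)) * ((∏ i : Fin m, xf x y (insert L J) i L) *
              ∏ i : Fin n, wf y (insert L J) (Fin.castSucc i) L) := by ring
        _ = - (1 * (∏ i : Fin m, xf x y (insert L J) i L) *
              ∏ i : Fin n, wf y (insert L J) (Fin.castSucc i) L) := by rw [e3]; ring
    rw [hterm, hterm', hcolL]
    ring
  apply Finset.sum_ninvolution (flip L)
  · intro J
    by_cases hLJ : L ∈ J
    · have h1 : flip L J = J.erase L := by rw [flip, if_pos hLJ]
      have h2 : L ∉ J.erase L := Finset.notMem_erase L J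
      have h3 : insert L (J.erase L) = J := Finset.insert_erase hLJ
      rw [h1, key0 (J.erase L) h2, h3]
      ring
    · have h1 : flip L J = insert L J := by rw [flip, if_neg hLJ]
      rw [h1, key0 J hLJ]
      ring
  · intro J _
    exact flip_ne L J
  · intro J; exact Finset.mem_univ _
  · intro J; exact flip_flip L J

end PD3

namespace PD4
open Finset PD PD2 PD3

variable {R : Type*} [CommRing R] {m n : ℕ}

theorem term_decomp (x : Fin m → R) (y : Fin (n+1) → R) (k : Fin n) (J : Finset (Fin (n+1))) :
    term x y J =
      (∏ j ∈ Finset.univ.erase k,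
        ((if Fin.castSucc j ∈ J then 1 else y (Fin.castSucc j)) *
          (∏ i : Fin m, xf x y J i (Fin.castSucc j)) *
          ∏ i ∈ (Finset.univ.filter (fun i => i < Fin.castSucc j)).erase (Fin.castSucc k),
            wf y J i (Fin.castSucc j)))
      * (∏ i ∈ Finset.univ.filter (fun i => i < k),
          (wf y J (Fin.castSucc i) (Fin.castSucc k) * wf y J (Fin.castSucc i) (Fin.last n)))
      * (∏ j ∈ Finset.univ.filter (fun j => k < j),
          (wf y J (Fin.castSucc k) (Fin.castSucc j) * wf y J (Fin.castSucc j) (Fin.last n)))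
      * wf y J (Fin.castSucc k) (Fin.last n)
      * ((if Fin.castSucc k ∈ J then 1 else y (Fin.castSucc k)) *
          (if Fin.last n ∈ J then 1 else y (Fin.last n)))
      * ((∏ i : Fin m, xf x y J i (Fin.castSucc k)) * (∏ i : Fin m, xf x y J i (Fin.last n))) := by
  have hcol : ∀ j₀ ∈ Finset.univ.erase k, col x y J (Fin.castSucc j₀) =
      ((if Fin.castSucc j₀ ∈ J then 1 else y (Fin.castSucc j₀)) *
        (∏ i : Fin m, xf x y J i (Fin.castSucc j₀)) *
        ∏ i ∈ (Finset.univ.filter (fun i => i < Fin.castSucc j₀)).erase (Fin.castSucc k),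
          wf y J i (Fin.castSucc j₀)) *
      (if k < j₀ then wf y J (Fin.castSucc k) (Fin.castSucc j₀) else 1) := by
    intro j₀ _
    unfold col
    rw [prod_extract (Finset.univ.filter (fun i => i < Fin.castSucc j₀))
      (fun i => wf y J i (Fin.castSucc j₀)) (Fin.castSucc k)]
    simp only [Finset.mem_filter, Finset.mem_univ, true_and, Fin.castSucc_lt_castSucc_iff]
    ring
  have hsplit : Finset.univ.erase k
      = Finset.univ.filter (fun i => i < k) ∪ Finset.univ.filter (fun i => k < i) := by
    ext i
    simp only [Finset.mem_erase, Finset.mem_univ, and_true, Finset.mem_union, Finset.mem_filter,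
      true_and]
    constructor
    · intro h; exact lt_or_gt_of_ne h
    · rintro (h | h)
      · exact h.ne
      · exact h.ne'
  have hdisj : Disjoint (Finset.univ.filter (fun i : Fin n => i < k))
      (Finset.univ.filter (fun i : Fin n => k < i)) := by
    rw [Finset.disjoint_left]
    intro a h1 h2
    simp only [Finset.mem_filter] at h1 h2
    exact absurd h2.2 h1.2.asymm
  have hcolL : col x y J (Fin.last n) =
      ((if Fin.last n ∈ J then 1 else y (Fin.last n)) * (∏ i : Fin m, xf x y J i (Fin.last n))) *
      (wf y J (Fin.castSucc k) (Fin.last n) *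
        ((∏ i ∈ Finset.univ.filter (fun i => i < k), wf y J (Fin.castSucc i) (Fin.last n)) *
         (∏ i ∈ Finset.univ.filter (fun i => k < i), wf y J (Fin.castSucc i) (Fin.last n)))) := by
    unfold col
    rw [prod_lt_last (fun i => wf y J i (Fin.last n)),
      ← Finset.mul_prod_erase Finset.univ (fun i : Fin n => wf y J (Fin.castSucc i) (Fin.last n))
        (Finset.mem_univ k), hsplit, Finset.prod_union hdisj]
  have hcolK : col x y J (Fin.castSucc k) =
      ((if Fin.castSucc k ∈ J then 1 else y (Fin.castSucc k)) *
        (∏ i : Fin m, xf x y J i (Fin.castSucc k))) *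
      (∏ i ∈ Finset.univ.filter (fun i => i < k), wf y J (Fin.castSucc i) (Fin.castSucc k)) := by
    unfold col
    rw [prod_lt_castSucc k (fun i => wf y J i (Fin.castSucc k))]
  rw [term, Fin.prod_univ_castSucc,
    ← Finset.mul_prod_erase Finset.univ (fun j₀ : Fin n => col x y J (Fin.castSucc j₀))
      (Finset.mem_univ k),
    Finset.prod_congr rfl hcol, Finset.prod_mul_distrib, hcolL, hcolK]
  rw [show ∀ s : Finset (Fin n), (∏ j₀ ∈ s, if k < j₀ then wf y J (Fin.castSucc k) (Fin.castSucc j₀) else 1)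
      = ∏ j₀ ∈ s.filter (fun j₀ => k < j₀), wf y J (Fin.castSucc k) (Fin.castSucc j₀) from
      fun s => (Finset.prod_filter _ _).symm]
  rw [show (Finset.univ.erase k).filter (fun j₀ => k < j₀)
      = Finset.univ.filter (fun j₀ : Fin n => k < j₀) by
    ext i
    simp only [Finset.mem_filter, Finset.mem_erase, Finset.mem_univ, true_and, and_true]
    exact ⟨fun h => h.2, fun h => ⟨h.ne', h⟩⟩]
  simp only [Finset.prod_mul_distrib]
  ring

end PD4

namespace PD5
open Finset PD PD2 PD3 PD4

variable {R : Type*} [CommRing R] {m n : ℕ}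

theorem cross_neg (x : Fin m → R) (y : Fin (n+1) → R) (k : Fin n)
    (hk : y (Fin.castSucc k) = y (Fin.last n)) (J : Finset (Fin (n+1)))
    (hK : Fin.castSucc k ∈ J) (hL : Fin.last n ∉ J) :
    term x y (insert (Fin.last n) (J.erase (Fin.castSucc k))) = - term x y J := by
  have hKL : Fin.castSucc k ≠ Fin.last n := (Fin.castSucc_lt_last k).ne
  set K := Fin.castSucc k with hKdef
  set L := Fin.last n with hLdef
  set J' := insert L (J.erase K) with hJ'
  have hK' : K ∉ J' := by simp [hJ', Finset.mem_insert, hKL, Finset.mem_erase]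
  have hL' : L ∈ J' := Finset.mem_insert_self _ _
  have hmem : ∀ b : Fin (n+1), b ≠ K → b ≠ L → ((b ∈ J') ↔ (b ∈ J)) := by
    intro b h1 h2
    simp [hJ', Finset.mem_insert, Finset.mem_erase, h1, h2]
  rw [term_decomp x y k J, term_decomp x y k J']
  have c1 : ∀ j₀ ∈ Finset.univ.erase k,
      ((if Fin.castSucc j₀ ∈ J' then 1 else y (Fin.castSucc j₀)) *
        (∏ i : Fin m, xf x y J' i (Fin.castSucc j₀)) *
        ∏ i ∈ (Finset.univ.filter (fun i => i < Fin.castSucc j₀)).erase K,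
          wf y J' i (Fin.castSucc j₀))
      = ((if Fin.castSucc j₀ ∈ J then 1 else y (Fin.castSucc j₀)) *
        (∏ i : Fin m, xf x y J i (Fin.castSucc j₀)) *
        ∏ i ∈ (Finset.univ.filter (fun i => i < Fin.castSucc j₀)).erase K,
          wf y J i (Fin.castSucc j₀)) := by
    intro j₀ hj₀
    have hne : j₀ ≠ k := (Finset.mem_erase.mp hj₀).1
    have h1 : Fin.castSucc j₀ ≠ K := fun h => hne (Fin.castSucc_injective _ h)
    have h2 : Fin.castSucc j₀ ≠ L := (Fin.castSucc_lt_last _).ne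
    have hm := hmem _ h1 h2
    congr 1
    · congr 1
      · simp only [hm]
      · exact Finset.prod_congr rfl fun i _ => by unfold xf; simp only [hm]
    · refine Finset.prod_congr rfl fun i hi => ?_
      obtain ⟨hiK, hifil⟩ := Finset.mem_erase.mp hi
      have hilt : i < Fin.castSucc j₀ := by
        simpa using (Finset.mem_filter.mp hifil).2
      have hiL : i ≠ L := (hilt.trans (Fin.castSucc_lt_last _)).ne
      unfold wf
      simp only [hmem i hiK hiL, hm]
  have c2 : ∀ i ∈ Finset.univ.filter (fun i => i < k),
      wf y J' (Fin.castSucc i) K * wf y J' (Fin.castSucc i) L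
      = wf y J (Fin.castSucc i) K * wf y J (Fin.castSucc i) L := by
    intro i hi
    have hik : i ≠ k := ((Finset.mem_filter.mp hi).2).ne
    have hiK : Fin.castSucc i ≠ K := fun h => hik (Fin.castSucc_injective _ h)
    have hiL : Fin.castSucc i ≠ L := (Fin.castSucc_lt_last _).ne
    have hm := hmem _ hiK hiL
    unfold wf
    by_cases h : Fin.castSucc i ∈ J
    · simp only [hm, h, hK, hL, hK', hL', if_true, if_false, eq_self_iff_true]
      rw [hk]; ring
    · simp only [hm, h, hK, hL, hK', hL', if_true, if_false, eq_self_iff_true]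
      rw [hk]; ring
  have c3 : ∀ j ∈ Finset.univ.filter (fun j => k < j),
      wf y J' K (Fin.castSucc j) * wf y J' (Fin.castSucc j) L
      = wf y J K (Fin.castSucc j) * wf y J (Fin.castSucc j) L := by
    intro j hj
    have hjk : j ≠ k := ((Finset.mem_filter.mp hj).2).ne'
    have hjK : Fin.castSucc j ≠ K := fun h => hjk (Fin.castSucc_injective _ h)
    have hjL : Fin.castSucc j ≠ L := (Fin.castSucc_lt_last _).ne
    have hm := hmem _ hjK hjL
    unfold wf
    by_cases h : Fin.castSucc j ∈ J
    · simp only [hm, h, hK, hL, hK', hL', if_true, if_false]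
      rw [hk]; ring
    · simp only [hm, h, hK, hL, hK', hL', if_true, if_false]
      rw [hk]; ring
  have c4 : wf y J' K L = - wf y J K L := by
    unfold wf
    simp only [hK, hL, hK', hL', if_true, if_false]
    ring
  have c5 : (if K ∈ J' then 1 else y K) * (if L ∈ J' then 1 else y L)
      = (if K ∈ J then 1 else y K) * (if L ∈ J then 1 else y L) := by
    simp only [hK, hL, hK', hL', if_true, if_false]
    rw [hk]; ring
  have c6 : (∏ i : Fin m, xf x y J' i K) * (∏ i : Fin m, xf x y J' i L)
      = (∏ i : Fin m, xf x y J i K) * (∏ i : Fin m, xf x y J i L) := by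
    rw [← Finset.prod_mul_distrib, ← Finset.prod_mul_distrib]
    refine Finset.prod_congr rfl fun i _ => ?_
    unfold xf
    simp only [hK, hL, hK', hL', if_true, if_false]
    rw [hk]; ring
  rw [Finset.prod_congr rfl c1, Finset.prod_congr rfl c2, Finset.prod_congr rfl c3, c4, c5, c6]
  ring

theorem same_side_zero (x : Fin m → R) (y : Fin (n+1) → R) (k : Fin n)
    (hk : y (Fin.castSucc k) = y (Fin.last n)) (J : Finset (Fin (n+1)))
    (hss : (Fin.castSucc k ∈ J) ↔ (Fin.last n ∈ J)) : term x y J = 0 := by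
  have hw : wf y J (Fin.castSucc k) (Fin.last n) = 0 := by
    unfold wf
    by_cases h : Fin.castSucc k ∈ J
    · rw [if_pos h, if_pos (hss.mp h), hk, sub_self]
    · rw [if_neg h, if_neg (fun hh => h (hss.mpr hh)), hk, sub_self]
  rw [term]
  apply Finset.prod_eq_zero (Finset.mem_univ (Fin.last n))
  unfold col
  have hz : ∏ i ∈ Finset.univ.filter (fun i => i < Fin.last n), wf y J i (Fin.last n) = 0 :=
    Finset.prod_eq_zero
      (show Fin.castSucc k ∈ Finset.univ.filter (fun i => i < Fin.last n) by
        simp [Fin.castSucc_lt_last]) hw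
  rw [hz, mul_zero]

theorem mem_g {k : Fin n} {J : Finset (Fin (n+1))} {b : Fin (n+1)} :
    (b ∈ flip (Fin.castSucc k) (flip (Fin.last n) J))
      ↔ (if b = Fin.castSucc k then Fin.castSucc k ∉ J
          else if b = Fin.last n then Fin.last n ∉ J else b ∈ J) := by
  have hKL : Fin.castSucc k ≠ Fin.last n := (Fin.castSucc_lt_last k).ne
  rw [mem_flip]
  by_cases hb : b = Fin.castSucc k
  · simp [hb, mem_flip, hKL]
  · simp [hb, mem_flip]

theorem L3 (x : Fin m → R) (y : Fin (n+1) → R) (k : Fin n)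
    (hk : y (Fin.castSucc k) = y (Fin.last n)) : rhs x y = 0 := by
  have hKL : Fin.castSucc k ≠ Fin.last n := (Fin.castSucc_lt_last k).ne
  set g : Finset (Fin (n+1)) → Finset (Fin (n+1)) :=
    fun J => flip (Fin.castSucc k) (flip (Fin.last n) J) with hg
  have hgK : ∀ J, ((Fin.castSucc k ∈ g J) ↔ (Fin.castSucc k ∉ J)) := by
    intro J; rw [hg, mem_g]; simp
  have hgL : ∀ J, ((Fin.last n ∈ g J) ↔ (Fin.last n ∉ J)) := by
    intro J; rw [hg, mem_g]; simp [hKL.symm, hKL]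
  have hgO : ∀ (J) (b : Fin (n+1)), b ≠ Fin.castSucc k → b ≠ Fin.last n →
      ((b ∈ g J) ↔ (b ∈ J)) := by
    intro J b h1 h2; rw [hg, mem_g]; simp [h1, h2]
  apply Finset.sum_ninvolution g
  · intro J
    by_cases h1 : Fin.castSucc k ∈ J <;> by_cases h2 : Fin.last n ∈ J
    · rw [same_side_zero x y k hk J (by tauto),
        same_side_zero x y k hk (g J) (by rw [hgK, hgL]; tauto), add_zero]
    · have hgeq : g J = insert (Fin.last n) (J.erase (Fin.castSucc k)) := by
        ext b
        by_cases hb1 : b = Fin.castSucc k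
        · subst hb1; rw [hg, mem_g]; simp [hKL, h1]
        · by_cases hb2 : b = Fin.last n
          · subst hb2; rw [hg, mem_g]; simp [hKL.symm, h2, hKL]
          · rw [hg, mem_g]; simp [hb1, hb2, Finset.mem_insert, Finset.mem_erase]
      rw [hgeq, cross_neg x y k hk J h1 h2]; ring
    · have hgK1 : Fin.castSucc k ∈ g J := (hgK J).mpr h1
      have hgL1 : Fin.last n ∉ g J := fun h => (hgL J).mp h h2
      have heq : insert (Fin.last n) ((g J).erase (Fin.castSucc k)) = J := by
        ext b
        by_cases hb1 : b = Fin.last n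
        · subst hb1; simp [h2, hKL.symm]
        · by_cases hb2 : b = Fin.castSucc k
          · subst hb2; simp [Finset.mem_insert, hKL, h1]
          · simp only [Finset.mem_insert, Finset.mem_erase, hb1, hb2, false_or]
            rw [hgO J b hb2 hb1]
            tauto
      have hcn := cross_neg x y k hk (g J) hgK1 hgL1
      rw [heq] at hcn
      rw [hcn]; ring
    · rw [same_side_zero x y k hk J (by tauto),
        same_side_zero x y k hk (g J) (by rw [hgK, hgL]; tauto), add_zero]
  · intro J _ h
    have h2 := hgK J
    rw [h] at h2
    tauto
  · intro J; exact Finset.mem_univ _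
  · intro J
    ext b
    by_cases hb1 : b = Fin.castSucc k
    · subst hb1; rw [hgK, hgK]; tauto
    · by_cases hb2 : b = Fin.last n
      · subst hb2; rw [hgL, hgL]; tauto
      · rw [hgO _ _ hb1 hb2, hgO _ _ hb1 hb2]

end PD5

namespace PD6
open Finset PD PD2 PD3 PD4 PD5

variable {R : Type*} [CommRing R] {m n : ℕ}

def csEmb (n : ℕ) : Fin n ↪ Fin (n+1) := ⟨Fin.castSucc, Fin.castSucc_injective n⟩

theorem last_not_mem_map (J₀ : Finset (Fin n)) : Fin.last n ∉ J₀.map (csEmb n) := by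
  simp only [Finset.mem_map, csEmb, Function.Embedding.coeFn_mk]
  rintro ⟨a, _, ha⟩
  exact (Fin.castSucc_lt_last a).ne ha

theorem mem_map_iff (J₀ : Finset (Fin n)) (j : Fin n) :
    (Fin.castSucc j ∈ J₀.map (csEmb n)) ↔ j ∈ J₀ := by
  simp only [Finset.mem_map, csEmb, Function.Embedding.coeFn_mk]
  constructor
  · rintro ⟨a, ha, h⟩
    rwa [← Fin.castSucc_injective n h]
  · intro h; exact ⟨j, h, rfl⟩

theorem mem_insert_map (J₀ : Finset (Fin n)) (j : Fin n) :
    (Fin.castSucc j ∈ insert (Fin.last n) (J₀.map (csEmb n))) ↔ j ∈ J₀ := by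
  rw [Finset.mem_insert, mem_map_iff]
  simp [(Fin.castSucc_lt_last j).ne]

theorem sum_split (f : Finset (Fin (n+1)) → R) :
    ∑ J : Finset (Fin (n+1)), f J
      = ∑ J₀ : Finset (Fin n),
          (f (insert (Fin.last n) (J₀.map (csEmb n))) + f (J₀.map (csEmb n))) := by
  have hbij : Function.Bijective
      (fun p : Finset (Fin n) × Bool =>
        if p.2 then insert (Fin.last n) (p.1.map (csEmb n)) else p.1.map (csEmb n)) := by
    rw [Fintype.bijective_iff_injective_and_card]
    constructor
    · rintro ⟨J₁, b₁⟩ ⟨J₂, b₂⟩ h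
      simp only at h
      have hb : b₁ = b₂ := by
        by_contra hb
        rcases Bool.eq_false_or_eq_true b₁ with h1 | h1 <;>
          rcases Bool.eq_false_or_eq_true b₂ with h2 | h2 <;>
            subst h1 <;> subst h2 <;> simp_all
        · exact last_not_mem_map J₂ (h ▸ Finset.mem_insert_self _ _)
        · exact last_not_mem_map J₁ (h.symm ▸ Finset.mem_insert_self _ _)
      subst hb
      rcases Bool.eq_false_or_eq_true b₁ with h1 | h1 <;> subst h1 <;> simp only [if_true, if_false, Bool.false_eq_true] at h
      · have h2 : (insert (Fin.last n) (J₁.map (csEmb n))).erase (Fin.last n)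
            = (insert (Fin.last n) (J₂.map (csEmb n))).erase (Fin.last n) := by rw [h]
        rw [Finset.erase_insert (last_not_mem_map J₁),
          Finset.erase_insert (last_not_mem_map J₂)] at h2
        rw [Finset.map_injective _ h2]
      · rw [Finset.map_injective _ h]
    · rw [Fintype.card_prod, Fintype.card_finset, Fintype.card_finset, Fintype.card_bool,
        Fintype.card_fin, Fintype.card_fin, pow_succ]
  rw [← Fintype.sum_bijective _ hbij _ f (fun p => rfl)]
  rw [Fintype.sum_prod_type]
  refine Finset.sum_congr rfl fun J₀ _ => ?_
  rw [Fintype.sum_bool]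
  simp

def Efac (x : Fin (m+1) → R) (y : Fin (n+1) → R) : R :=
  (1 - x (Fin.last m) * x (Fin.last m)) *
    (∏ i : Fin m, (1 - x (Fin.castSucc i) * x (Fin.last m))) *
    ∏ j : Fin n, ((1 - x (Fin.last m) * y (Fin.castSucc j)) * (x (Fin.last m) - y (Fin.castSucc j)))

theorem term_nomem_zero (x : Fin m → R) (y : Fin (n+1) → R) (q : Fin m)
    (h : y (Fin.last n) = x q) (J : Finset (Fin (n+1))) (hL : Fin.last n ∉ J) :
    term x y J = 0 := by
  rw [term]
  apply Finset.prod_eq_zero (Finset.mem_univ (Fin.last n))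
  unfold col
  have hz : ∏ i : Fin m, xf x y J i (Fin.last n) = 0 := by
    apply Finset.prod_eq_zero (Finset.mem_univ q)
    rw [xf, if_neg hL, h, sub_self]
  rw [hz, mul_zero, zero_mul]

theorem term_insert (x : Fin (m+1) → R) (y : Fin (n+1) → R)
    (h : y (Fin.last n) = x (Fin.last m)) (J₀ : Finset (Fin n)) :
    term x y (insert (Fin.last n) (J₀.map (csEmb n)))
      = Efac x y * term (x ∘ Fin.castSucc) (y ∘ Fin.castSucc) J₀ := by
  set J : Finset (Fin (n+1)) := insert (Fin.last n) (J₀.map (csEmb n)) with hJ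
  have hLJ : Fin.last n ∈ J := Finset.mem_insert_self _ _
  have hmem : ∀ j : Fin n, ((Fin.castSucc j ∈ J) ↔ (j ∈ J₀)) := fun j => mem_insert_map J₀ j
  set b := x (Fin.last m) with hb
  -- column L
  have hcolL : col x y J (Fin.last n)
      = ((∏ i : Fin m, (1 - x (Fin.castSucc i) * b)) * (1 - b * b)) *
        ∏ i : Fin n, (if i ∈ J₀ then b - y (Fin.castSucc i) else 1 - y (Fin.castSucc i) * b) := by
    unfold col
    rw [if_pos hLJ, one_mul, prod_lt_last (fun i => wf y J i (Fin.last n))]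
    congr 1
    · rw [Fin.prod_univ_castSucc]
      congr 1
      · exact Finset.prod_congr rfl fun i _ => by rw [xf, if_pos hLJ, h]
      · rw [xf, if_pos hLJ, h]
    · refine Finset.prod_congr rfl fun i _ => ?_
      rw [wf]
      by_cases hi : i ∈ J₀
      · rw [if_pos ((hmem i).mpr hi), if_pos hLJ, if_pos hi, h]
      · rw [if_neg (fun hh => hi ((hmem i).mp hh)), if_pos hLJ, if_neg hi, h]
  -- other columns
  have hcols : ∀ j₀ : Fin n, col x y J (Fin.castSucc j₀)
      = col (x ∘ Fin.castSucc) (y ∘ Fin.castSucc) J₀ j₀ *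
        (if j₀ ∈ J₀ then 1 - b * y (Fin.castSucc j₀) else b - y (Fin.castSucc j₀)) := by
    intro j₀
    unfold col
    have e1 : (if Fin.castSucc j₀ ∈ J then (1:R) else y (Fin.castSucc j₀))
        = (if j₀ ∈ J₀ then 1 else (y ∘ Fin.castSucc) j₀) := by
      simp only [hmem, Function.comp_apply]
    have e2 : (∏ i : Fin (m+1), xf x y J i (Fin.castSucc j₀))
        = (∏ i : Fin m, xf (x ∘ Fin.castSucc) (y ∘ Fin.castSucc) J₀ i j₀) *
          (if j₀ ∈ J₀ then 1 - b * y (Fin.castSucc j₀) else b - y (Fin.castSucc j₀)) := by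
      rw [Fin.prod_univ_castSucc]
      congr 1
      · refine Finset.prod_congr rfl fun i _ => ?_
        unfold xf
        simp [hmem, Function.comp]
      · unfold xf
        simp [hmem, Function.comp]
        rfl
    have e3 : (∏ i ∈ Finset.univ.filter (fun i => i < Fin.castSucc j₀), wf y J i (Fin.castSucc j₀))
        = ∏ i ∈ Finset.univ.filter (fun i => i < j₀),
            wf (y ∘ Fin.castSucc) J₀ i j₀ := by
      rw [prod_lt_castSucc j₀ (fun i => wf y J i (Fin.castSucc j₀))]
      refine Finset.prod_congr rfl fun i _ => ?_
      unfold wf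
      simp [hmem, Function.comp]
    rw [e1, e2, e3]
    simp only [Function.comp_apply]
    ring
  rw [term, Fin.prod_univ_castSucc, hcolL, Finset.prod_congr rfl (fun j₀ _ => hcols j₀),
    Finset.prod_mul_distrib]
  have e4 : (∏ j₀ : Fin n, (if j₀ ∈ J₀ then 1 - b * y (Fin.castSucc j₀) else b - y (Fin.castSucc j₀))) *
      (∏ i : Fin n, (if i ∈ J₀ then b - y (Fin.castSucc i) else 1 - y (Fin.castSucc i) * b))
      = ∏ j : Fin n, ((1 - b * y (Fin.castSucc j)) * (b - y (Fin.castSucc j))) := by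
    rw [← Finset.prod_mul_distrib]
    refine Finset.prod_congr rfl fun j _ => ?_
    by_cases hj : j ∈ J₀
    · rw [if_pos hj, if_pos hj]
    · rw [if_neg hj, if_neg hj]; ring
  calc (∏ j₀ : Fin n, col (x ∘ Fin.castSucc) (y ∘ Fin.castSucc) J₀ j₀) *
        (∏ j₀ : Fin n, (if j₀ ∈ J₀ then 1 - b * y (Fin.castSucc j₀) else b - y (Fin.castSucc j₀))) *
        (((∏ i : Fin m, (1 - x (Fin.castSucc i) * b)) * (1 - b * b)) *
          ∏ i : Fin n, (if i ∈ J₀ then b - y (Fin.castSucc i) else 1 - y (Fin.castSucc i) * b))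
      = ((1 - b * b) * (∏ i : Fin m, (1 - x (Fin.castSucc i) * b)) *
          ((∏ j₀ : Fin n, (if j₀ ∈ J₀ then 1 - b * y (Fin.castSucc j₀) else b - y (Fin.castSucc j₀))) *
           (∏ i : Fin n, (if i ∈ J₀ then b - y (Fin.castSucc i) else 1 - y (Fin.castSucc i) * b)))) *
        (∏ j₀ : Fin n, col (x ∘ Fin.castSucc) (y ∘ Fin.castSucc) J₀ j₀) := by ring
    _ = Efac x y * term (x ∘ Fin.castSucc) (y ∘ Fin.castSucc) J₀ := by
        rw [e4, Efac, term]

theorem lhs_insert (x : Fin (m+1) → R) (y : Fin (n+1) → R)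
    (h : y (Fin.last n) = x (Fin.last m)) :
    lhs (m+1) (n+1) x y = Efac x y * lhs m n (x ∘ Fin.castSucc) (y ∘ Fin.castSucc) := by
  set b := x (Fin.last m) with hb
  have hδ : (if m+1 = n+1 then (1:R) else 0) = (if m = n then (1:R) else 0) := by
    have : (m+1 = n+1) ↔ (m = n) := by omega
    simp only [this]
  have hsq : (∏ j : Fin (n+1), (1 - y j ^ 2))
      = (∏ j : Fin n, (1 - (y ∘ Fin.castSucc) j ^ 2)) * (1 - b * b) := by
    rw [Fin.prod_univ_castSucc, h]
    congr 1
    rw [sq]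
  have hX : (∏ j : Fin (m+1), ∏ i ∈ Finset.univ.filter (fun i => i < j), (1 - x i * x j))
      = (∏ j : Fin m, ∏ i ∈ Finset.univ.filter (fun i => i < j),
          (1 - (x ∘ Fin.castSucc) i * (x ∘ Fin.castSucc) j)) *
        ∏ i : Fin m, (1 - x (Fin.castSucc i) * b) := by
    rw [Fin.prod_univ_castSucc]
    congr 1
    · refine Finset.prod_congr rfl fun j _ => ?_
      rw [prod_lt_castSucc j (fun i => 1 - x i * x (Fin.castSucc j))]
      rfl
    · rw [prod_lt_last (fun i => 1 - x i * x (Fin.last m))]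
  have hY : (∏ j : Fin (n+1), ∏ i ∈ Finset.univ.filter (fun i => i < j),
        ((1 - y i * y j) * (y j - y i)))
      = (∏ j : Fin n, ∏ i ∈ Finset.univ.filter (fun i => i < j),
          ((1 - (y ∘ Fin.castSucc) i * (y ∘ Fin.castSucc) j) *
            ((y ∘ Fin.castSucc) j - (y ∘ Fin.castSucc) i))) *
        ∏ i : Fin n, ((1 - b * y (Fin.castSucc i)) * (b - y (Fin.castSucc i))) := by
    rw [Fin.prod_univ_castSucc]
    congr 1
    · refine Finset.prod_congr rfl fun j _ => ?_
      rw [prod_lt_castSucc j (fun i => (1 - y i * y (Fin.castSucc j)) * (y (Fin.castSucc j) - y i))]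
      rfl
    · rw [prod_lt_last (fun i => (1 - y i * y (Fin.last n)) * (y (Fin.last n) - y i)), h]
      exact Finset.prod_congr rfl fun i _ => by ring
  rw [lhs, lhs, hδ, hsq, hX, hY, Efac]
  ring

theorem term_permx (σ : Equiv.Perm (Fin m)) (x : Fin m → R) (y : Fin n → R)
    (J : Finset (Fin n)) : term (x ∘ σ) y J = term x y J := by
  unfold term col
  refine Finset.prod_congr rfl fun j _ => ?_
  congr 1
  congr 1
  exact Equiv.prod_comp σ (fun i => xf x y J i j)

theorem rhs_permx (σ : Equiv.Perm (Fin m)) (x : Fin m → R) (y : Fin n → R) :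
    rhs (x ∘ σ) y = rhs x y := by
  unfold rhs
  exact Finset.sum_congr rfl fun J _ => term_permx σ x y J

theorem lhs_permx (σ : Equiv.Perm (Fin m)) (x : Fin m → R) (y : Fin n → R) :
    lhs m n (x ∘ σ) y = lhs m n x y := by
  unfold lhs
  congr 2
  exact triangle_perm (fun i j => 1 - x i * x j) (fun i j => by ring) σ

theorem lhs_zero_of_sq (x : Fin m → R) (y : Fin (n+1) → R)
    (hu : y (Fin.last n) * y (Fin.last n) = 1) : lhs m (n+1) x y = 0 := by
  rw [lhs]
  have hz : (∏ j : Fin (n+1), (1 - y j ^ 2)) = 0 := by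
    apply Finset.prod_eq_zero (Finset.mem_univ (Fin.last n))
    rw [sq, hu, sub_self]
  rw [hz, mul_zero, zero_mul]

theorem lhs_zero_of_eq (x : Fin m → R) (y : Fin (n+1) → R) (k : Fin n)
    (hk : y (Fin.castSucc k) = y (Fin.last n)) : lhs m (n+1) x y = 0 := by
  rw [lhs]
  have hz : (∏ j : Fin (n+1), ∏ i ∈ Finset.univ.filter (fun i => i < j),
      ((1 - y i * y j) * (y j - y i))) = 0 := by
    apply Finset.prod_eq_zero (Finset.mem_univ (Fin.last n))
    apply Finset.prod_eq_zero
      (show Fin.castSucc k ∈ Finset.univ.filter (fun i => i < Fin.last n) by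
        simp [Fin.castSucc_lt_last])
    rw [hk, sub_self, mul_zero]
  rw [hz, mul_zero, mul_zero]

theorem L5 (x : Fin (m+1) → R) (y : Fin (n+1) → R)
    (h : y (Fin.last n) = x (Fin.last m))
    (IH : lhs m n (x ∘ Fin.castSucc) (y ∘ Fin.castSucc)
        = rhs (x ∘ Fin.castSucc) (y ∘ Fin.castSucc)) :
    lhs (m+1) (n+1) x y = rhs x y := by
  rw [lhs_insert x y h, IH]
  unfold rhs
  rw [sum_split (term x y)]
  have hsum : ∑ J₀ : Finset (Fin n),
        (term x y (insert (Fin.last n) (J₀.map (csEmb n))) + term x y (J₀.map (csEmb n)))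
      = ∑ J₀ : Finset (Fin n), Efac x y * term (x ∘ Fin.castSucc) (y ∘ Fin.castSucc) J₀ :=
    Finset.sum_congr rfl (fun J₀ _ => by
      rw [term_insert x y h J₀,
        term_nomem_zero x y (Fin.last m) h (J₀.map (csEmb n)) (last_not_mem_map J₀), add_zero])
  rw [hsum, ← Finset.mul_sum]

end PD6

namespace PD7
open Finset PD PD2 Polynomial

variable {S : Type*} [CommRing S] {m n : ℕ}

def XP (a : Fin m → S) : Fin m → Polynomial S := fun i => C (a i)

def YP (c : Fin n → S) : Fin (n+1) → Polynomial S :=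
  fun j => if h : j = Fin.last n then X else C (c (j.castPred h))

theorem YP_cast (c : Fin n → S) (j : Fin n) : YP c (Fin.castSucc j) = C (c j) := by
  rw [YP, dif_neg (Fin.castSucc_lt_last j).ne, Fin.castPred_castSucc]

theorem YP_last (c : Fin n → S) : YP c (Fin.last n) = X := by rw [YP, dif_pos rfl]

theorem YP_ne_last (c : Fin n → S) {i : Fin (n+1)} (h : i ≠ Fin.last n) :
    YP c i = C (c (i.castPred h)) := dif_neg h

theorem card_filter_lt_last :
    (Finset.univ.filter (fun i : Fin (n+1) => i < Fin.last n)).card = n := by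
  rw [show Finset.univ.filter (fun i : Fin (n+1) => i < Fin.last n)
      = Finset.univ.map ⟨Fin.castSucc, Fin.castSucc_injective n⟩ from ?_]
  · rw [Finset.card_map, Finset.card_univ, Fintype.card_fin]
  · ext i
    simp only [Finset.mem_filter, Finset.mem_univ, true_and, Finset.mem_map,
      Function.Embedding.coeFn_mk]
    constructor
    · intro h
      exact ⟨i.castPred h.ne, by simp⟩
    · rintro ⟨b, rfl⟩
      exact Fin.castSucc_lt_last b

theorem nd_mul3 (p q r : Polynomial S) :
    natDegree (p * q * r) ≤ natDegree p + natDegree q + natDegree r :=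
  le_trans natDegree_mul_le (Nat.add_le_add_right natDegree_mul_le _)

theorem deg_col_cast (a : Fin m → S) (c : Fin n → S) (J : Finset (Fin (n+1))) (j₀ : Fin n) :
    natDegree (col (XP a) (YP c) J (Fin.castSucc j₀)) = 0 := by
  refine Nat.le_zero.mp ?_
  refine le_trans (nd_mul3 _ _ _) ?_
  have h1 : natDegree (if Fin.castSucc j₀ ∈ J then (1 : Polynomial S)
      else YP c (Fin.castSucc j₀)) ≤ 0 := by
    rw [YP_cast]; split_ifs <;> simp
  have h2 : natDegree (∏ i : Fin m, xf (XP a) (YP c) J i (Fin.castSucc j₀)) ≤ 0 := by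
    refine le_trans (natDegree_prod_le _ _) ?_
    rw [Nat.le_zero]
    refine Finset.sum_eq_zero fun i _ => Nat.le_zero.mp ?_
    simp only [xf, XP, YP_cast]
    split_ifs <;> compute_degree
  have h3 : natDegree (∏ i ∈ Finset.univ.filter (fun i => i < Fin.castSucc j₀),
      wf (YP c) J i (Fin.castSucc j₀)) ≤ 0 := by
    refine le_trans (natDegree_prod_le _ _) ?_
    rw [Nat.le_zero]
    refine Finset.sum_eq_zero fun i hi => Nat.le_zero.mp ?_
    have hilt : i < Fin.castSucc j₀ := by simpa using hi
    have hne : i ≠ Fin.last n := (hilt.trans (Fin.castSucc_lt_last j₀)).ne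
    simp only [wf, YP_cast, YP_ne_last c hne]
    split_ifs <;> compute_degree
  omega

theorem deg_col_last (a : Fin m → S) (c : Fin n → S) (J : Finset (Fin (n+1))) :
    natDegree (col (XP a) (YP c) J (Fin.last n)) ≤ 1 + m + n := by
  refine le_trans (nd_mul3 _ _ _) ?_
  have h1 : natDegree (if Fin.last n ∈ J then (1 : Polynomial S) else YP c (Fin.last n)) ≤ 1 := by
    rw [YP_last]; split_ifs
    · simp
    · exact Polynomial.natDegree_X_le
  have h2 : natDegree (∏ i : Fin m, xf (XP a) (YP c) J i (Fin.last n)) ≤ m := by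
    refine le_trans (natDegree_prod_le _ _) ?_
    have : ∀ i ∈ Finset.univ, natDegree (xf (XP a) (YP c) J i (Fin.last n)) ≤ 1 := by
      intro i _
      simp only [xf, XP, YP_last]
      split_ifs <;> compute_degree
    refine le_trans (Finset.sum_le_sum this) ?_
    simp
  have h3 : natDegree (∏ i ∈ Finset.univ.filter (fun i => i < Fin.last n),
      wf (YP c) J i (Fin.last n)) ≤ n := by
    refine le_trans (natDegree_prod_le _ _) ?_
    have hb : ∀ i ∈ Finset.univ.filter (fun i => i < Fin.last n),
        natDegree (wf (YP c) J i (Fin.last n)) ≤ 1 := by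
      intro i hi
      have hilt : i < Fin.last n := by simpa using hi
      simp only [wf, YP_last, YP_ne_last c hilt.ne]
      split_ifs <;> compute_degree
    refine le_trans (Finset.sum_le_sum hb) ?_
    rw [Finset.sum_const, smul_eq_mul, mul_one, card_filter_lt_last]
  omega

theorem deg_term (a : Fin m → S) (c : Fin n → S) (J : Finset (Fin (n+1))) :
    natDegree (term (XP a) (YP c) J) ≤ m + n + 1 := by
  refine le_trans (natDegree_prod_le _ _) ?_
  rw [Fin.sum_univ_castSucc]
  have h1 : ∑ j₀ : Fin n, natDegree (col (XP a) (YP c) J (Fin.castSucc j₀)) = 0 :=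
    Finset.sum_eq_zero fun j₀ _ => deg_col_cast a c J j₀
  rw [h1, zero_add]
  have := deg_col_last a c J
  omega

theorem deg_rhs (a : Fin m → S) (c : Fin n → S) :
    natDegree (rhs (XP a) (YP c)) ≤ m + n + 1 := by
  rw [rhs]
  exact natDegree_sum_le_of_forall_le _ _ fun J _ => deg_term a c J

theorem deg_lhs (a : Fin m → S) (c : Fin n → S) :
    natDegree (lhs m (n+1) (XP a) (YP c)) ≤ m + n + 1 := by
  by_cases hmn : m = n + 1
  · rw [lhs, if_pos hmn, one_mul]
    refine le_trans natDegree_mul_le ?_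
    have h1 : natDegree (∏ j : Fin (n+1), (1 - YP c j ^ 2)) ≤ 2 := by
      refine le_trans (natDegree_prod_le _ _) ?_
      rw [Fin.sum_univ_castSucc]
      have e1 : ∑ j₀ : Fin n, natDegree (1 - YP c (Fin.castSucc j₀) ^ 2) = 0 := by
        refine Finset.sum_eq_zero fun j₀ _ => Nat.le_zero.mp ?_
        rw [YP_cast]
        compute_degree
      have e2 : natDegree (1 - YP c (Fin.last n) ^ 2) ≤ 2 := by
        rw [YP_last]; compute_degree
      omega
    have h2 : natDegree ((∏ j : Fin m, ∏ i ∈ Finset.univ.filter (fun i => i < j),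
          (1 - XP a i * XP a j)) *
        ∏ j : Fin (n+1), ∏ i ∈ Finset.univ.filter (fun i => i < j),
          ((1 - YP c i * YP c j) * (YP c j - YP c i))) ≤ m + n - 1 := by
      refine le_trans natDegree_mul_le ?_
      have hx : natDegree (∏ j : Fin m, ∏ i ∈ Finset.univ.filter (fun i => i < j),
          (1 - XP a i * XP a j)) = 0 := by
        refine Nat.le_zero.mp (le_trans (natDegree_prod_le _ _) ?_)
        rw [Nat.le_zero]
        refine Finset.sum_eq_zero fun j _ => Nat.le_zero.mp
          (le_trans (natDegree_prod_le _ _) ?_)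
        rw [Nat.le_zero]
        refine Finset.sum_eq_zero fun i _ => Nat.le_zero.mp ?_
        simp only [XP]
        compute_degree
      have hy : natDegree (∏ j : Fin (n+1), ∏ i ∈ Finset.univ.filter (fun i => i < j),
          ((1 - YP c i * YP c j) * (YP c j - YP c i))) ≤ 2 * n := by
        refine le_trans (natDegree_prod_le _ _) ?_
        rw [Fin.sum_univ_castSucc]
        have e1 : ∑ j₀ : Fin n, natDegree (∏ i ∈ Finset.univ.filter
            (fun i => i < Fin.castSucc j₀),
            ((1 - YP c i * YP c (Fin.castSucc j₀)) * (YP c (Fin.castSucc j₀) - YP c i))) = 0 := by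
          refine Finset.sum_eq_zero fun j₀ _ => Nat.le_zero.mp
            (le_trans (natDegree_prod_le _ _) ?_)
          rw [Nat.le_zero]
          refine Finset.sum_eq_zero fun i hi => Nat.le_zero.mp ?_
          have hilt : i < Fin.castSucc j₀ := by simpa using hi
          have hne : i ≠ Fin.last n := (hilt.trans (Fin.castSucc_lt_last j₀)).ne
          rw [YP_cast, YP_ne_last c hne]
          compute_degree
        have e2 : natDegree (∏ i ∈ Finset.univ.filter (fun i => i < Fin.last n),
            ((1 - YP c i * YP c (Fin.last n)) * (YP c (Fin.last n) - YP c i))) ≤ 2 * n := by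
          refine le_trans (natDegree_prod_le _ _) ?_
          have hb : ∀ i ∈ Finset.univ.filter (fun i => i < Fin.last n),
              natDegree ((1 - YP c i * YP c (Fin.last n)) * (YP c (Fin.last n) - YP c i)) ≤ 2 := by
            intro i hi
            have hilt : i < Fin.last n := by simpa using hi
            rw [YP_last, YP_ne_last c hilt.ne]
            compute_degree
          refine le_trans (Finset.sum_le_sum hb) ?_
          rw [Finset.sum_const, smul_eq_mul, card_filter_lt_last]
          omega
        omega
      omega
    omega
  · rw [lhs, if_neg hmn, zero_mul, zero_mul, natDegree_zero]
    omega

end PD7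


set_option maxHeartbeats 1000000
set_option synthInstance.maxHeartbeats 100000

namespace PD8
open Finset PD PD2 PD3 PD4 PD5 PD6 PD7 Polynomial

/-- The key polynomial identity over a field, proved by counting roots. -/
theorem keyPoly {K : Type*} [Field K] {m n' : ℕ} (xx : Fin m → K) (cc : Fin n' → K)
    (hdist : Function.Injective
      (Sum.elim (Sum.elim cc xx) (fun b : Bool => if b then (1 : K) else -1)))
    (hpar : m % 2 = (n' + 1) % 2)
    (hval : ∀ (m'' : ℕ), m'' ≤ n' → m'' % 2 = n' % 2 →
      ∀ (x : Fin m'' → K) (y : Fin n' → K), lhs m'' n' x y = rhs x y)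
    (hm : m ≤ n' + 1) :
    lhs m (n'+1) (XP xx) (YP cc) = rhs (XP xx) (YP cc) := by
  rw [← sub_eq_zero]
  set yr : K → Fin (n'+1) → K :=
    fun r j => if h : j = Fin.last n' then r else cc (j.castPred h) with hyr
  have yrl : ∀ r, yr r (Fin.last n') = r := fun r => dif_pos rfl
  have yrc : ∀ r (k : Fin n'), yr r (Fin.castSucc k) = cc k := by
    intro r k
    show (if h : Fin.castSucc k = Fin.last n' then r
        else cc ((Fin.castSucc k).castPred h)) = cc k
    rw [dif_neg (Fin.castSucc_lt_last k).ne, Fin.castPred_castSucc]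
  have heval : ∀ r : K, eval r (lhs m (n'+1) (XP xx) (YP cc) - rhs (XP xx) (YP cc))
      = lhs m (n'+1) xx (yr r) - rhs xx (yr r) := by
    intro r
    rw [Polynomial.eval_sub]
    have h1 := map_lhs (Polynomial.evalRingHom r) (XP xx) (YP cc)
    have h2 := map_rhs (Polynomial.evalRingHom r) (XP xx) (YP cc)
    have e1 : (⇑(Polynomial.evalRingHom r)) ∘ (XP xx) = xx := by
      funext i
      simp [XP]
    have e2 : (⇑(Polynomial.evalRingHom r)) ∘ (YP cc) = yr r := by
      funext j
      by_cases hj : j = Fin.last n'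
      · subst hj
        simp [YP_last, yrl]
      · simp [YP_ne_last _ hj, hyr, hj]
    rw [e1, e2] at h1 h2
    rw [Polynomial.coe_evalRingHom] at h1 h2
    rw [h1, h2]
  apply Polynomial.eq_zero_of_natDegree_lt_card_of_eval_eq_zero _ hdist
  · rintro ((k | q) | b)
    · -- root cc k
      simp only [Sum.elim_inl]
      rw [heval (cc k)]
      have hk : yr (cc k) (Fin.castSucc k) = yr (cc k) (Fin.last n') := by
        rw [yrc, yrl]
      rw [lhs_zero_of_eq xx _ k hk, L3 xx _ k hk, sub_self]
    · -- root xx q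
      simp only [Sum.elim_inl, Sum.elim_inr]
      rw [heval (xx q)]
      obtain ⟨m'', rfl⟩ : ∃ m'', m = m'' + 1 := ⟨m - 1, by have := q.2; omega⟩
      set σ : Equiv.Perm (Fin (m''+1)) := Equiv.swap q (Fin.last m'') with hσ
      have hy : (yr (xx q)) (Fin.last n') = (xx ∘ σ) (Fin.last m'') := by
        rw [yrl]
        simp [hσ, Equiv.swap_apply_right]
      have hsmall := hval m'' (by omega) (by omega)
        ((xx ∘ σ) ∘ Fin.castSucc) ((yr (xx q)) ∘ Fin.castSucc)
      have hL5 := L5 (xx ∘ σ) (yr (xx q)) hy hsmall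
      rw [lhs_permx σ, rhs_permx σ] at hL5
      rw [hL5, sub_self]
    · -- roots ±1
      simp only [Sum.elim_inr]
      cases b
      · rw [if_neg (by simp)]
        rw [heval (-1)]
        rw [lhs_zero_of_sq xx _ (by rw [yrl]; ring),
          L12 xx _ (by rw [yrl]; ring) (by omega), sub_self]
      · rw [if_pos rfl]
        rw [heval 1]
        rw [lhs_zero_of_sq xx _ (by rw [yrl]; ring),
          L12 xx _ (by rw [yrl]; ring) (by omega), sub_self]
  · have d1 := deg_lhs xx cc
    have d2 := deg_rhs xx cc
    have d3 : natDegree (lhs m (n'+1) (XP xx) (YP cc) - rhs (XP xx) (YP cc)) ≤ m + n' + 1 :=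
      le_trans (Polynomial.natDegree_sub_le _ _) (max_le d1 d2)
    have hcard : Fintype.card ((Fin n' ⊕ Fin m) ⊕ Bool) = n' + m + 2 := by
      simp
    omega

theorem main : ∀ (n m : ℕ), m ≤ n → m % 2 = n % 2 →
    lhs m n (Xv m n) (Yv m n) = rhs (Xv m n) (Yv m n) := by
  intro n
  induction n with
  | zero =>
    intro m hm _
    have hm0 : m = 0 := Nat.le_zero.mp hm
    subst hm0
    have huniv : (Finset.univ : Finset (Finset (Fin 0))) = {∅} := by decide
    rw [lhs, rhs, huniv, Finset.sum_singleton, term]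
    simp
  | succ n' IH =>
    intro m hm hpar
    set xx : Fin m → FractionRing (MvPolynomial (Fin m ⊕ Fin n') ℤ) :=
      fun i => algebraMap (MvPolynomial (Fin m ⊕ Fin n') ℤ) _ (MvPolynomial.X (Sum.inl i))
      with hxx
    set cc : Fin n' → FractionRing (MvPolynomial (Fin m ⊕ Fin n') ℤ) :=
      fun j => algebraMap (MvPolynomial (Fin m ⊕ Fin n') ℤ) _ (MvPolynomial.X (Sum.inr j))
      with hcc
    have φinj : Function.Injective (algebraMap (MvPolynomial (Fin m ⊕ Fin n') ℤ)
        (FractionRing (MvPolynomial (Fin m ⊕ Fin n') ℤ))) :=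
      IsFractionRing.injective _ _
    -- distinctness of the roots
    have hXC : ∀ (s : Fin m ⊕ Fin n') (z : ℤ), z ≠ 0 →
        algebraMap (MvPolynomial (Fin m ⊕ Fin n') ℤ)
          (FractionRing (MvPolynomial (Fin m ⊕ Fin n') ℤ)) (MvPolynomial.X s)
          ≠ (z : FractionRing (MvPolynomial (Fin m ⊕ Fin n') ℤ)) := by
      intro s z hz h
      have h2 : (MvPolynomial.X s : MvPolynomial (Fin m ⊕ Fin n') ℤ) = (z : _) := by
        apply φinj
        rw [h, map_intCast]
      have h3 := congrArg MvPolynomial.constantCoeff h2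
      rw [MvPolynomial.constantCoeff_X, map_intCast] at h3
      exact hz (by exact_mod_cast h3.symm)
    have hXX : ∀ s t : Fin m ⊕ Fin n',
        algebraMap (MvPolynomial (Fin m ⊕ Fin n') ℤ)
            (FractionRing (MvPolynomial (Fin m ⊕ Fin n') ℤ)) (MvPolynomial.X s)
          = algebraMap (MvPolynomial (Fin m ⊕ Fin n') ℤ)
            (FractionRing (MvPolynomial (Fin m ⊕ Fin n') ℤ)) (MvPolynomial.X t) → s = t :=
      fun s t h => MvPolynomial.X_injective (φinj h)
    have hne1 : ∀ s : Fin m ⊕ Fin n',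
        algebraMap (MvPolynomial (Fin m ⊕ Fin n') ℤ)
          (FractionRing (MvPolynomial (Fin m ⊕ Fin n') ℤ)) (MvPolynomial.X s) ≠ 1 :=
      fun s h => hXC s 1 (by decide) (by rw [h]; simp)
    have hnem1 : ∀ s : Fin m ⊕ Fin n',
        algebraMap (MvPolynomial (Fin m ⊕ Fin n') ℤ)
          (FractionRing (MvPolynomial (Fin m ⊕ Fin n') ℤ)) (MvPolynomial.X s) ≠ -1 :=
      fun s h => hXC s (-1) (by decide) (by rw [h]; simp)
    have h1m1 : (1 : FractionRing (MvPolynomial (Fin m ⊕ Fin n') ℤ)) ≠ -1 := by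
      intro h
      have h2 : (1 : MvPolynomial (Fin m ⊕ Fin n') ℤ) = -1 := by
        apply φinj
        simpa using h
      have h3 := congrArg MvPolynomial.constantCoeff h2
      simp only [map_one, map_neg] at h3
      exact absurd h3 (by decide)
    have hdist : Function.Injective
        (Sum.elim (Sum.elim cc xx)
          (fun b : Bool => if b then (1 : FractionRing (MvPolynomial (Fin m ⊕ Fin n') ℤ))
            else -1)) := by
      rintro ((k | q) | b) ((k' | q') | b') h <;>
        simp only [Sum.elim_inl, Sum.elim_inr, hxx, hcc] at h
      · have h2 := hXX _ _ h
        rw [Sum.inr.injEq] at h2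
        rw [h2]
      · exact absurd (hXX _ _ h) (by simp)
      · cases b' <;> simp only [if_true, if_false, Bool.false_eq_true] at h
        · exact absurd h (hnem1 _)
        · exact absurd h (hne1 _)
      · exact absurd (hXX _ _ h) (by simp)
      · have h2 := hXX _ _ h
        rw [Sum.inl.injEq] at h2
        rw [h2]
      · cases b' <;> simp only [if_true, if_false, Bool.false_eq_true] at h
        · exact absurd h (hnem1 _)
        · exact absurd h (hne1 _)
      · cases b <;> simp only [if_true, if_false, Bool.false_eq_true] at h
        · exact absurd h.symm (hnem1 _)
        · exact absurd h.symm (hne1 _)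
      · cases b <;> simp only [if_true, if_false, Bool.false_eq_true] at h
        · exact absurd h.symm (hnem1 _)
        · exact absurd h.symm (hne1 _)
      · cases b <;> cases b' <;> simp only [if_true, if_false, Bool.false_eq_true] at h ⊢
        · exact absurd h.symm h1m1
        · exact absurd h h1m1
    -- value-level induction hypothesis
    have hval : ∀ (m'' : ℕ), m'' ≤ n' → m'' % 2 = n' % 2 →
        ∀ (x : Fin m'' → FractionRing (MvPolynomial (Fin m ⊕ Fin n') ℤ))
          (y : Fin n' → FractionRing (MvPolynomial (Fin m ⊕ Fin n') ℤ)),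
          lhs m'' n' x y = rhs x y := by
      intro m'' h1 h2 x y
      have hpoly := IH m'' h1 h2
      have hmapped := congrArg (MvPolynomial.aeval (R := ℤ) (Sum.elim x y)).toRingHom hpoly
      rw [map_lhs _, map_rhs _] at hmapped
      have e1 : (⇑(MvPolynomial.aeval (R := ℤ) (Sum.elim x y)).toRingHom) ∘ (Xv m'' n') = x := by
        funext i
        simp [Xv]
      have e2 : (⇑(MvPolynomial.aeval (R := ℤ) (Sum.elim x y)).toRingHom) ∘ (Yv m'' n') = y := by
        funext j
        simp [Yv]
      rwa [e1, e2] at hmapped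
    have hKey := keyPoly xx cc hdist hpar hval hm
    -- transfer through ψ
    set v : (Fin m ⊕ Fin (n'+1)) →
        Polynomial (FractionRing (MvPolynomial (Fin m ⊕ Fin n') ℤ)) :=
      Sum.elim (XP xx) (YP cc) with hv
    set ψ : MvPolynomial (Fin m ⊕ Fin (n'+1)) ℤ →+*
        Polynomial (FractionRing (MvPolynomial (Fin m ⊕ Fin n') ℤ)) :=
      MvPolynomial.eval₂Hom (Int.castRingHom _) v with hψ
    set v0 : (Fin m ⊕ Fin (n'+1)) → Polynomial (MvPolynomial (Fin m ⊕ Fin n') ℤ) :=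
      Sum.elim (fun i => Polynomial.C (MvPolynomial.X (Sum.inl i)))
        (YP (fun j => MvPolynomial.X (Sum.inr j))) with hv0
    set ψ₀ : MvPolynomial (Fin m ⊕ Fin (n'+1)) ℤ →+*
        Polynomial (MvPolynomial (Fin m ⊕ Fin n') ℤ) :=
      MvPolynomial.eval₂Hom (Int.castRingHom _) v0 with hψ₀
    set χ : Polynomial (MvPolynomial (Fin m ⊕ Fin n') ℤ) →+*
        MvPolynomial (Fin m ⊕ Fin (n'+1)) ℤ :=
      Polynomial.eval₂RingHom (MvPolynomial.rename (Sum.map id Fin.castSucc)).toRingHom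
        (MvPolynomial.X (Sum.inr (Fin.last n'))) with hχ
    have hleft : χ.comp ψ₀ = RingHom.id _ := by
      apply MvPolynomial.ringHom_ext
      · intro r
        simp [map_intCast, eq_intCast]
      · rintro (i | j)
        · simp [hψ₀, hχ, hv0]
        · by_cases hj : j = Fin.last n'
          · subst hj
            simp [hψ₀, hχ, hv0, YP_last]
          · simp [hψ₀, hχ, hv0, YP_ne_last _ hj, Fin.castSucc_castPred]
    have hψ₀inj : Function.Injective ψ₀ := by
      intro p q hpq
      have h2 := congrArg χ hpq
      rwa [← RingHom.comp_apply, ← RingHom.comp_apply, hleft, RingHom.id_apply,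
        RingHom.id_apply] at h2
    have hcomp : ψ = (Polynomial.mapRingHom (algebraMap (MvPolynomial (Fin m ⊕ Fin n') ℤ)
        (FractionRing (MvPolynomial (Fin m ⊕ Fin n') ℤ)))).comp ψ₀ := by
      apply MvPolynomial.ringHom_ext
      · intro r
        simp [map_intCast]
      · rintro (i | j)
        · simp [hψ, hψ₀, hv, hv0, XP, hxx]
        · by_cases hj : j = Fin.last n'
          · subst hj
            simp [hψ, hψ₀, hv, hv0, YP_last]
          · simp [hψ, hψ₀, hv, hv0, YP_ne_last _ hj, hcc]
    have hψinj : Function.Injective ψ := by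
      rw [hcomp]
      intro p q hpq
      exact hψ₀inj (Polynomial.map_injective _ φinj hpq)
    apply hψinj
    have ex : (⇑ψ) ∘ (Xv m (n'+1)) = XP xx := by
      funext i
      simp only [Function.comp_apply, Xv, hψ, MvPolynomial.eval₂Hom_X', hv, Sum.elim_inl]
    have ey : (⇑ψ) ∘ (Yv m (n'+1)) = YP cc := by
      funext j
      simp only [Function.comp_apply, Yv, hψ, MvPolynomial.eval₂Hom_X', hv, Sum.elim_inr]
    rw [map_lhs ψ, map_rhs ψ, ex, ey, hKey]

end PD8


/-- Proposition D.1 of the paper: for `n ≥ 2`, `0 ≤ m ≤ n`, `m ≡ n (mod 2)`,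
`δ_{m,n} ∏_{j=1}^n (1−y_j²) F^{(m,n)}
  = Σ_{J_1⊔J_2={1,…,n}} (−1)^{δ(J_1,J_2)} (∏_{j∈J_2} y_j) G^{(m,n)}_{J_1,J_2}`. -/
theorem statement6 (m n : ℕ) (hn : 2 ≤ n) (hm : m ≤ n) (hpar : m % 2 = n % 2) :
    (if m = n then 1 else 0 : MvPolynomial (Fin m ⊕ Fin n) ℤ) *
        (∏ j : Fin n, (1 - Yv m n j ^ 2)) * Fpoly m n
      = ∑ J : Finset (Fin n),
          (-1) ^ ddelta n J * (∏ j ∈ Jᶜ, Yv m n j) * Gpoly m n J := by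
  have h1 : Fpoly m n
      = (∏ j : Fin m, ∏ i ∈ Finset.univ.filter (fun i => i < j), (1 - Xv m n i * Xv m n j)) *
        ∏ j : Fin n, ∏ i ∈ Finset.univ.filter (fun i => i < j),
          ((1 - Yv m n i * Yv m n j) * (Yv m n j - Yv m n i)) := by
    rw [Fpoly, PD.triangle_comm, PD.triangle_comm]
  have h2 : ∀ J : Finset (Fin n),
      (-1 : MvPolynomial (Fin m ⊕ Fin n) ℤ) ^ ddelta n J * (∏ j ∈ Jᶜ, Yv m n j) * Gpoly m n J
        = PD2.term (Xv m n) (Yv m n) J := fun J => PD2.term_eq (Xv m n) (Yv m n) J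
  rw [h1, Finset.sum_congr rfl (fun J _ => h2 J)]
  exact PD8.main n m hm hpar

end
end

section
/- Suppose m, n ≥ 1 and m ≡ n (mod 2). Then in ℤ[x_1,…,x_m,y_1,…,y_n]: R^{(m,n)} = det( y_i^{j−1} · ∏_{k=1}^{m}(1−x_k y_i) − y_i^{n−j+1} · ∏_{k=1}^{m}(y_i−x_k) )_{1≤i,j≤n}, where R^{(m,n)} := Σ_{J_1 ⊔ J_2 = {1,…,n}} (−1)^{δ(J_1,J_2)} · (∏_{j∈J_2} y_j) · G^{(m,n)}_{J_1,J_2}. -/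
/- Setting: the polynomial ring ℤ[x_1,…,x_m,y_1,…,y_n], realized as
`MvPolynomial (Fin m ⊕ Fin n) ℤ` with `Xv i = x_{i+1}` and `Yv j = y_{j+1}`.
For a partition `{1,…,n} = J_1 ⊔ J_2` (encoded by `J = J_1`, `Jᶜ = J_2`):
`Fpoly = ∏_{i<j≤m}(1−x_ix_j) ∏_{i<j≤n}(1−y_iy_j)(y_j−y_i)`,
`Gpoly J = ∏_{i≤m,j∈J_1}(1−x_iy_j) ∏_{i≤m,j∈J_2}(x_i−y_j) ∏_{i<j∈J_1}(y_j−y_i)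
           ∏_{i∈J_1,j∈J_2}(1−y_iy_j) ∏_{i<j∈J_2}(y_i−y_j)`,
`ddelta J = #{(i,j) ∈ J_1×J_2 : i < j}`. -/

noncomputable section

section AuxLemmas

variable {K : Type*} [Field K] {n : ℕ}

lemma neg_one_pow_congr_aux {a b : ℕ} (h : a % 2 = b % 2) : (-1 : K) ^ a = (-1 : K) ^ b := by
  conv_lhs => rw [← Nat.div_add_mod a 2]
  conv_rhs => rw [← Nat.div_add_mod b 2]
  rw [h, pow_add, pow_add, pow_mul, pow_mul, neg_one_sq, one_pow, one_pow]

lemma card_prod_filter_lt (A B : Finset (Fin n)) :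
    ((A ×ˢ B).filter (fun p => p.1 < p.2)).card
      = ∑ i ∈ A, (B.filter (fun j => i < j)).card := by
  rw [Finset.card_filter, Finset.sum_product]
  exact Finset.sum_congr rfl fun i _ => (Finset.card_filter _ _).symm

lemma dd_card (J : Finset (Fin n)) :
    ddelta n J + ∑ i ∈ Jᶜ, (J.filter (fun j => i < j)).card = J.card * Jᶜ.card := by
  classical
  have h3 : ((J ×ˢ Jᶜ).filter (fun p => ¬ p.1 < p.2))
      = ((J ×ˢ Jᶜ).filter (fun p => p.2 < p.1)) := by
    apply Finset.filter_congr
    intro p hp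
    rw [Finset.mem_product] at hp
    have hne : p.2 ≠ p.1 := fun h => (Finset.mem_compl.mp hp.2) (h ▸ hp.1)
    exact ⟨fun h => lt_of_le_of_ne (not_lt.mp h) hne, fun h => asymm h⟩
  have h4 := Finset.card_filter_add_card_filter_not
    (s := J ×ˢ Jᶜ) (p := fun p => p.1 < p.2)
  rw [h3] at h4
  have h5 : ((J ×ˢ Jᶜ).filter (fun p => p.2 < p.1)).card
      = ((Jᶜ ×ˢ J).filter (fun p => p.1 < p.2)).card := by
    apply Finset.card_bij' (fun p _ => Prod.swap p) (fun p _ => Prod.swap p)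
    · intro p hp
      simp only [Finset.mem_filter, Finset.mem_product] at *
      exact ⟨⟨hp.1.2, hp.1.1⟩, hp.2⟩
    · intro p hp
      simp only [Finset.mem_filter, Finset.mem_product] at *
      exact ⟨⟨hp.1.2, hp.1.1⟩, hp.2⟩
    · intro p _; simp
    · intro p _; simp
  rw [card_prod_filter_lt] at h5
  have h6 := Finset.card_product J Jᶜ
  unfold ddelta
  omega

lemma prod_pair_mul (d : Fin n → K) :
    ∏ i : Fin n, ∏ j ∈ Finset.Ioi i, (d i * d j) = ∏ k : Fin n, d k ^ (n - 1) := by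
  have hswap : (∏ i : Fin n, ∏ j ∈ Finset.Ioi i, d j) = ∏ k : Fin n, d k ^ (k : ℕ) := by
    rw [Finset.prod_comm' (t' := Finset.univ) (s' := fun j => Finset.Iio j)
      (by intro x y; simp [Finset.mem_Ioi, Finset.mem_Iio])]
    exact Finset.prod_congr rfl fun k _ => by rw [Finset.prod_const, Fin.card_Iio]
  calc ∏ i : Fin n, ∏ j ∈ Finset.Ioi i, (d i * d j)
      = ∏ i : Fin n, (d i ^ (n - 1 - (i : ℕ)) * ∏ j ∈ Finset.Ioi i, d j) := by
        refine Finset.prod_congr rfl fun i _ => ?_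
        rw [Finset.prod_mul_distrib, Finset.prod_const, Fin.card_Ioi]
    _ = (∏ i : Fin n, d i ^ (n - 1 - (i : ℕ))) * ∏ i : Fin n, ∏ j ∈ Finset.Ioi i, d j :=
        Finset.prod_mul_distrib
    _ = ∏ k : Fin n, d k ^ (n - 1) := by
        rw [hswap, ← Finset.prod_mul_distrib]
        refine Finset.prod_congr rfl fun k _ => ?_
        rw [← pow_add]
        congr 1
        have := k.isLt
        omega

lemma mixed_merge (y : Fin n → K) (J : Finset (Fin n)) :
    (∏ i ∈ J, ∏ j ∈ Jᶜ.filter (fun j => i < j), (1 - y i * y j)) *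
      (∏ i ∈ Jᶜ, ∏ j ∈ J.filter (fun j => i < j), (1 - y i * y j))
      = ∏ i ∈ J, ∏ j ∈ Jᶜ, (1 - y i * y j) := by
  have h2 : (∏ i ∈ Jᶜ, ∏ j ∈ J.filter (fun j => i < j), (1 - y i * y j))
      = ∏ i ∈ J, ∏ j ∈ Jᶜ.filter (fun j => j < i), (1 - y i * y j) := by
    rw [Finset.prod_comm' (t' := J) (s' := fun j => Jᶜ.filter (fun i => i < j))
      (by intro x y; simp only [Finset.mem_filter]; tauto)]
    exact Finset.prod_congr rfl fun i _ => Finset.prod_congr rfl fun j _ => by ring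
  rw [h2, ← Finset.prod_mul_distrib]
  refine Finset.prod_congr rfl fun i hi => ?_
  rw [← Finset.prod_filter_mul_prod_filter_not Jᶜ (fun j => i < j)]
  congr 1
  apply Finset.prod_congr ?_ fun _ _ => rfl
  apply Finset.filter_congr
  intro j hj
  have hne : j ≠ i := fun h => (Finset.mem_compl.mp hj) (h ▸ hi)
  exact ⟨fun h => asymm h, fun h => lt_of_le_of_ne (not_lt.mp h) hne⟩

lemma vand_eval (y : Fin n → K) (hy : ∀ i, y i ≠ 0) (J : Finset (Fin n)) :
    Matrix.det (Matrix.vandermonde (fun i => if i ∈ J then y i else (y i)⁻¹))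
      = (-1 : K) ^ (∑ i ∈ Jᶜ, (J.filter (fun j => i < j)).card) *
          (∏ k ∈ Jᶜ, (y k)⁻¹ ^ (n - 1)) *
          ((∏ i ∈ J, ∏ j ∈ J.filter (fun j => i < j), (y j - y i)) *
            (∏ i ∈ J, ∏ j ∈ Jᶜ, (1 - y i * y j)) *
            (∏ i ∈ Jᶜ, ∏ j ∈ Jᶜ.filter (fun j => i < j), (y i - y j))) := by
  classical
  rw [Matrix.det_vandermonde]
  have hfac : ∀ i j : Fin n,
      ((if j ∈ J then y j else (y j)⁻¹) - (if i ∈ J then y i else (y i)⁻¹))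
        = ((if i ∈ J then (if j ∈ J then y j - y i else 1 - y i * y j)
            else (if j ∈ J then -(1 - y i * y j) else y i - y j)) *
          ((if i ∈ J then (1:K) else (y i)⁻¹) * (if j ∈ J then (1:K) else (y j)⁻¹))) := by
    intro i j
    by_cases hi : i ∈ J <;> by_cases hj : j ∈ J <;>
      simp only [hi, hj, if_true, if_false] <;> field_simp <;> ring_nf <;>
      (try simp [mul_assoc, mul_inv_cancel₀ (hy i), mul_inv_cancel₀ (hy j)]) <;> (try ring)
  have hE : (∏ i : Fin n, ∏ j ∈ Finset.Ioi i,
      ((if i ∈ J then (1:K) else (y i)⁻¹) * (if j ∈ J then (1:K) else (y j)⁻¹)))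
      = ∏ k ∈ Jᶜ, (y k)⁻¹ ^ (n - 1) := by
    rw [prod_pair_mul (fun k => if k ∈ J then (1:K) else (y k)⁻¹)]
    rw [← Finset.prod_mul_prod_compl J (fun k => (if k ∈ J then (1:K) else (y k)⁻¹) ^ (n-1))]
    rw [Finset.prod_eq_one (fun k hk => by rw [if_pos hk, one_pow]), one_mul]
    exact Finset.prod_congr rfl fun k hk => by rw [if_neg (Finset.mem_compl.mp hk)]
  have hT : (∏ i : Fin n, ∏ j ∈ Finset.Ioi i,
        (if i ∈ J then (if j ∈ J then y j - y i else 1 - y i * y j)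
          else (if j ∈ J then -(1 - y i * y j) else y i - y j)))
      = ((∏ i ∈ J, ∏ j ∈ J.filter (fun j => i < j), (y j - y i)) *
          ∏ i ∈ J, ∏ j ∈ Jᶜ.filter (fun j => i < j), (1 - y i * y j)) *
        (((-1 : K) ^ (∑ i ∈ Jᶜ, (J.filter (fun j => i < j)).card) *
            ∏ i ∈ Jᶜ, ∏ j ∈ J.filter (fun j => i < j), (1 - y i * y j)) *
          ∏ i ∈ Jᶜ, ∏ j ∈ Jᶜ.filter (fun j => i < j), (y i - y j)) := by
    rw [← Finset.prod_mul_prod_compl J (fun i => ∏ j ∈ Finset.Ioi i,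
        (if i ∈ J then (if j ∈ J then y j - y i else 1 - y i * y j)
          else (if j ∈ J then -(1 - y i * y j) else y i - y j)))]
    have hJ : ∀ i ∈ J, (∏ j ∈ Finset.Ioi i,
        (if i ∈ J then (if j ∈ J then y j - y i else 1 - y i * y j)
          else (if j ∈ J then -(1 - y i * y j) else y i - y j)))
        = (∏ j ∈ J.filter (fun j => i < j), (y j - y i)) *
            ∏ j ∈ Jᶜ.filter (fun j => i < j), (1 - y i * y j) := by
      intro i hi
      simp only [if_pos hi]
      rw [Finset.prod_ite (fun j => y j - y i) (fun j => 1 - y i * y j)]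
      congr 1
      · apply Finset.prod_congr ?_ fun _ _ => rfl
        ext j; simp [Finset.mem_Ioi, and_comm]
      · apply Finset.prod_congr ?_ fun _ _ => rfl
        ext j; simp [Finset.mem_Ioi, Finset.mem_compl, and_comm]
    have hJc : ∀ i ∈ Jᶜ, (∏ j ∈ Finset.Ioi i,
        (if i ∈ J then (if j ∈ J then y j - y i else 1 - y i * y j)
          else (if j ∈ J then -(1 - y i * y j) else y i - y j)))
        = ((-1 : K) ^ (J.filter (fun j => i < j)).card *
            ∏ j ∈ J.filter (fun j => i < j), (1 - y i * y j)) *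
          ∏ j ∈ Jᶜ.filter (fun j => i < j), (y i - y j) := by
      intro i hi
      simp only [if_neg (Finset.mem_compl.mp hi)]
      rw [Finset.prod_ite (fun j => -(1 - y i * y j)) (fun j => y i - y j)]
      congr 1
      · rw [show (Finset.Ioi i).filter (fun j => j ∈ J) = J.filter (fun j => i < j) from by
          ext j; simp [Finset.mem_Ioi, and_comm]]
        rw [Finset.prod_congr rfl (fun j _ => (neg_one_mul (1 - y i * y j)).symm),
          Finset.prod_mul_distrib, Finset.prod_const]
      · apply Finset.prod_congr ?_ fun _ _ => rfl
        ext j; simp [Finset.mem_Ioi, Finset.mem_compl, and_comm]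
    rw [Finset.prod_congr rfl hJ, Finset.prod_congr rfl hJc, Finset.prod_mul_distrib,
      Finset.prod_mul_distrib, Finset.prod_mul_distrib, Finset.prod_pow_eq_pow_sum]
  calc (∏ i : Fin n, ∏ j ∈ Finset.Ioi i,
        ((if j ∈ J then y j else (y j)⁻¹) - (if i ∈ J then y i else (y i)⁻¹)))
      = ∏ i : Fin n, ∏ j ∈ Finset.Ioi i,
          ((if i ∈ J then (if j ∈ J then y j - y i else 1 - y i * y j)
            else (if j ∈ J then -(1 - y i * y j) else y i - y j)) *
          ((if i ∈ J then (1:K) else (y i)⁻¹) * (if j ∈ J then (1:K) else (y j)⁻¹))) :=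
        Finset.prod_congr rfl fun i _ => Finset.prod_congr rfl fun j _ => hfac i j
    _ = (∏ i : Fin n, ∏ j ∈ Finset.Ioi i,
          (if i ∈ J then (if j ∈ J then y j - y i else 1 - y i * y j)
            else (if j ∈ J then -(1 - y i * y j) else y i - y j))) *
        (∏ i : Fin n, ∏ j ∈ Finset.Ioi i,
          ((if i ∈ J then (1:K) else (y i)⁻¹) * (if j ∈ J then (1:K) else (y j)⁻¹))) := by
        simp only [Finset.prod_mul_distrib]
    _ = (-1 : K) ^ (∑ i ∈ Jᶜ, (J.filter (fun j => i < j)).card) *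
          (∏ k ∈ Jᶜ, (y k)⁻¹ ^ (n - 1)) *
          ((∏ i ∈ J, ∏ j ∈ J.filter (fun j => i < j), (y j - y i)) *
            (∏ i ∈ J, ∏ j ∈ Jᶜ, (1 - y i * y j)) *
            (∏ i ∈ Jᶜ, ∏ j ∈ Jᶜ.filter (fun j => i < j), (y i - y j))) := by
        rw [hT, hE, ← mixed_merge y J]; ring

lemma det_rows_add (u v y w : Fin n → K) :
    Matrix.det (Matrix.of fun i j : Fin n => u i * y i ^ (j : ℕ) + v i * w i ^ (j : ℕ))
      = ∑ J : Finset (Fin n), (∏ i ∈ J, u i) * (∏ i ∈ Jᶜ, v i) *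
          Matrix.det (Matrix.vandermonde fun i => if i ∈ J then y i else w i) := by
  classical
  let g : Fin n → Bool → (Fin n → K) := fun i b =>
    if b = true then (fun j => u i * y i ^ (j : ℕ)) else (fun j => v i * w i ^ (j : ℕ))
  have h1 : Matrix.det (Matrix.of fun i j : Fin n => u i * y i ^ (j : ℕ) + v i * w i ^ (j : ℕ))
      = ∑ r : Fin n → Bool, Matrix.detRowAlternating (fun i => g i (r i)) := by
    have hM : (Matrix.of fun i j : Fin n => u i * y i ^ (j : ℕ) + v i * w i ^ (j : ℕ))
        = fun i => ∑ b : Bool, g i b := by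
      funext i j
      rw [Fintype.sum_bool]
      simp [g, Matrix.of_apply]
    rw [hM]
    exact Matrix.detRowAlternating.toMultilinearMap.map_sum (g := g)
  rw [h1]
  let e : Finset (Fin n) ≃ (Fin n → Bool) :=
    { toFun := fun J i => decide (i ∈ J)
      invFun := fun r => Finset.univ.filter (fun i => r i = true)
      left_inv := fun J => by ext i; simp
      right_inv := fun r => by funext i; simp }
  refine (Fintype.sum_equiv e _ _ fun J => ?_).symm
  have hrow : (fun i => g i (e J i))
      = Matrix.of (fun i j : Fin n => (if i ∈ J then u i else v i) *
          Matrix.vandermonde (fun i => if i ∈ J then y i else w i) i j) := by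
    funext i j
    by_cases hi : i ∈ J <;> simp [g, e, hi, Matrix.vandermonde]
  have h2 : Matrix.detRowAlternating (fun i => g i (e J i))
      = (∏ i : Fin n, (if i ∈ J then u i else v i)) *
          Matrix.det (Matrix.vandermonde fun i => if i ∈ J then y i else w i) := by
    rw [show Matrix.detRowAlternating (fun i => g i (e J i))
        = Matrix.det (Matrix.of (fun i j : Fin n => (if i ∈ J then u i else v i) *
            Matrix.vandermonde (fun i => if i ∈ J then y i else w i) i j)) from
      congrArg _ hrow]
    exact Matrix.det_mul_column _ _
  rw [h2]
  congr 1
  rw [← Finset.prod_mul_prod_compl J (fun i => if i ∈ J then u i else v i)]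
  congr 1
  · exact Finset.prod_congr rfl fun i hi => (if_pos hi).symm
  · exact Finset.prod_congr rfl fun i hi => (if_neg (Finset.mem_compl.mp hi)).symm

lemma main_general {m : ℕ} (hn : 1 ≤ n) (hpar : m % 2 = n % 2)
    (x : Fin m → K) (y : Fin n → K) (hy : ∀ i, y i ≠ 0) :
    (∑ J : Finset (Fin n), (-1 : K) ^ ddelta n J * (∏ j ∈ Jᶜ, y j) *
        ((∏ i : Fin m, ∏ j ∈ J, (1 - x i * y j)) *
          (∏ i : Fin m, ∏ j ∈ Jᶜ, (x i - y j)) *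
          (∏ i ∈ J, ∏ j ∈ J.filter (fun j => i < j), (y j - y i)) *
          (∏ i ∈ J, ∏ j ∈ Jᶜ, (1 - y i * y j)) *
          (∏ i ∈ Jᶜ, ∏ j ∈ Jᶜ.filter (fun j => i < j), (y i - y j))))
      = Matrix.det (Matrix.of fun i j : Fin n =>
          y i ^ (j : ℕ) * (∏ k : Fin m, (1 - x k * y i)) -
            y i ^ (n - (j : ℕ)) * (∏ k : Fin m, (y i - x k))) := by
  classical
  have hmat : (Matrix.of fun i j : Fin n =>
        y i ^ (j : ℕ) * (∏ k : Fin m, (1 - x k * y i)) -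
          y i ^ (n - (j : ℕ)) * (∏ k : Fin m, (y i - x k)))
      = Matrix.of (fun i j : Fin n =>
          (∏ k : Fin m, (1 - x k * y i)) * y i ^ (j : ℕ) +
            (-(y i ^ n * ∏ k : Fin m, (y i - x k))) * ((y i)⁻¹) ^ (j : ℕ)) := by
    ext i j
    simp only [Matrix.of_apply]
    rw [pow_sub₀ (y i) (hy i) (le_of_lt j.isLt), ← inv_pow]
    ring
  rw [hmat]
  have hD := det_rows_add (fun i => ∏ k : Fin m, (1 - x k * y i))
    (fun i => -(y i ^ n * ∏ k : Fin m, (y i - x k))) y (fun i => (y i)⁻¹)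
  beta_reduce at hD
  rw [hD]
  refine Finset.sum_congr rfl fun J _ => ?_
  rw [vand_eval y hy J]
  have key : (-1 : K) ^ (ddelta n J) * (-1 : K) ^ (m * Jᶜ.card)
      = (-1 : K) ^ (Jᶜ.card) * (-1 : K) ^ (∑ i ∈ Jᶜ, (J.filter (fun j => i < j)).card) := by
    rw [← pow_add, ← pow_add]
    apply neg_one_pow_congr_aux
    have h1 := dd_card (n := n) J
    have h2 : J.card + Jᶜ.card = n := by
      rw [Finset.card_add_card_compl]
      exact Fintype.card_fin n
    have hmk := Nat.mul_mod m Jᶜ.card 2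
    have hck := Nat.mul_mod J.card Jᶜ.card 2
    rcases Nat.mod_two_eq_zero_or_one m with h | h <;>
      rcases Nat.mod_two_eq_zero_or_one J.card with h' | h' <;>
      rcases Nat.mod_two_eq_zero_or_one Jᶜ.card with h'' | h'' <;>
      rw [h, h''] at hmk <;> rw [h', h''] at hck <;> omega
  have hypow : (∏ i ∈ Jᶜ, y i ^ n) * (∏ k ∈ Jᶜ, (y k)⁻¹ ^ (n - 1))
      = ∏ j ∈ Jᶜ, y j := by
    rw [← Finset.prod_mul_distrib]
    refine Finset.prod_congr rfl fun i _ => ?_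
    rw [inv_pow, ← pow_sub₀ (y i) (hy i) (Nat.sub_le n 1),
      show n - (n - 1) = 1 from by omega, pow_one]
  have hA : (∏ i : Fin m, ∏ j ∈ J, (1 - x i * y j))
      = ∏ j ∈ J, ∏ k : Fin m, (1 - x k * y j) := Finset.prod_comm
  have hB : (∏ i : Fin m, ∏ j ∈ Jᶜ, (x i - y j))
      = (-1 : K) ^ (m * Jᶜ.card) * ∏ j ∈ Jᶜ, ∏ k : Fin m, (y j - x k) := by
    rw [Finset.prod_comm]
    rw [Finset.prod_congr rfl (fun j (_ : j ∈ Jᶜ) => show (∏ i : Fin m, (x i - y j))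
        = (-1 : K) ^ m * ∏ k : Fin m, (y j - x k) from by
      rw [Finset.prod_congr rfl (fun k (_ : k ∈ Finset.univ) =>
          show x k - y j = (-1) * (y j - x k) from by ring),
        Finset.prod_mul_distrib, Finset.prod_const, Finset.card_univ, Fintype.card_fin])]
    rw [Finset.prod_mul_distrib, Finset.prod_const, ← pow_mul]
  have hV : (∏ i ∈ Jᶜ, -(y i ^ n * ∏ k : Fin m, (y i - x k)))
      = (-1 : K) ^ (Jᶜ.card) * ((∏ i ∈ Jᶜ, y i ^ n) *
          ∏ i ∈ Jᶜ, ∏ k : Fin m, (y i - x k)) := by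
    rw [Finset.prod_congr rfl (fun i (_ : i ∈ Jᶜ) =>
        show -(y i ^ n * ∏ k : Fin m, (y i - x k))
          = (-1) * (y i ^ n * ∏ k : Fin m, (y i - x k)) from by ring),
      Finset.prod_mul_distrib, Finset.prod_const, Finset.prod_mul_distrib]
  rw [hA, hB, hV]
  linear_combination
    key * ((∏ j ∈ Jᶜ, y j) * (∏ j ∈ J, ∏ k : Fin m, (1 - x k * y j)) *
      (∏ j ∈ Jᶜ, ∏ k : Fin m, (y j - x k)) *
      (∏ i ∈ J, ∏ j ∈ J.filter (fun j => i < j), (y j - y i)) *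
      (∏ i ∈ J, ∏ j ∈ Jᶜ, (1 - y i * y j)) *
      (∏ i ∈ Jᶜ, ∏ j ∈ Jᶜ.filter (fun j => i < j), (y i - y j))) -
    ((-1 : K) ^ (Jᶜ.card) * (-1 : K) ^ (∑ i ∈ Jᶜ, (J.filter (fun j => i < j)).card) *
      ((∏ j ∈ J, ∏ k : Fin m, (1 - x k * y j)) *
        (∏ j ∈ Jᶜ, ∏ k : Fin m, (y j - x k)) *
        (∏ i ∈ J, ∏ j ∈ J.filter (fun j => i < j), (y j - y i)) *
        (∏ i ∈ J, ∏ j ∈ Jᶜ, (1 - y i * y j)) *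
        (∏ i ∈ Jᶜ, ∏ j ∈ Jᶜ.filter (fun j => i < j), (y i - y j)))) * hypow

end AuxLemmas

/-- The determinant representation of `R^{(m,n)}` from the proof of Proposition D.1
(polynomial form, after multiplying the `i`-th row by `y_i^{(m+n)/2}`): for `m, n ≥ 1` with
`m ≡ n (mod 2)`,
`R^{(m,n)} = det( y_i^{j−1} ∏_k (1−x_k y_i) − y_i^{n−j+1} ∏_k (y_i−x_k) )_{1≤i,j≤n}`. -/
theorem statement8 (m n : ℕ) (hm : 1 ≤ m) (hn : 1 ≤ n) (hpar : m % 2 = n % 2) :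
    (∑ J : Finset (Fin n),
        (-1) ^ ddelta n J * (∏ j ∈ Jᶜ, Yv m n j) * Gpoly m n J)
      = Matrix.det (Matrix.of fun i j : Fin n =>
          Yv m n i ^ (j : ℕ) * (∏ k : Fin m, (1 - Xv m n k * Yv m n i)) -
            Yv m n i ^ (n - (j : ℕ)) * (∏ k : Fin m, (Yv m n i - Xv m n k))) := by
  classical
  have hinj : Function.Injective
      (algebraMap (MvPolynomial (Fin m ⊕ Fin n) ℤ)
        (FractionRing (MvPolynomial (Fin m ⊕ Fin n) ℤ))) :=
    IsFractionRing.injective _ _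
  apply hinj
  set φ := algebraMap (MvPolynomial (Fin m ⊕ Fin n) ℤ)
    (FractionRing (MvPolynomial (Fin m ⊕ Fin n) ℤ)) with hφ
  have hy : ∀ i : Fin n, φ (Yv m n i) ≠ 0 := by
    intro i h
    exact MvPolynomial.X_ne_zero (R := ℤ) (Sum.inr i) (hinj (h.trans (map_zero φ).symm))
  rw [map_sum, RingHom.map_det]
  have hmain := main_general (K := FractionRing (MvPolynomial (Fin m ⊕ Fin n) ℤ)) hn hpar
    (fun k => φ (Xv m n k)) (fun i => φ (Yv m n i)) hy
  beta_reduce at hmain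
  have hM : φ.mapMatrix (Matrix.of fun i j : Fin n =>
        Yv m n i ^ (j : ℕ) * (∏ k : Fin m, (1 - Xv m n k * Yv m n i)) -
          Yv m n i ^ (n - (j : ℕ)) * (∏ k : Fin m, (Yv m n i - Xv m n k)))
      = Matrix.of (fun i j : Fin n =>
          φ (Yv m n i) ^ (j : ℕ) * (∏ k : Fin m, (1 - φ (Xv m n k) * φ (Yv m n i))) -
            φ (Yv m n i) ^ (n - (j : ℕ)) * (∏ k : Fin m, (φ (Yv m n i) - φ (Xv m n k)))) := by
    ext i j
    simp only [RingHom.mapMatrix_apply, Matrix.map_apply, Matrix.of_apply, map_sub, map_mul,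
      map_pow, map_prod, map_one]
  have hL : ∀ J : Finset (Fin n),
      φ ((-1) ^ ddelta n J * (∏ j ∈ Jᶜ, Yv m n j) * Gpoly m n J)
        = (-1) ^ ddelta n J * (∏ j ∈ Jᶜ, φ (Yv m n j)) *
            ((∏ i : Fin m, ∏ j ∈ J, (1 - φ (Xv m n i) * φ (Yv m n j))) *
              (∏ i : Fin m, ∏ j ∈ Jᶜ, (φ (Xv m n i) - φ (Yv m n j))) *
              (∏ i ∈ J, ∏ j ∈ J.filter (fun j => i < j), (φ (Yv m n j) - φ (Yv m n i))) *
              (∏ i ∈ J, ∏ j ∈ Jᶜ, (1 - φ (Yv m n i) * φ (Yv m n j))) *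
              (∏ i ∈ Jᶜ, ∏ j ∈ Jᶜ.filter (fun j => i < j), (φ (Yv m n i) - φ (Yv m n j)))) := by
    intro J
    simp only [Gpoly, map_mul, map_pow, map_neg, map_one, map_prod, map_sub]
  rw [Finset.sum_congr rfl fun J _ => hL J, hM]
  exact hmain

end
end

section
/- Suppose m ≥ 0, n ≥ 1 and ε ∈ {1,−1}, and set ε' = (−1)^{m+n−1} ε. Then in ℤ[x_1,…,x_m,y_1,…,y_n]: R^{(m,n)}_ε = det( y_i^{j−1} · ∏_{k=1}^{m}(1−x_k y_i) + ε' · y_i^{n−j} · ∏_{k=1}^{m}(y_i−x_k) )_{1≤i,j≤n}, where R^{(m,n)}_ε := Σ_{J_1 ⊔ J_2 = {1,…,n}} ε^{#J_2} · (−1)^{δ(J_1,J_2)} · G^{(m,n)}_{J_1,J_2}. -/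
/- Setting: the polynomial ring ℤ[x_1,…,x_m,y_1,…,y_n], realized as
`MvPolynomial (Fin m ⊕ Fin n) ℤ` with `Xv i = x_{i+1}` and `Yv j = y_{j+1}`.
For a partition `{1,…,n} = J_1 ⊔ J_2` (encoded by `J = J_1`, `Jᶜ = J_2`):
`Fpoly = ∏_{i<j≤m}(1−x_ix_j) ∏_{i<j≤n}(1−y_iy_j)(y_j−y_i)`,
`Gpoly J = ∏_{i≤m,j∈J_1}(1−x_iy_j) ∏_{i≤m,j∈J_2}(x_i−y_j) ∏_{i<j∈J_1}(y_j−y_i)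
           ∏_{i∈J_1,j∈J_2}(1−y_iy_j) ∏_{i<j∈J_2}(y_i−y_j)`,
`ddelta J = #{(i,j) ∈ J_1×J_2 : i < j}`. -/

noncomputable section

open Finset in
private def e2aux {n : ℕ} (J : Finset (Fin n)) : ℕ :=
  ((Jᶜ ×ˢ J).filter (fun p => p.1 < p.2)).card

set_option maxHeartbeats 1000000 in
set_option synthInstance.maxHeartbeats 400000 in
private lemma card_filter_product' {α β : Type*} (s : Finset α) (t : Finset β) (P : α → β → Prop)
    [DecidablePred fun p : α × β => P p.1 p.2] [∀ a, DecidablePred (P a)] :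
    ((s ×ˢ t).filter (fun p => P p.1 p.2)).card = ∑ i ∈ s, (t.filter (fun j => P i j)).card := by
  rw [Finset.card_filter, Finset.sum_product]
  refine Finset.sum_congr rfl fun i _ => ?_
  rw [Finset.card_filter]

private lemma e2aux_sum {n : ℕ} (J : Finset (Fin n)) :
    e2aux J = ∑ i ∈ Jᶜ, (J.filter (fun j => i < j)).card :=
  card_filter_product' _ _ _

private lemma ddelta_add_e2aux {n : ℕ} (J : Finset (Fin n)) :
    ddelta n J + e2aux J = J.card * Jᶜ.card := by
  have h1 : e2aux J = ((J ×ˢ Jᶜ).filter (fun p => ¬ p.1 < p.2)).card := by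
    apply Finset.card_nbij' Prod.swap Prod.swap
    · intro p hp
      simp only [e2aux, Finset.mem_coe, Finset.mem_filter, Finset.mem_product, Finset.mem_compl] at hp ⊢
      obtain ⟨⟨h1, h2⟩, h3⟩ := hp
      refine ⟨⟨h2, h1⟩, ?_⟩
      simp only [Prod.fst_swap, Prod.snd_swap]
      omega
    · intro p hp
      simp only [ddelta, Finset.mem_coe, Finset.mem_filter, Finset.mem_product, Finset.mem_compl] at hp ⊢
      obtain ⟨⟨h1, h2⟩, h3⟩ := hp
      have hne : p.1 ≠ p.2 := fun h => h2 (h ▸ h1)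
      refine ⟨⟨h2, h1⟩, ?_⟩
      simp only [Prod.fst_swap, Prod.snd_swap]
      rcases lt_trichotomy p.1 p.2 with h | h | h
      · exact absurd h h3
      · exact absurd h hne
      · exact h
    · intro p _; simp
    · intro p _; simp
  rw [ddelta, h1, Finset.card_filter_add_card_filter_not, Finset.card_product]

private lemma prod_pairs_pow' {M : Type*} [CommMonoid M] {n : ℕ} (f : Fin n → M) :
    ∏ i : Fin n, ∏ j ∈ Finset.Ioi i, (f i * f j) = ∏ i : Fin n, f i ^ (n - 1) := by
  have h1 : ∏ i : Fin n, ∏ j ∈ Finset.Ioi i, (f i * f j)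
      = (∏ i : Fin n, ∏ _j ∈ Finset.Ioi i, f i) * ∏ i : Fin n, ∏ j ∈ Finset.Ioi i, f j := by
    rw [← Finset.prod_mul_distrib]
    refine Finset.prod_congr rfl fun i _ => ?_
    rw [← Finset.prod_mul_distrib]
  rw [h1]
  have h2 : ∏ i : Fin n, ∏ j ∈ Finset.Ioi i, f j = ∏ j : Fin n, ∏ _i ∈ Finset.Iio j, f j := by
    apply Finset.prod_comm'
    intro i j; simp [and_comm]
  rw [h2]
  simp only [Finset.prod_const, Fin.card_Ioi, Fin.card_Iio]
  rw [← Finset.prod_mul_distrib]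
  refine Finset.prod_congr rfl fun i _ => ?_
  rw [← pow_add]
  congr 1
  have := i.isLt
  omega

private lemma prod_neg'' {R : Type*} [CommRing R] {α : Type*} (s : Finset α) (f : α → R) :
    ∏ i ∈ s, (-f i) = (-1) ^ s.card * ∏ i ∈ s, f i := by
  simp only [neg_eq_neg_one_mul (f _), Finset.prod_mul_distrib, Finset.prod_const]

private lemma prodB {R : Type*} [CommRing R] {n : ℕ} (J : Finset (Fin n)) (Y : Fin n → R) :
    (∏ i : Fin n, ∏ j ∈ Finset.Ioi i,
      (if i ∈ J then (if j ∈ J then Y j - Y i else 1 - Y i * Y j)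
       else (if j ∈ J then Y i * Y j - 1 else Y i - Y j)))
    = (-1) ^ (e2aux J) *
      ((∏ i ∈ J, ∏ j ∈ J.filter (fun j => i < j), (Y j - Y i)) *
       (∏ i ∈ J, ∏ j ∈ Jᶜ, (1 - Y i * Y j)) *
       (∏ i ∈ Jᶜ, ∏ j ∈ Jᶜ.filter (fun j => i < j), (Y i - Y j))) := by
  classical
  have hsplit : ∀ (i : Fin n), (Finset.Ioi i).filter (fun j => j ∈ J) = J.filter (fun j => i < j) := by
    intro i; ext j; simp [Finset.mem_Ioi, and_comm]
  have hsplitc : ∀ (i : Fin n), (Finset.Ioi i).filter (fun j => ¬ j ∈ J) = Jᶜ.filter (fun j => i < j) := by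
    intro i; ext j; simp [Finset.mem_Ioi, and_comm]
  rw [← Finset.prod_mul_prod_compl J]
  have hJ : ∏ i ∈ J, ∏ j ∈ Finset.Ioi i,
      (if i ∈ J then (if j ∈ J then Y j - Y i else 1 - Y i * Y j)
       else (if j ∈ J then Y i * Y j - 1 else Y i - Y j))
      = (∏ i ∈ J, ∏ j ∈ J.filter (fun j => i < j), (Y j - Y i)) *
        (∏ i ∈ J, ∏ j ∈ Jᶜ.filter (fun j => i < j), (1 - Y i * Y j)) := by
    rw [← Finset.prod_mul_distrib]
    refine Finset.prod_congr rfl fun i hi => ?_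
    simp only [hi, if_true]
    rw [Finset.prod_ite, hsplit, hsplitc]
  have hJc : ∏ i ∈ Jᶜ, ∏ j ∈ Finset.Ioi i,
      (if i ∈ J then (if j ∈ J then Y j - Y i else 1 - Y i * Y j)
       else (if j ∈ J then Y i * Y j - 1 else Y i - Y j))
      = (-1) ^ (e2aux J) *
        ((∏ i ∈ Jᶜ, ∏ j ∈ J.filter (fun j => i < j), (1 - Y i * Y j)) *
         (∏ i ∈ Jᶜ, ∏ j ∈ Jᶜ.filter (fun j => i < j), (Y i - Y j))) := by
    have : ∀ i ∈ Jᶜ, ∏ j ∈ Finset.Ioi i,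
        (if i ∈ J then (if j ∈ J then Y j - Y i else 1 - Y i * Y j)
         else (if j ∈ J then Y i * Y j - 1 else Y i - Y j))
        = ((-1) ^ (J.filter (fun j => i < j)).card *
            ∏ j ∈ J.filter (fun j => i < j), (1 - Y i * Y j)) *
          ∏ j ∈ Jᶜ.filter (fun j => i < j), (Y i - Y j) := by
      intro i hi
      rw [Finset.mem_compl] at hi
      simp only [hi, if_false]
      rw [Finset.prod_ite, hsplit, hsplitc]
      congr 1
      rw [← prod_neg'']
      refine Finset.prod_congr rfl fun j _ => by ring
    rw [Finset.prod_congr rfl this]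
    rw [Finset.prod_mul_distrib, Finset.prod_mul_distrib, Finset.prod_pow_eq_pow_sum, ← e2aux_sum]
    ring
  rw [hJ, hJc]
  have hcomb : (∏ i ∈ J, ∏ j ∈ Jᶜ.filter (fun j => i < j), (1 - Y i * Y j)) *
      (∏ i ∈ Jᶜ, ∏ j ∈ J.filter (fun j => i < j), (1 - Y i * Y j))
      = ∏ i ∈ J, ∏ j ∈ Jᶜ, (1 - Y i * Y j) := by
    have h1 : ∀ i ∈ J, (∏ j ∈ Jᶜ, (1 - Y i * Y j))
        = (∏ j ∈ Jᶜ.filter (fun j => i < j), (1 - Y i * Y j)) *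
          (∏ j ∈ Jᶜ.filter (fun j => ¬ i < j), (1 - Y i * Y j)) :=
      fun i _ => (Finset.prod_filter_mul_prod_filter_not Jᶜ _ _).symm
    rw [Finset.prod_congr rfl h1, Finset.prod_mul_distrib]
    congr 1
    have h2 : ∏ i ∈ J, ∏ j ∈ Jᶜ.filter (fun j => ¬ i < j), (1 - Y i * Y j)
        = ∏ j ∈ Jᶜ, ∏ i ∈ J.filter (fun i => ¬ i < j), (1 - Y i * Y j) := by
      apply Finset.prod_comm'
      intro i j
      constructor
      · rintro ⟨h1, h2⟩
        rw [Finset.mem_filter] at h2 ⊢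
        exact ⟨⟨h1, h2.2⟩, h2.1⟩
      · rintro ⟨h1, h2⟩
        rw [Finset.mem_filter] at h1
        exact ⟨h1.1, Finset.mem_filter.2 ⟨h2, h1.2⟩⟩
    rw [h2]
    refine Finset.prod_congr rfl fun j hj => ?_
    rw [Finset.mem_compl] at hj
    have hf : J.filter (fun i => ¬ i < j) = J.filter (fun i => j < i) := by
      ext i
      simp only [Finset.mem_filter, and_congr_right_iff]
      intro hiJ
      have : i ≠ j := fun h => hj (h ▸ hiJ)
      constructor
      · intro h; omega
      · intro h; omega
    rw [hf]
    refine Finset.prod_congr rfl fun i _ => by ring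
  calc ((∏ i ∈ J, ∏ j ∈ J.filter (fun j => i < j), (Y j - Y i)) *
       ∏ i ∈ J, ∏ j ∈ Jᶜ.filter (fun j => i < j), (1 - Y i * Y j)) *
      ((-1) ^ e2aux J *
        ((∏ i ∈ Jᶜ, ∏ j ∈ J.filter (fun j => i < j), (1 - Y i * Y j)) *
         ∏ i ∈ Jᶜ, ∏ j ∈ Jᶜ.filter (fun j => i < j), (Y i - Y j)))
      = (-1) ^ e2aux J *
        ((∏ i ∈ J, ∏ j ∈ J.filter (fun j => i < j), (Y j - Y i)) *
         ((∏ i ∈ J, ∏ j ∈ Jᶜ.filter (fun j => i < j), (1 - Y i * Y j)) *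
          (∏ i ∈ Jᶜ, ∏ j ∈ J.filter (fun j => i < j), (1 - Y i * Y j))) *
         ∏ i ∈ Jᶜ, ∏ j ∈ Jᶜ.filter (fun j => i < j), (Y i - Y j)) := by ring
    _ = _ := by rw [hcomb]

set_option maxHeartbeats 1000000 in
set_option synthInstance.maxHeartbeats 400000 in
private lemma detV (m n : ℕ) (J : Finset (Fin n)) :
    Matrix.det (Matrix.of fun i j : Fin n =>
      if i ∈ J then Yv m n i ^ (j : ℕ) else Yv m n i ^ (n - 1 - (j : ℕ)))
    = (-1) ^ (e2aux J) *
      ((∏ i ∈ J, ∏ j ∈ J.filter (fun j => i < j), (Yv m n j - Yv m n i)) *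
       (∏ i ∈ J, ∏ j ∈ Jᶜ, (1 - Yv m n i * Yv m n j)) *
       (∏ i ∈ Jᶜ, ∏ j ∈ Jᶜ.filter (fun j => i < j), (Yv m n i - Yv m n j))) := by
  classical
  set R0 := MvPolynomial (Fin m ⊕ Fin n) ℤ
  let K := FractionRing R0
  have hinj : Function.Injective (algebraMap R0 K) := IsFractionRing.injective R0 K
  apply hinj
  rw [RingHom.map_det]
  set Y' : Fin n → K := fun i => algebraMap R0 K (Yv m n i) with hY'def
  have hY : ∀ i, Y' i ≠ 0 := by
    intro i
    simp only [hY'def]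
    rw [map_ne_zero_iff _ hinj]
    exact MvPolynomial.X_ne_zero _
  set d : Fin n → K := fun i => if i ∈ J then 1 else Y' i ^ (n - 1) with hd
  set z : Fin n → K := fun i => if i ∈ J then Y' i else (Y' i)⁻¹ with hz
  have hmat : (algebraMap R0 K).mapMatrix (Matrix.of fun i j : Fin n =>
      if i ∈ J then Yv m n i ^ (j : ℕ) else Yv m n i ^ (n - 1 - (j : ℕ)))
      = Matrix.of fun i j => d i * Matrix.vandermonde z i j := by
    ext i j
    simp only [RingHom.mapMatrix_apply, Matrix.map_apply, Matrix.of_apply, Matrix.vandermonde,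
      hd, hz]
    by_cases hi : i ∈ J
    · simp [hi, map_pow]; rfl
    · simp only [hi, if_false, map_pow]
      rw [inv_pow, ← pow_sub₀ _ (hY i) (by omega : (j : ℕ) ≤ n - 1)]
  rw [hmat]
  rw [Matrix.det_mul_column, Matrix.det_vandermonde]
  set c : Fin n → K := fun i => if i ∈ J then 1 else Y' i with hc
  have hdc : ∀ i, d i = c i ^ (n - 1) := by
    intro i; simp only [hd, hc]; by_cases hi : i ∈ J <;> simp [hi]
  simp only [hdc]
  have hpairs : ∏ i : Fin n, c i ^ (n - 1) = ∏ i : Fin n, ∏ j ∈ Finset.Ioi i, (c i * c j) :=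
    (prod_pairs_pow' c).symm
  rw [hpairs, ← Finset.prod_mul_distrib]
  have hmerge : ∀ i : Fin n, (∏ j ∈ Finset.Ioi i, (c i * c j)) * ∏ j ∈ Finset.Ioi i, (z j - z i)
      = ∏ j ∈ Finset.Ioi i, ((c i * c j) * (z j - z i)) := by
    intro i; rw [← Finset.prod_mul_distrib]
  simp only [hmerge]
  have hfact : ∀ i j : Fin n, (c i * c j) * (z j - z i)
      = (if i ∈ J then (if j ∈ J then Y' j - Y' i else 1 - Y' i * Y' j)
         else (if j ∈ J then Y' i * Y' j - 1 else Y' i - Y' j)) := by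
    intro i j
    simp only [hc, hz]
    by_cases hi : i ∈ J <;> by_cases hj : j ∈ J <;> simp only [hi, hj, if_true, if_false]
    · ring
    · rw [one_mul, mul_sub, mul_inv_cancel₀ (hY j)]; ring
    · rw [mul_one, mul_sub, mul_inv_cancel₀ (hY i)]
    · rw [mul_sub, mul_assoc, mul_inv_cancel₀ (hY j), mul_one, mul_comm (Y' i), mul_assoc,
        mul_inv_cancel₀ (hY i), mul_one]
  simp only [hfact]
  rw [prodB J Y']
  simp only [hY'def, map_mul, map_pow, map_prod, map_sub, map_one, map_neg]

private lemma neg_one_pow_eq_of_even_add {a b : ℕ} (h : Even (a + b)) :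
    ((-1 : ℤ)) ^ a = (-1) ^ b := by
  have hb : ((-1 : ℤ) ^ b) * ((-1) ^ b) = 1 := by
    rw [← pow_add]; exact Even.neg_one_pow ⟨b, rfl⟩
  calc (-1 : ℤ) ^ a = (-1) ^ a * ((-1) ^ b * (-1) ^ b) := by rw [hb, mul_one]
    _ = ((-1) ^ (a + b)) * (-1) ^ b := by rw [pow_add]; ring
    _ = (-1) ^ b := by rw [Even.neg_one_pow h, one_mul]

private lemma sign_identity (m n : ℕ) (hn : 1 ≤ n) (ε : ℤ) {J : Finset (Fin n)} :
    ε ^ Jᶜ.card * (-1) ^ ddelta n J * (-1) ^ (m * Jᶜ.card)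
      = ((-1) ^ (m + n - 1) * ε) ^ Jᶜ.card * (-1) ^ (e2aux J) := by
  set a := J.card
  set c := Jᶜ.card
  have hac : a + c = n := by
    simpa [a, c] using Finset.card_add_card_compl J
  have h1 : ddelta n J + e2aux J = a * c := ddelta_add_e2aux J
  have key : (ddelta n J + m * c) + ((m + n - 1) * c + e2aux J) = (m + (m + n - 1) + a) * c := by
    calc (ddelta n J + m * c) + ((m + n - 1) * c + e2aux J)
        = m * c + (m + n - 1) * c + (ddelta n J + e2aux J) := by ring
      _ = m * c + (m + n - 1) * c + a * c := by rw [h1]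
      _ = (m + (m + n - 1) + a) * c := by ring
  have heven : Even ((ddelta n J + m * c) + ((m + n - 1) * c + e2aux J)) := by
    rw [key]
    rcases Nat.even_or_odd c with hc | hc
    · exact hc.mul_left _
    · refine Even.mul_right ?_ c
      rw [Nat.even_iff]
      rw [Nat.odd_iff] at hc
      omega
  have hpow : ((-1 : ℤ)) ^ (ddelta n J + m * c) = (-1) ^ ((m + n - 1) * c + e2aux J) :=
    neg_one_pow_eq_of_even_add heven
  rw [mul_pow, ← pow_mul]
  rw [pow_add, pow_add] at hpow
  calc ε ^ c * (-1 : ℤ) ^ ddelta n J * (-1) ^ (m * c)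
      = ε ^ c * ((-1 : ℤ) ^ ddelta n J * (-1) ^ (m * c)) := by ring
    _ = ε ^ c * ((-1 : ℤ) ^ ((m + n - 1) * c) * (-1) ^ (e2aux J)) := by rw [hpow]
    _ = (-1 : ℤ) ^ ((m + n - 1) * c) * ε ^ c * (-1) ^ (e2aux J) := by ring


set_option maxHeartbeats 1000000
set_option synthInstance.maxHeartbeats 400000

/-- The determinant representation of `R^{(m,n)}_ε` from the proof of Proposition D.2
(polynomial form, after multiplying the `i`-th row by `y_i^{(m+n−1)/2}`): for `m ≥ 0`,
`n ≥ 1`, `ε = ±1` and `ε' = (−1)^{m+n−1} ε`,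
`R^{(m,n)}_ε = det( y_i^{j−1} ∏_k (1−x_k y_i) + ε' y_i^{n−j} ∏_k (y_i−x_k) )_{1≤i,j≤n}`. -/

theorem statement9 (m n : ℕ) (hn : 1 ≤ n) (ε : ℤ) (hε : ε = 1 ∨ ε = -1) :
    (∑ J : Finset (Fin n),
        (MvPolynomial.C ε) ^ (Jᶜ.card) * (-1) ^ ddelta n J * Gpoly m n J)
      = Matrix.det (Matrix.of fun i j : Fin n =>
          Yv m n i ^ (j : ℕ) * (∏ k : Fin m, (1 - Xv m n k * Yv m n i)) +
            MvPolynomial.C ((-1) ^ (m + n - 1) * ε) *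
              Yv m n i ^ (n - 1 - (j : ℕ)) * (∏ k : Fin m, (Yv m n i - Xv m n k))) := by
  classical
  set P := MvPolynomial (Fin m ⊕ Fin n) ℤ
  set u : Fin n → P := fun i => ∏ k : Fin m, (1 - Xv m n k * Yv m n i) with hu
  set w : Fin n → P := fun i => ∏ k : Fin m, (Yv m n i - Xv m n k) with hw
  set ε' : ℤ := (-1) ^ (m + n - 1) * ε with hε'
  set A : Fin n → Fin n → P := fun i j => Yv m n i ^ (j : ℕ) * u i with hA
  set B : Fin n → Fin n → P := fun i j =>
    MvPolynomial.C ε' * Yv m n i ^ (n - 1 - (j : ℕ)) * w i with hB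
  have hdet : Matrix.det (Matrix.of fun i j : Fin n => A i j + B i j)
      = ∑ J : Finset (Fin n), Matrix.det (Matrix.of (J.piecewise A B)) := by
    calc Matrix.det (Matrix.of fun i j : Fin n => A i j + B i j)
        = Matrix.detRowAlternating.toMultilinearMap (A + B) := rfl
      _ = ∑ J : Finset (Fin n), Matrix.detRowAlternating.toMultilinearMap (J.piecewise A B) :=
          MultilinearMap.map_add_univ _ A B
      _ = ∑ J : Finset (Fin n), Matrix.det (Matrix.of (J.piecewise A B)) := rfl
  rw [show (Matrix.of fun i j : Fin n =>
          Yv m n i ^ (j : ℕ) * (∏ k : Fin m, (1 - Xv m n k * Yv m n i)) +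
            MvPolynomial.C ((-1) ^ (m + n - 1) * ε) *
              Yv m n i ^ (n - 1 - (j : ℕ)) * (∏ k : Fin m, (Yv m n i - Xv m n k)))
      = Matrix.of fun i j : Fin n => A i j + B i j from rfl]
  rw [hdet]
  refine Finset.sum_congr rfl fun J _ => ?_
  -- compute the piecewise determinant
  have hpw : Matrix.of (J.piecewise A B) = Matrix.of (fun i j : Fin n =>
      (if i ∈ J then u i else MvPolynomial.C ε' * w i) *
        (if i ∈ J then Yv m n i ^ (j : ℕ) else Yv m n i ^ (n - 1 - (j : ℕ)))) := by
    ext i j : 1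
    by_cases hi : i ∈ J
    · simp only [Matrix.of_apply, Finset.piecewise_eq_of_mem _ _ _ hi, hi, if_true, hA]
      ring
    · simp only [Matrix.of_apply, Finset.piecewise_eq_of_notMem _ _ _ hi, hi, if_false, hB]
      ring
  rw [hpw]
  rw [show (Matrix.of (fun i j : Fin n =>
      (if i ∈ J then u i else MvPolynomial.C ε' * w i) *
        (if i ∈ J then Yv m n i ^ (j : ℕ) else Yv m n i ^ (n - 1 - (j : ℕ)))))
    = Matrix.of (fun i j : Fin n =>
      (if i ∈ J then u i else MvPolynomial.C ε' * w i) *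
        (Matrix.of fun i j : Fin n =>
          if i ∈ J then Yv m n i ^ (j : ℕ) else Yv m n i ^ (n - 1 - (j : ℕ))) i j) from rfl]
  rw [Matrix.det_mul_column, detV]
  -- product of the scalars
  have hsc : (∏ i : Fin n, (if i ∈ J then u i else MvPolynomial.C ε' * w i))
      = (∏ i ∈ J, u i) * (MvPolynomial.C ε' ^ Jᶜ.card * ∏ i ∈ Jᶜ, w i) := by
    rw [← Finset.prod_mul_prod_compl J]
    congr 1
    · exact Finset.prod_congr rfl fun i hi => by simp [hi]
    · rw [← Finset.prod_const, ← Finset.prod_mul_distrib]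
      refine Finset.prod_congr rfl fun i hi => ?_
      rw [Finset.mem_compl] at hi
      simp [hi]
  rw [hsc]
  -- expand Gpoly
  have hG1 : (∏ i : Fin m, ∏ j ∈ J, (1 - Xv m n i * Yv m n j)) = ∏ j ∈ J, u j := by
    rw [Finset.prod_comm]
  have hG2 : (∏ i : Fin m, ∏ j ∈ Jᶜ, (Xv m n i - Yv m n j))
      = (-1 : P) ^ (m * Jᶜ.card) * ∏ j ∈ Jᶜ, w j := by
    rw [Finset.prod_comm]
    have : ∀ j ∈ Jᶜ, (∏ i : Fin m, (Xv m n i - Yv m n j)) = (-1 : P) ^ m * w j := by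
      intro j _
      rw [hw]
      rw [show (∏ i : Fin m, (Xv m n i - Yv m n j))
          = ∏ i : Fin m, -(Yv m n j - Xv m n i) from
        Finset.prod_congr rfl fun i _ => by ring]
      simp only [neg_eq_neg_one_mul ((Yv m n _ - Xv m n _)), Finset.prod_mul_distrib,
        Finset.prod_const, Finset.card_univ, Fintype.card_fin]
    rw [Finset.prod_congr rfl this, Finset.prod_mul_distrib, Finset.prod_const, ← pow_mul]
  rw [Gpoly, hG1, hG2]
  -- final scalar bookkeeping
  have hCneg : ((-1 : P)) = MvPolynomial.C (-1 : ℤ) := by simp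
  rw [hCneg]
  rw [show ((MvPolynomial.C (ε : ℤ)) : P) ^ Jᶜ.card = MvPolynomial.C (ε ^ Jᶜ.card) from by
    rw [map_pow]]
  rw [show ((MvPolynomial.C (-1 : ℤ)) : P) ^ ddelta n J = MvPolynomial.C ((-1 : ℤ) ^ ddelta n J) from by
    rw [map_pow]]
  rw [show ((MvPolynomial.C (-1 : ℤ)) : P) ^ (m * Jᶜ.card)
      = MvPolynomial.C ((-1 : ℤ) ^ (m * Jᶜ.card)) from by rw [map_pow]]
  rw [show ((MvPolynomial.C (-1 : ℤ)) : P) ^ (e2aux J) = MvPolynomial.C ((-1 : ℤ) ^ (e2aux J)) from by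
    rw [map_pow]]
  rw [show ((MvPolynomial.C (ε' : ℤ)) : P) ^ Jᶜ.card = MvPolynomial.C (ε' ^ Jᶜ.card) from by
    rw [map_pow]]
  have hkey := sign_identity m n hn ε (J := J)
  rw [← hε'] at hkey
  calc MvPolynomial.C (ε ^ Jᶜ.card) * MvPolynomial.C ((-1 : ℤ) ^ ddelta n J) *
        ((∏ j ∈ J, u j) * (MvPolynomial.C ((-1 : ℤ) ^ (m * Jᶜ.card)) * ∏ j ∈ Jᶜ, w j) *
          (∏ i ∈ J, ∏ j ∈ J.filter (fun j => i < j), (Yv m n j - Yv m n i)) *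
          (∏ i ∈ J, ∏ j ∈ Jᶜ, (1 - Yv m n i * Yv m n j)) *
          (∏ i ∈ Jᶜ, ∏ j ∈ Jᶜ.filter (fun j => i < j), (Yv m n i - Yv m n j)))
      = MvPolynomial.C (ε ^ Jᶜ.card * (-1 : ℤ) ^ ddelta n J * (-1 : ℤ) ^ (m * Jᶜ.card)) *
        ((∏ j ∈ J, u j) * (∏ j ∈ Jᶜ, w j) *
          ((∏ i ∈ J, ∏ j ∈ J.filter (fun j => i < j), (Yv m n j - Yv m n i)) *
           (∏ i ∈ J, ∏ j ∈ Jᶜ, (1 - Yv m n i * Yv m n j)) *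
           (∏ i ∈ Jᶜ, ∏ j ∈ Jᶜ.filter (fun j => i < j), (Yv m n i - Yv m n j)))) := by
        rw [map_mul, map_mul]; ring
    _ = MvPolynomial.C (ε' ^ Jᶜ.card * (-1 : ℤ) ^ (e2aux J)) *
        ((∏ j ∈ J, u j) * (∏ j ∈ Jᶜ, w j) *
          ((∏ i ∈ J, ∏ j ∈ J.filter (fun j => i < j), (Yv m n j - Yv m n i)) *
           (∏ i ∈ J, ∏ j ∈ Jᶜ, (1 - Yv m n i * Yv m n j)) *
           (∏ i ∈ Jᶜ, ∏ j ∈ Jᶜ.filter (fun j => i < j), (Yv m n i - Yv m n j)))) := by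
        rw [hkey]
    _ = _ := by rw [map_mul]; ring

end
end
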